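/- arXiv:1704.07807 — 5 statements merged into one kernel-verified Lean document; each statement's English description precedes it below -/
import Mathlib

section
/- (Theorem 3.8, o(1/k) rate.) Suppose each step-size satisfies α_i < 2/L_i, there exists a fixed point (d*, z*) of the NIDS iteration with d* ∈ range(I − W), and {(x^k, d^k, z^k)}_{k≥1} is generated by the NIDS iteration from any (d^1, z^1) with d^1 ∈ range(I − W). Then k · (‖z^k − z^{k+1}‖²_{Λ⁻¹} + ‖d^k − d^{k+1}‖²_M) → 0 as k → ∞; that is, ‖z^k − z^{k+1}‖²_{Λ⁻¹} + ‖d^k − d^{k+1}‖²_M = o(1/(k+1)). -/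
open Matrix Filter Topology

noncomputable section

/-- Trace inner product `⟨x, y⟩ = tr(xᵀ y)` on `n × p` real matrices. -/
def iprod {n p : ℕ} (x y : Matrix (Fin n) (Fin p) ℝ) : ℝ := (xᵀ * y).trace

/-- Weighted inner product `⟨x, y⟩_Q = tr(xᵀ Q y)`. -/
def iprodQ {n p : ℕ} (Q : Matrix (Fin n) (Fin n) ℝ) (x y : Matrix (Fin n) (Fin p) ℝ) : ℝ :=
  (xᵀ * Q * y).trace

/-- Weighted squared (semi)norm `‖x‖_Q² = tr(xᵀ Q x)`. -/
def nsq {n p : ℕ} (Q : Matrix (Fin n) (Fin n) ℝ) (x : Matrix (Fin n) (Fin p) ℝ) : ℝ :=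
  iprodQ Q x x

/-- `∇s(x)`: the matrix whose `i`-th row is the gradient field `g i` applied to the `i`-th
row of `x`. -/
def gradS {n p : ℕ} (g : Fin n → EuclideanSpace ℝ (Fin p) → EuclideanSpace ℝ (Fin p))
    (x : Matrix (Fin n) (Fin p) ℝ) : Matrix (Fin n) (Fin p) ℝ :=
  Matrix.of fun i => WithLp.equiv 2 (Fin p → ℝ) (g i ((WithLp.equiv 2 (Fin p → ℝ)).symm (x i)))

/-- `x ∈ range(A)`, i.e. `x = A y` for some `y ∈ ℝ^{n×p}`. -/
def InRange {n p : ℕ} (A : Matrix (Fin n) (Fin n) ℝ) (x : Matrix (Fin n) (Fin p) ℝ) : Prop :=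
  ∃ y : Matrix (Fin n) (Fin p) ℝ, x = A * y

/-- `B` is the Moore–Penrose pseudoinverse of `A`. -/
def IsMoorePenrose {n : ℕ} (A B : Matrix (Fin n) (Fin n) ℝ) : Prop :=
  A * B * A = A ∧ B * A * B = B ∧ (A * B)ᵀ = A * B ∧ (B * A)ᵀ = B * A

/-- `r(x) = Σᵢ rᵢ(xᵢ)` where `xᵢ` is the `i`-th row of `x`. -/
def rsum {n p : ℕ} (r : Fin n → (Fin p → ℝ) → ℝ) (x : Matrix (Fin n) (Fin p) ℝ) : ℝ :=
  ∑ i, r i (x i)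

/-- `q ∈ ∂r(x)`: subgradient of `rsum r` at `x` w.r.t. the trace inner product. -/
def IsSubgrad {n p : ℕ} (r : Fin n → (Fin p → ℝ) → ℝ) (x q : Matrix (Fin n) (Fin p) ℝ) : Prop :=
  ∀ y : Matrix (Fin n) (Fin p) ℝ, rsum r x + iprod q (y - x) ≤ rsum r y

/-- `t` is an eigenvalue of the real matrix `A`. -/
def IsEig {n : ℕ} (A : Matrix (Fin n) (Fin n) ℝ) (t : ℝ) : Prop :=
  ∃ v : Fin n → ℝ, v ≠ 0 ∧ A *ᵥ v = t • v

/-- The mixing matrix assumption: symmetry, null space of `I - W` is the span of the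
all-ones vector, and `2I ≽ W + I ≻ 0`. -/
def IsMixing {n : ℕ} (W : Matrix (Fin n) (Fin n) ℝ) : Prop :=
  Wᵀ = W ∧ (∀ v : Fin n → ℝ, (1 - W) *ᵥ v = 0 ↔ ∃ t : ℝ, v = fun _ => t) ∧
    (W + 1).PosDef ∧ ((2 : ℝ) • (1 : Matrix (Fin n) (Fin n) ℝ) - (W + 1)).PosSemidef

/-- `x` is a minimizer over `ℝ^{n×p}` of `u ↦ r(u) + ½‖u − z‖²_{Λ⁻¹}` where `Λ = diag α`. -/
def ProxMin {n p : ℕ} (r : Fin n → (Fin p → ℝ) → ℝ) (α : Fin n → ℝ)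
    (z x : Matrix (Fin n) (Fin p) ℝ) : Prop :=
  ∀ u : Matrix (Fin n) (Fin p) ℝ,
    rsum r x + 1 / 2 * nsq (Matrix.diagonal fun i => (α i)⁻¹) (x - z) ≤
      rsum r u + 1 / 2 * nsq (Matrix.diagonal fun i => (α i)⁻¹) (u - z)

/-- `(d, z)` is a fixed point of the NIDS iteration. -/
def NIDSFixed {n p : ℕ} (W : Matrix (Fin n) (Fin n) ℝ) (α : Fin n → ℝ) (c : ℝ)
    (g : Fin n → EuclideanSpace ℝ (Fin p) → EuclideanSpace ℝ (Fin p))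
    (r : Fin n → (Fin p → ℝ) → ℝ) (d z : Matrix (Fin n) (Fin p) ℝ) : Prop :=
  ∃ x : Matrix (Fin n) (Fin p) ℝ, ProxMin r α z x ∧
    d = d + c • ((1 - W) *
      ((2 : ℝ) • x - z - Matrix.diagonal α * gradS g x - Matrix.diagonal α * d)) ∧
    z = x - Matrix.diagonal α * gradS g x - Matrix.diagonal α * d

end

namespace NidsAux

variable {n p : ℕ}

lemma iprod_comm (x y : Matrix (Fin n) (Fin p) ℝ) : iprod x y = iprod y x := by
  unfold iprod
  rw [← Matrix.trace_transpose, Matrix.transpose_mul, Matrix.transpose_transpose]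

lemma iprod_add_right (x y z : Matrix (Fin n) (Fin p) ℝ) :
    iprod x (y + z) = iprod x y + iprod x z := by
  unfold iprod; rw [Matrix.mul_add, Matrix.trace_add]

lemma iprod_add_left (x y z : Matrix (Fin n) (Fin p) ℝ) :
    iprod (x + y) z = iprod x z + iprod y z := by
  unfold iprod; rw [Matrix.transpose_add, Matrix.add_mul, Matrix.trace_add]

lemma iprod_sub_right (x y z : Matrix (Fin n) (Fin p) ℝ) :
    iprod x (y - z) = iprod x y - iprod x z := by
  unfold iprod; rw [Matrix.mul_sub, Matrix.trace_sub]

lemma iprod_sub_left (x y z : Matrix (Fin n) (Fin p) ℝ) :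
    iprod (x - y) z = iprod x z - iprod y z := by
  unfold iprod; rw [Matrix.transpose_sub, Matrix.sub_mul, Matrix.trace_sub]

lemma iprod_smul_right (t : ℝ) (x y : Matrix (Fin n) (Fin p) ℝ) :
    iprod x (t • y) = t * iprod x y := by
  unfold iprod; rw [Matrix.mul_smul, Matrix.trace_smul]; rfl

lemma iprod_smul_left (t : ℝ) (x y : Matrix (Fin n) (Fin p) ℝ) :
    iprod (t • x) y = t * iprod x y := by
  rw [iprod_comm, iprod_smul_right, iprod_comm]

lemma iprod_neg_right (x y : Matrix (Fin n) (Fin p) ℝ) :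
    iprod x (-y) = - iprod x y := by
  have := iprod_smul_right (-1 : ℝ) x y; simpa using this

lemma iprod_mul_left (A : Matrix (Fin n) (Fin n) ℝ) (x y : Matrix (Fin n) (Fin p) ℝ) :
    iprod (A * x) y = iprod x (Aᵀ * y) := by
  unfold iprod
  rw [Matrix.transpose_mul, Matrix.mul_assoc]

/-- swap across a symmetric matrix -/
lemma iprod_symm_swap {Q : Matrix (Fin n) (Fin n) ℝ} (hQ : Qᵀ = Q)
    (x y : Matrix (Fin n) (Fin p) ℝ) : iprod x (Q * y) = iprod y (Q * x) := by
  rw [← hQ, ← iprod_mul_left, iprod_comm, hQ]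

lemma iprod_rows (x y : Matrix (Fin n) (Fin p) ℝ) :
    iprod x y = ∑ i, ∑ j, x i j * y i j := by
  simp only [iprod, Matrix.trace, Matrix.diag, Matrix.mul_apply, Matrix.transpose_apply]
  rw [Finset.sum_comm]

lemma iprod_diag_rows (w : Fin n → ℝ) (x y : Matrix (Fin n) (Fin p) ℝ) :
    iprod x (Matrix.diagonal w * y) = ∑ i, w i * ∑ j, x i j * y i j := by
  rw [iprod_rows]
  congr 1; funext i
  rw [Finset.mul_sum]
  congr 1; funext j
  rw [Matrix.mul_apply]
  rw [Finset.sum_eq_single i]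
  · simp only [Matrix.diagonal_apply_eq]; ring
  · intro b _ hb; simp [Matrix.diagonal_apply_ne' _ hb]
  · intro h; exact absurd (Finset.mem_univ i) h

lemma iprod_self_nonneg (x : Matrix (Fin n) (Fin p) ℝ) : 0 ≤ iprod x x := by
  rw [iprod_rows]
  exact Finset.sum_nonneg fun i _ => Finset.sum_nonneg fun j _ => mul_self_nonneg _

lemma iprod_cols (Q : Matrix (Fin n) (Fin n) ℝ) (x y : Matrix (Fin n) (Fin p) ℝ) :
    iprod x (Q * y) = ∑ j, (fun i => x i j) ⬝ᵥ (Q *ᵥ (fun i => y i j)) := by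
  simp only [iprod, Matrix.trace, Matrix.diag, Matrix.mul_apply, Matrix.transpose_apply,
    dotProduct, Matrix.mulVec]

section ConvexAnalysis

open InnerProductSpace

variable {E : Type*} [NormedAddCommGroup E] [InnerProductSpace ℝ E] [CompleteSpace E]

local notation "⟪" a ", " b "⟫" => inner (𝕜 := ℝ) a b

/-- derivative of `t ↦ f (x + t • v)` -/
lemma line_hasDerivAt {f : E → ℝ} {gf : E → E} (hgrad : ∀ v, HasGradientAt f (gf v) v)
    (x v : E) (t : ℝ) :
    HasDerivAt (fun t : ℝ => f (x + t • v)) ⟪gf (x + t • v), v⟫ t := by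
  have hline : HasDerivAt (fun t : ℝ => x + t • v) v t := by
    simpa using ((hasDerivAt_id t).smul_const v).const_add x
  have hf : HasFDerivAt f (InnerProductSpace.toDual ℝ E (gf (x + t • v))) (x + t • v) :=
    (hgrad (x + t • v)).hasFDerivAt
  have := hf.comp_hasDerivAt t hline
  simpa [InnerProductSpace.toDual_apply_apply, Function.comp_def] using this

/-- First-order condition for a convex differentiable function. -/
lemma convex_grad_ineq {f : E → ℝ} {gf : E → E} (hconv : ConvexOn ℝ Set.univ f)
    (hgrad : ∀ v, HasGradientAt f (gf v) v) (x y : E) :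
    f x + ⟪gf x, y - x⟫ ≤ f y := by
  set φ : ℝ → ℝ := fun t => f (x + t • (y - x)) with hφ
  have hder : HasDerivAt φ ⟪gf x, y - x⟫ 0 := by
    simpa using line_hasDerivAt hgrad x (y - x) 0
  have hφ0 : φ 0 = f x := by simp [hφ]
  have hφ1 : φ 1 = f y := by simp [hφ]
  -- slope bound from convexity
  have hslope : ∀ t : ℝ, t ∈ Set.Ioo (0:ℝ) 1 → slope φ 0 t ≤ φ 1 - φ 0 := by
    intro t ht
    have hc := hconv.2 (Set.mem_univ x) (Set.mem_univ y)
      (show (0:ℝ) ≤ 1 - t by linarith [ht.2]) (le_of_lt ht.1)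
      (show (1 - t) + t = 1 by ring)
    have hpt : (1 - t) • x + t • y = x + t • (y - x) := by
      rw [smul_sub]; module
    rw [hpt] at hc
    have : φ t - φ 0 ≤ t * (φ 1 - φ 0) := by
      simp only [hφ0, hφ1]
      calc φ t - f x ≤ ((1 - t) * f x + t * f y) - f x := by
            simpa [hφ, smul_eq_mul] using sub_le_sub_right hc (f x)
        _ = t * (f y - f x) := by ring
    rw [slope_def_field, sub_zero, div_le_iff₀ ht.1]
    nlinarith [this]
  have htend : Tendsto (slope φ 0) (𝓝[>] 0) (𝓝 ⟪gf x, y - x⟫) := by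
    have := hasDerivAt_iff_tendsto_slope.mp hder
    exact this.mono_left (nhdsWithin_mono 0 (fun t ht => ne_of_gt ht))
  have hev : ∀ᶠ t in 𝓝[>] (0:ℝ), slope φ 0 t ≤ φ 1 - φ 0 := by
    filter_upwards [Ioo_mem_nhdsGT_of_mem (Set.left_mem_Ico.mpr one_pos)] with t ht
    exact hslope t ht
  have := le_of_tendsto htend hev
  rw [hφ0, hφ1] at this
  linarith

/-- Descent lemma for a function with Lipschitz gradient. -/
lemma descent_lemma {f : E → ℝ} {gf : E → E} (hgrad : ∀ v, HasGradientAt f (gf v) v)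
    {L : ℝ} (hL : 0 < L) (hlip : ∀ v w, ‖gf v - gf w‖ ≤ L * ‖v - w‖) (x y : E) :
    f y ≤ f x + ⟪gf x, y - x⟫ + L / 2 * ‖y - x‖ ^ 2 := by
  set v := y - x with hv
  set F : ℝ → ℝ := fun t => f (x + t • v) - t * ⟪gf x, v⟫ - t ^ 2 * (L * ‖v‖ ^ 2 / 2) with hF
  have hFd : ∀ t : ℝ, HasDerivAt F
      (⟪gf (x + t • v), v⟫ - ⟪gf x, v⟫ - 2 * t * (L * ‖v‖ ^ 2 / 2)) t := by
    intro t
    have h1 := line_hasDerivAt hgrad x v t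
    have h2 : HasDerivAt (fun t : ℝ => t * ⟪gf x, v⟫) ⟪gf x, v⟫ t := by
      simpa using (hasDerivAt_id t).mul_const ⟪gf x, v⟫
    have h3 : HasDerivAt (fun t : ℝ => t ^ 2 * (L * ‖v‖ ^ 2 / 2))
        (2 * t * (L * ‖v‖ ^ 2 / 2)) t := by
      simpa [mul_comm] using (hasDerivAt_pow 2 t).mul_const (L * ‖v‖ ^ 2 / 2)
    exact (h1.sub h2).sub h3
  have hanti : AntitoneOn F (Set.Icc 0 1) := by
    apply antitoneOn_of_deriv_nonpos (convex_Icc 0 1)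
    · exact Continuous.continuousOn
        (Differentiable.continuous (fun t => (hFd t).differentiableAt))
    · intro t _
      exact (hFd t).differentiableAt.differentiableWithinAt
    · intro t ht
      rw [interior_Icc] at ht
      rw [(hFd t).deriv]
      have hineq : ⟪gf (x + t • v) - gf x, v⟫ ≤ L * t * ‖v‖ ^ 2 := by
        calc ⟪gf (x + t • v) - gf x, v⟫ ≤ ‖gf (x + t • v) - gf x‖ * ‖v‖ :=
              real_inner_le_norm _ _
          _ ≤ (L * ‖(x + t • v) - x‖) * ‖v‖ := by
              apply mul_le_mul_of_nonneg_right (hlip _ _) (norm_nonneg _)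
          _ = L * t * ‖v‖ ^ 2 := by
              rw [add_sub_cancel_left, norm_smul, Real.norm_eq_abs,
                abs_of_pos ht.1]; ring
      have hexp : ⟪gf (x + t • v) - gf x, v⟫ = ⟪gf (x + t • v), v⟫ - ⟪gf x, v⟫ :=
        inner_sub_left _ _ _
      nlinarith [hineq]
  have h01 : F 1 ≤ F 0 := hanti (Set.mem_Icc.mpr ⟨le_refl 0, zero_le_one⟩)
    (Set.mem_Icc.mpr ⟨zero_le_one, le_refl 1⟩) zero_le_one
  have hF0 : F 0 = f x := by simp [hF]
  have hF1 : F 1 = f y - ⟪gf x, v⟫ - L * ‖v‖ ^ 2 / 2 := by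
    simp [hF, hv]
  rw [hF0, hF1] at h01
  have : ‖v‖ ^ 2 = ‖y - x‖ ^ 2 := by rw [hv]
  linarith

/-- Baillon–Haddad cocoercivity. -/
lemma baillon_haddad {f : E → ℝ} {gf : E → E} (hconv : ConvexOn ℝ Set.univ f)
    (hgrad : ∀ v, HasGradientAt f (gf v) v)
    {L : ℝ} (hL : 0 < L) (hlip : ∀ v w, ‖gf v - gf w‖ ≤ L * ‖v - w‖) (x y : E) :
    L⁻¹ * ‖gf x - gf y‖ ^ 2 ≤ ⟪gf x - gf y, x - y⟫ := by
  -- one-sided estimate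
  have key : ∀ a b : E, f a + ⟪gf a, b - a⟫ + 1 / (2 * L) * ‖gf b - gf a‖ ^ 2 ≤ f b := by
    intro a b
    set G := gf b - gf a with hG
    set h : E → E → ℝ := fun a u => f u - ⟪gf a, u⟫ with hh
    have hhgrad : ∀ u, HasGradientAt (h a) (gf u - gf a) u := by
      intro u
      have h1 : HasFDerivAt f (InnerProductSpace.toDual ℝ E (gf u)) u := (hgrad u).hasFDerivAt
      have h2 : HasFDerivAt (fun u => ⟪gf a, u⟫)
          (InnerProductSpace.toDual ℝ E (gf a)) u := by
        exact (InnerProductSpace.toDual ℝ E (gf a)).hasFDerivAt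
      have := h1.sub h2
      have heq : InnerProductSpace.toDual ℝ E (gf u) - InnerProductSpace.toDual ℝ E (gf a)
          = InnerProductSpace.toDual ℝ E (gf u - gf a) := by
        rw [map_sub]
      rw [heq] at this
      exact this
    have hhlip : ∀ v w, ‖(gf v - gf a) - (gf w - gf a)‖ ≤ L * ‖v - w‖ := by
      intro v w; simpa using hlip v w
    -- h a has min at a
    have hmin : h a a ≤ h a (b + (-(L⁻¹)) • G) := by
      have := convex_grad_ineq hconv hgrad a (b + (-(L⁻¹)) • G)
      have hexp : ⟪gf a, (b + (-(L⁻¹)) • G) - a⟫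
          = ⟪gf a, b + (-(L⁻¹)) • G⟫ - ⟪gf a, a⟫ := inner_sub_right _ _ _
      simp only [hh]
      linarith [this, hexp.symm.le, hexp.le]
    -- descent step for h a from b
    have hdesc := descent_lemma hhgrad hL hhlip b (b + (-(L⁻¹)) • G)
    have hsimp1 : (b + (-(L⁻¹)) • G) - b = (-(L⁻¹)) • G := by abel
    rw [hsimp1] at hdesc
    have hsimp2 : ⟪gf b - gf a, (-(L⁻¹)) • G⟫ = -(L⁻¹ * ‖G‖ ^ 2) := by
      rw [real_inner_smul_right, ← hG, real_inner_self_eq_norm_sq]; ring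
    have hsimp3 : ‖(-(L⁻¹)) • G‖ ^ 2 = L⁻¹ ^ 2 * ‖G‖ ^ 2 := by
      rw [norm_smul, Real.norm_eq_abs, mul_pow, abs_neg, abs_of_pos (inv_pos.mpr hL)]
    rw [hsimp2, hsimp3] at hdesc
    have hLne : L ≠ 0 := ne_of_gt hL
    have hval : h a b - L⁻¹ * ‖G‖ ^ 2 + L / 2 * (L⁻¹ ^ 2 * ‖G‖ ^ 2)
        = h a b - 1 / (2 * L) * ‖G‖ ^ 2 := by
      field_simp; ring
    have hmin2 : h a a ≤ h a b - 1 / (2 * L) * ‖G‖ ^ 2 := by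
      calc h a a ≤ h a (b + (-(L⁻¹)) • G) := hmin
        _ ≤ h a b + (-(L⁻¹ * ‖G‖ ^ 2)) + L / 2 * (L⁻¹ ^ 2 * ‖G‖ ^ 2) := hdesc
        _ = h a b - 1 / (2 * L) * ‖G‖ ^ 2 := by rw [← hval]; ring
    simp only [hh] at hmin2
    have hinner : ⟪gf a, b⟫ - ⟪gf a, a⟫ = ⟪gf a, b - a⟫ := (inner_sub_right _ _ _).symm
    linarith
  have h1 := key y x
  have h2 := key x y
  have hnorm : ‖gf x - gf y‖ = ‖gf y - gf x‖ := norm_sub_rev _ _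
  have e1 : ⟪gf y, x - y⟫ + ⟪gf x, y - x⟫ = - ⟪gf x - gf y, x - y⟫ := by
    rw [inner_sub_left]
    have : ⟪gf x, y - x⟫ = - ⟪gf x, x - y⟫ := by
      rw [← inner_neg_right]; congr 1; abel
    rw [this]; ring
  have hLinv : 1 / (2 * L) * ‖gf x - gf y‖ ^ 2 + 1 / (2 * L) * ‖gf x - gf y‖ ^ 2
      = L⁻¹ * ‖gf x - gf y‖ ^ 2 := by
    have h2L : (2 * L) ≠ 0 := by positivity
    have : 1 / (2 * L) + 1 / (2 * L) = L⁻¹ := by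
      rw [← add_div, inv_eq_one_div]
      rw [div_eq_div_iff h2L (ne_of_gt hL)]
      ring
    rw [← this]; ring
  rw [← hnorm] at h2
  linarith [h1, h2, hLinv, e1]

end ConvexAnalysis


section MatrixPSD

variable {n p : ℕ}

/-- `(A *ᵥ x) ⬝ᵥ y = x ⬝ᵥ (Aᵀ *ᵥ y)`. -/
lemma dot_shift (A : Matrix (Fin n) (Fin n) ℝ) (x y : Fin n → ℝ) :
    (A *ᵥ x) ⬝ᵥ y = x ⬝ᵥ (Aᵀ *ᵥ y) := by
  rw [Matrix.dotProduct_mulVec, Matrix.vecMul_transpose]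

lemma dot_sym_shift {S : Matrix (Fin n) (Fin n) ℝ} (hS : Sᵀ = S) (x y : Fin n → ℝ) :
    (S *ᵥ x) ⬝ᵥ y = x ⬝ᵥ (S *ᵥ y) := by
  rw [dot_shift, hS]

lemma dot_self_nonneg (x : Fin n → ℝ) : 0 ≤ x ⬝ᵥ x :=
  Finset.sum_nonneg fun i _ => mul_self_nonneg _

/-- abstract operator-norm flip: if `c‖Aᵀv‖² ≤ ‖v‖²` for all `v` then `c‖Au‖² ≤ ‖u‖²`. -/
lemma flip_bound {T : Matrix (Fin n) (Fin n) ℝ} {c : ℝ} (hc : 0 < c)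
    (hA : ∀ v : Fin n → ℝ, c * ((Tᵀ *ᵥ v) ⬝ᵥ (Tᵀ *ᵥ v)) ≤ v ⬝ᵥ v) (u : Fin n → ℝ) :
    c * ((T *ᵥ u) ⬝ᵥ (T *ᵥ u)) ≤ u ⬝ᵥ u := by
  set h : Fin n → ℝ := Tᵀ *ᵥ (T *ᵥ u) with hh
  have hNTu : (T *ᵥ u) ⬝ᵥ (T *ᵥ u) = u ⬝ᵥ h := by
    rw [dot_shift]
  have hcs : (u ⬝ᵥ h) ^ 2 ≤ (u ⬝ᵥ u) * (h ⬝ᵥ h) := by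
    have := Finset.sum_mul_sq_le_sq_mul_sq Finset.univ u h
    simpa [dotProduct, pow_two] using this
  have hhb : c * (h ⬝ᵥ h) ≤ (T *ᵥ u) ⬝ᵥ (T *ᵥ u) := hA (T *ᵥ u)
  set N := (T *ᵥ u) ⬝ᵥ (T *ᵥ u) with hN
  have hN0 : 0 ≤ N := dot_self_nonneg _
  rcases eq_or_lt_of_le hN0 with h0 | hpos
  · rw [← h0]
    simpa using dot_self_nonneg u
  · -- N > 0
    have hNu : 0 ≤ u ⬝ᵥ u := dot_self_nonneg u
    have h1 : N ^ 2 ≤ (u ⬝ᵥ u) * (h ⬝ᵥ h) := by rw [hNTu]; exact hcs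
    have h2 : c * N ^ 2 ≤ (u ⬝ᵥ u) * N := by
      calc c * N ^ 2 ≤ c * ((u ⬝ᵥ u) * (h ⬝ᵥ h)) := by
            exact mul_le_mul_of_nonneg_left h1 (le_of_lt hc)
        _ = (u ⬝ᵥ u) * (c * (h ⬝ᵥ h)) := by ring
        _ ≤ (u ⬝ᵥ u) * N := mul_le_mul_of_nonneg_left hhb hNu
    have h3 : (c * N) * N ≤ (u ⬝ᵥ u) * N := by nlinarith
    exact le_of_mul_le_mul_right h3 hpos

lemma conjT_eq_transpose (A : Matrix (Fin n) (Fin n) ℝ) : Aᴴ = Aᵀ := by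
  ext i j; simp [Matrix.conjTranspose_apply]

/-- the key quadratic bound `c ⟨Sw, Λ Sw⟩ ≤ ⟨w, S w⟩`. -/
lemma vkey {W : Matrix (Fin n) (Fin n) ℝ} {α : Fin n → ℝ} {c : ℝ}
    (hSsym : (1 - W)ᵀ = 1 - W) (hSpsd : (1 - W).PosSemidef)
    (hα : ∀ i, 0 < α i) (hc : 0 < c)
    (hcW : ((1 : Matrix (Fin n) (Fin n) ℝ) -
      c • ((Matrix.diagonal fun i => Real.sqrt (α i)) * (1 - W) *
        Matrix.diagonal fun i => Real.sqrt (α i))).PosDef)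
    (w : Fin n → ℝ) :
    c * (((1 - W) *ᵥ w) ⬝ᵥ (Matrix.diagonal α *ᵥ ((1 - W) *ᵥ w))) ≤ w ⬝ᵥ ((1 - W) *ᵥ w) := by
  set S := 1 - W with hSdef
  set P := Matrix.diagonal (fun i => Real.sqrt (α i)) with hP
  have hPsym : Pᵀ = P := Matrix.diagonal_transpose _
  open scoped MatrixOrder in set R := CFC.sqrt S with hR
  have hRR : R * R = S := by open scoped MatrixOrder in exact CFC.sqrt_mul_sqrt_self S hSpsd.nonneg
  have hRsym : Rᵀ = R := by
    open scoped MatrixOrder in have := (CFC.sqrt_nonneg S).posSemidef.1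
    rwa [Matrix.IsHermitian, conjT_eq_transpose] at this
  have hΛ : Matrix.diagonal α = P * P := by
    have hαs : α = fun i => Real.sqrt (α i) * Real.sqrt (α i) :=
      funext fun i => (Real.mul_self_sqrt (le_of_lt (hα i))).symm
    rw [hP, Matrix.diagonal_mul_diagonal, ← hαs]
  set T := P * R with hT
  have hTt : Tᵀ = R * P := by rw [hT, Matrix.transpose_mul, hRsym, hPsym]
  -- the positive semidefiniteness hypothesis, rewritten
  have hA : ∀ v : Fin n → ℝ, c * ((Tᵀ *ᵥ v) ⬝ᵥ (Tᵀ *ᵥ v)) ≤ v ⬝ᵥ v := by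
    intro v
    have h0 := hcW.posSemidef.dotProduct_mulVec_nonneg v
    have hstar : star v = v := by
      funext i; simp
    rw [hstar] at h0
    have hexp : (1 - c • (P * S * P)) *ᵥ v = v - c • ((P * S * P) *ᵥ v) := by
      rw [Matrix.sub_mulVec, Matrix.one_mulVec, Matrix.smul_mulVec]
    rw [hexp, dotProduct_sub, dotProduct_smul] at h0
    have hquad : v ⬝ᵥ ((P * S * P) *ᵥ v) = (Tᵀ *ᵥ v) ⬝ᵥ (Tᵀ *ᵥ v) := by
      rw [hTt]
      have e1 : (P * S * P) *ᵥ v = P *ᵥ (S *ᵥ (P *ᵥ v)) := by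
        rw [← Matrix.mulVec_mulVec, ← Matrix.mulVec_mulVec]
      have e2 : (R * P) *ᵥ v = R *ᵥ (P *ᵥ v) := (Matrix.mulVec_mulVec _ _ _).symm
      rw [e1, e2, ← dot_sym_shift hPsym]
      have e3 : R *ᵥ (R *ᵥ (P *ᵥ v)) = S *ᵥ (P *ᵥ v) := by
        rw [Matrix.mulVec_mulVec, hRR]
      rw [← e3, ← dot_sym_shift hRsym]
    rw [hquad] at h0
    have : (0:ℝ) ≤ v ⬝ᵥ v - c * ((Tᵀ *ᵥ v) ⬝ᵥ (Tᵀ *ᵥ v)) := by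
      simpa [smul_eq_mul] using h0
    linarith
  have hflip := flip_bound hc hA (R *ᵥ w)
  -- rewrite both sides
  have lhs_eq : ((S *ᵥ w) ⬝ᵥ (Matrix.diagonal α *ᵥ (S *ᵥ w)))
      = (T *ᵥ (R *ᵥ w)) ⬝ᵥ (T *ᵥ (R *ᵥ w)) := by
    rw [hΛ]
    have e1 : (P * P) *ᵥ (S *ᵥ w) = P *ᵥ (P *ᵥ (S *ᵥ w)) := (Matrix.mulVec_mulVec _ _ _).symm
    rw [e1, ← dot_sym_shift hPsym]
    have e2 : R *ᵥ (R *ᵥ w) = S *ᵥ w := by rw [Matrix.mulVec_mulVec, hRR]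
    have e3 : T *ᵥ (R *ᵥ w) = P *ᵥ (S *ᵥ w) := by
      rw [hT, ← Matrix.mulVec_mulVec, e2]
    rw [e3]
  have rhs_eq : w ⬝ᵥ (S *ᵥ w) = (R *ᵥ w) ⬝ᵥ (R *ᵥ w) := by
    have e2 : R *ᵥ (R *ᵥ w) = S *ᵥ w := by rw [Matrix.mulVec_mulVec, hRR]
    rw [← e2, ← dot_sym_shift hRsym]
  rw [lhs_eq, rhs_eq]
  exact hflip

end MatrixPSD

section MP

variable {n p : ℕ}

lemma mp_unique {A B C : Matrix (Fin n) (Fin n) ℝ}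
    (hB : IsMoorePenrose A B) (hC : IsMoorePenrose A C) : B = C := by
  obtain ⟨b1, b2, b3, b4⟩ := hB
  obtain ⟨c1, c2, c3, c4⟩ := hC
  have hac : A * B = A * C := by
    calc A * B = (A * B)ᵀ := b3.symm
      _ = Bᵀ * Aᵀ := Matrix.transpose_mul _ _
      _ = Bᵀ * (A * C * A)ᵀ := by rw [c1]
      _ = Bᵀ * (Aᵀ * (A * C)ᵀ) := by rw [Matrix.transpose_mul (A * C) A]
      _ = (Bᵀ * Aᵀ) * (A * C)ᵀ := (Matrix.mul_assoc _ _ _).symm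
      _ = (A * B)ᵀ * (A * C)ᵀ := by rw [Matrix.transpose_mul A B]
      _ = (A * B) * (A * C) := by rw [b3, c3]
      _ = (A * B * A) * C := (Matrix.mul_assoc (A * B) A C).symm
      _ = A * C := by rw [b1]
  have hca : B * A = C * A := by
    calc B * A = (B * A)ᵀ := b4.symm
      _ = Aᵀ * Bᵀ := Matrix.transpose_mul _ _
      _ = (A * C * A)ᵀ * Bᵀ := by rw [c1]
      _ = (A * (C * A))ᵀ * Bᵀ := by rw [Matrix.mul_assoc]
      _ = ((C * A)ᵀ * Aᵀ) * Bᵀ := by rw [Matrix.transpose_mul A (C * A)]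
      _ = (C * A)ᵀ * (Aᵀ * Bᵀ) := Matrix.mul_assoc _ _ _
      _ = (C * A)ᵀ * (B * A)ᵀ := by rw [← Matrix.transpose_mul B A]
      _ = (C * A) * (B * A) := by rw [c4, b4]
      _ = C * (A * (B * A)) := Matrix.mul_assoc _ _ _
      _ = C * (A * B * A) := by rw [Matrix.mul_assoc A B A]
      _ = C * A := by rw [b1]
  calc B = B * A * B := b2.symm
    _ = C * A * B := by rw [hca]
    _ = C * (A * B) := Matrix.mul_assoc _ _ _
    _ = C * (A * C) := by rw [hac]
    _ = C * A * C := (Matrix.mul_assoc _ _ _).symm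
    _ = C := c2

lemma mp_symm {A B : Matrix (Fin n) (Fin n) ℝ} (hA : Aᵀ = A)
    (h : IsMoorePenrose A B) : Bᵀ = B := by
  obtain ⟨b1, b2, b3, b4⟩ := h
  have ht : IsMoorePenrose A Bᵀ := by
    refine ⟨?_, ?_, ?_, ?_⟩
    · have e : (A * B * A)ᵀ = Aᵀ * Bᵀ * Aᵀ := by
        rw [Matrix.transpose_mul, Matrix.transpose_mul, ← Matrix.mul_assoc]
      calc A * Bᵀ * A = Aᵀ * Bᵀ * Aᵀ := by rw [hA]
        _ = (A * B * A)ᵀ := e.symm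
        _ = Aᵀ := by rw [b1]
        _ = A := hA
    · have e : (B * A * B)ᵀ = Bᵀ * Aᵀ * Bᵀ := by
        rw [Matrix.transpose_mul, Matrix.transpose_mul, ← Matrix.mul_assoc]
      calc Bᵀ * A * Bᵀ = Bᵀ * Aᵀ * Bᵀ := by rw [hA]
        _ = (B * A * B)ᵀ := e.symm
        _ = Bᵀ := by rw [b2]
    · have e : A * Bᵀ = B * A := by
        calc A * Bᵀ = Aᵀ * Bᵀ := by rw [hA]
          _ = (B * A)ᵀ := (Matrix.transpose_mul B A).symm
          _ = B * A := b4
      rw [e]; exact b4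
    · have e : Bᵀ * A = A * B := by
        calc Bᵀ * A = Bᵀ * Aᵀ := by rw [hA]
          _ = (A * B)ᵀ := (Matrix.transpose_mul A B).symm
          _ = A * B := b3
      rw [e]; exact b3
  exact (mp_unique ⟨b1, b2, b3, b4⟩ ht).symm

lemma nsq_eq (Q : Matrix (Fin n) (Fin n) ℝ) (x : Matrix (Fin n) (Fin p) ℝ) :
    nsq Q x = iprod x (Q * x) := by
  unfold nsq iprodQ iprod
  rw [Matrix.mul_assoc]

lemma iprodQ_eq (Q : Matrix (Fin n) (Fin n) ℝ) (x y : Matrix (Fin n) (Fin p) ℝ) :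
    iprodQ Q x y = iprod x (Q * y) := by
  unfold iprodQ iprod
  rw [Matrix.mul_assoc]

lemma nsq_diag_nonneg {w : Fin n → ℝ} (hw : ∀ i, 0 ≤ w i) (x : Matrix (Fin n) (Fin p) ℝ) :
    0 ≤ nsq (Matrix.diagonal w) x := by
  rw [nsq_eq, iprod_diag_rows]
  apply Finset.sum_nonneg
  intro i _
  exact mul_nonneg (hw i)
    (Finset.sum_nonneg fun j _ => mul_self_nonneg _)

lemma M_psd_on_range {W B : Matrix (Fin n) (Fin n) ℝ} {α : Fin n → ℝ} {c : ℝ}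
    (hWsym : Wᵀ = W) (hSpsd : (1 - W).PosSemidef)
    (hα : ∀ i, 0 < α i) (hc : 0 < c)
    (hcW : ((1 : Matrix (Fin n) (Fin n) ℝ) -
      c • ((Matrix.diagonal fun i => Real.sqrt (α i)) * (1 - W) *
        Matrix.diagonal fun i => Real.sqrt (α i))).PosDef)
    (hB : IsMoorePenrose (1 - W) B)
    {e : Matrix (Fin n) (Fin p) ℝ} (he : InRange (1 - W) e) :
    0 ≤ nsq (c⁻¹ • B - Matrix.diagonal α) e := by
  obtain ⟨y, rfl⟩ := he
  have hSsym : (1 - W)ᵀ = 1 - W := by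
    rw [Matrix.transpose_sub, Matrix.transpose_one, hWsym]
  rw [nsq_eq, iprod_cols]
  apply Finset.sum_nonneg
  intro j _
  have hcol : (fun i => ((1 - W) * y : Matrix (Fin n) (Fin p) ℝ) i j)
      = (1 - W) *ᵥ (fun i => y i j) := by
    funext i
    simp [Matrix.mul_apply, Matrix.mulVec, dotProduct]
  rw [hcol]
  set w : Fin n → ℝ := fun i => y i j with hw
  have hexp : (c⁻¹ • B - Matrix.diagonal α) *ᵥ ((1 - W) *ᵥ w)
      = c⁻¹ • (B *ᵥ ((1 - W) *ᵥ w)) - Matrix.diagonal α *ᵥ ((1 - W) *ᵥ w) := by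
    rw [Matrix.sub_mulVec, Matrix.smul_mulVec]
  rw [hexp, dotProduct_sub, dotProduct_smul]
  have hBS : ((1 - W) *ᵥ w) ⬝ᵥ (B *ᵥ ((1 - W) *ᵥ w)) = w ⬝ᵥ ((1 - W) *ᵥ w) := by
    rw [dot_sym_shift hSsym]
    rw [Matrix.mulVec_mulVec, Matrix.mulVec_mulVec, hB.1]
  rw [hBS]
  have hv := vkey hSsym hSpsd hα hc hcW w
  have hci : ((1 - W) *ᵥ w) ⬝ᵥ (Matrix.diagonal α *ᵥ ((1 - W) *ᵥ w))
      ≤ c⁻¹ * (w ⬝ᵥ ((1 - W) *ᵥ w)) := by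
    have h1 : c⁻¹ * (c * (((1 - W) *ᵥ w) ⬝ᵥ (Matrix.diagonal α *ᵥ ((1 - W) *ᵥ w))))
        ≤ c⁻¹ * (w ⬝ᵥ ((1 - W) *ᵥ w)) :=
      mul_le_mul_of_nonneg_left hv (le_of_lt (inv_pos.mpr hc))
    rwa [← mul_assoc, inv_mul_cancel₀ (ne_of_gt hc), one_mul] at h1
  have : c⁻¹ • (w ⬝ᵥ ((1 - W) *ᵥ w)) = c⁻¹ * (w ⬝ᵥ ((1 - W) *ᵥ w)) := rfl
  rw [this]
  linarith

end MP

section Prox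

variable {n p : ℕ}

lemma pol {Q : Matrix (Fin n) (Fin n) ℝ} (hQ : Qᵀ = Q) (a b : Matrix (Fin n) (Fin p) ℝ) :
    iprod b (Q * b) = iprod a (Q * a) - iprod (a - b) (Q * (a - b))
      + 2 * (iprod b (Q * b) - iprod b (Q * a)) := by
  have h1 : iprod (a - b) (Q * (a - b))
      = iprod a (Q * a) - iprod a (Q * b) - iprod b (Q * a) + iprod b (Q * b) := by
    rw [Matrix.mul_sub, iprod_sub_left, iprod_sub_right, iprod_sub_right]; ring
  have h2 : iprod a (Q * b) = iprod b (Q * a) := iprod_symm_swap hQ a b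
  linarith

lemma nsq_add_smul {Q : Matrix (Fin n) (Fin n) ℝ} (hQ : Qᵀ = Q)
    (a b : Matrix (Fin n) (Fin p) ℝ) (t : ℝ) :
    nsq Q (a + t • b) = nsq Q a + 2 * t * iprod a (Q * b) + t ^ 2 * nsq Q b := by
  rw [nsq_eq, nsq_eq, nsq_eq]
  rw [Matrix.mul_add, Matrix.mul_smul]
  rw [iprod_add_left, iprod_add_right, iprod_add_right]
  rw [iprod_smul_left, iprod_smul_right, iprod_smul_right, iprod_smul_left]
  have h2 : iprod b (Q * a) = iprod a (Q * b) := iprod_symm_swap hQ b a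
  rw [h2]; ring

lemma prox_subgrad {r : Fin n → (Fin p → ℝ) → ℝ} (hr : ∀ i, ConvexOn ℝ Set.univ (r i))
    {α : Fin n → ℝ} (hα : ∀ i, 0 < α i) {z x : Matrix (Fin n) (Fin p) ℝ}
    (hmin : ProxMin r α z x) (u : Matrix (Fin n) (Fin p) ℝ) :
    rsum r x + iprod (Matrix.diagonal (fun i => (α i)⁻¹) * (z - x)) (u - x) ≤ rsum r u := by
  set Λi := Matrix.diagonal (fun i => (α i)⁻¹) with hΛi
  have hΛisym : Λiᵀ = Λi := Matrix.diagonal_transpose _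
  have hN : 0 ≤ nsq Λi (u - x) := nsq_diag_nonneg (fun i => inv_nonneg.mpr (le_of_lt (hα i))) _
  have key : ∀ t : ℝ, 0 < t → t ≤ 1 →
      rsum r x + iprod (Λi * (z - x)) (u - x) ≤ rsum r u + t / 2 * nsq Λi (u - x) := by
    intro t ht0 ht1
    have hm := hmin (x + t • (u - x))
    -- convexity of rsum
    have hconv : rsum r (x + t • (u - x)) ≤ (1 - t) * rsum r x + t * rsum r u := by
      have hrow : ∀ i : Fin n, r i ((x + t • (u - x)) i) ≤ (1 - t) * r i (x i) + t * r i (u i) := by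
        intro i
        have hpt : (x + t • (u - x)) i = (1 - t) • (x i) + t • (u i) := by
          funext j
          simp only [Matrix.add_apply, Matrix.smul_apply, Matrix.sub_apply, Pi.add_apply,
            Pi.smul_apply, smul_eq_mul]
          ring
        rw [hpt]
        have := (hr i).2 (Set.mem_univ (x i)) (Set.mem_univ (u i))
          (by linarith : (0:ℝ) ≤ 1 - t) (le_of_lt ht0) (by ring : (1 - t) + t = 1)
        simpa [smul_eq_mul] using this
      unfold rsum
      calc ∑ i, r i ((x + t • (u - x)) i)
          ≤ ∑ i, ((1 - t) * r i (x i) + t * r i (u i)) :=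
            Finset.sum_le_sum (fun i _ => hrow i)
        _ = (1 - t) * ∑ i, r i (x i) + t * ∑ i, r i (u i) := by
            rw [Finset.sum_add_distrib, Finset.mul_sum, Finset.mul_sum]
    -- quadratic expansion
    have hquad : nsq Λi (x + t • (u - x) - z) = nsq Λi (x - z)
        + 2 * t * iprod (x - z) (Λi * (u - x)) + t ^ 2 * nsq Λi (u - x) := by
      have he : x + t • (u - x) - z = (x - z) + t • (u - x) := by abel
      rw [he, nsq_add_smul hΛisym]
    rw [hquad] at hm
    have hiq : iprod (Λi * (z - x)) (u - x) = - iprod (x - z) (Λi * (u - x)) := by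
      have e1 : iprod (Λi * (z - x)) (u - x) = iprod (z - x) (Λi * (u - x)) := by
        rw [iprod_mul_left, hΛisym]
      have e2 : (z - x) = -(x - z) := by abel
      rw [e1, e2, iprod_comm, iprod_neg_right, iprod_comm]
    have hstep : 0 ≤ t * ((rsum r u - rsum r x) + iprod (x - z) (Λi * (u - x))
        + t * nsq Λi (u - x) / 2) := by nlinarith [hm, hconv]
    have hpos : 0 ≤ (rsum r u - rsum r x) + iprod (x - z) (Λi * (u - x))
        + t * nsq Λi (u - x) / 2 := nonneg_of_mul_nonneg_right hstep ht0
    rw [hiq]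
    nlinarith [hpos]
  apply le_of_forall_pos_le_add
  intro ε hε
  set N := nsq Λi (u - x) with hNdef
  have hN1 : (0:ℝ) < N + 1 := by linarith
  have ht0 : 0 < min 1 (ε / (N + 1)) := lt_min one_pos (div_pos hε hN1)
  have ht1 : min 1 (ε / (N + 1)) ≤ 1 := min_le_left _ _
  have hk := key _ ht0 ht1
  have hle : min 1 (ε / (N + 1)) / 2 * N ≤ ε := by
    have h1 : min 1 (ε / (N + 1)) ≤ ε / (N + 1) := min_le_right _ _
    have h2 : min 1 (ε / (N + 1)) / 2 * N ≤ (ε / (N + 1)) * N := by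
      apply mul_le_mul_of_nonneg_right _ hN
      linarith
    have h3 : (ε / (N + 1)) * N ≤ ε := by
      rw [div_mul_eq_mul_div, div_le_iff₀ hN1]
      nlinarith
    linarith
  linarith

end Prox

section Rows

variable {n p : ℕ}

lemma young_row {β : ℝ} (hβ : 0 < β) (G V : Fin p → ℝ) :
    2 * (∑ j, G j * V j) ≤ β * (∑ j, (G j) ^ 2) + β⁻¹ * (∑ j, (V j) ^ 2) := by
  have hβ' : β ≠ 0 := ne_of_gt hβ
  have hterm : ∀ j : Fin p, 2 * (G j * V j) ≤ β * (G j) ^ 2 + β⁻¹ * (V j) ^ 2 := by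
    intro j
    have h0 : 2 * β * (G j * V j) ≤ β ^ 2 * (G j) ^ 2 + (V j) ^ 2 := by
      nlinarith [sq_nonneg (β * G j - V j)]
    have hmul := mul_le_mul_of_nonneg_left h0 (inv_nonneg.mpr (le_of_lt hβ))
    have h1 : β⁻¹ * (2 * β * (G j * V j)) = 2 * (G j * V j) := by
      field_simp
    have h2 : β⁻¹ * (β ^ 2 * (G j) ^ 2 + (V j) ^ 2) = β * (G j) ^ 2 + β⁻¹ * (V j) ^ 2 := by
      field_simp
    linarith
  calc 2 * (∑ j, G j * V j) = ∑ j, 2 * (G j * V j) := by rw [Finset.mul_sum]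
    _ ≤ ∑ j, (β * (G j) ^ 2 + β⁻¹ * (V j) ^ 2) := Finset.sum_le_sum (fun j _ => hterm j)
    _ = β * (∑ j, (G j) ^ 2) + β⁻¹ * (∑ j, (V j) ^ 2) := by
        rw [Finset.sum_add_distrib, Finset.mul_sum, Finset.mul_sum]

lemma coco_row {s : Fin n → EuclideanSpace ℝ (Fin p) → ℝ}
    {g : Fin n → EuclideanSpace ℝ (Fin p) → EuclideanSpace ℝ (Fin p)} {L : Fin n → ℝ}
    (hs : ∀ i, ConvexOn ℝ Set.univ (s i)) (hg : ∀ i v, HasGradientAt (s i) (g i v) v)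
    (hlip : ∀ i (v w : EuclideanSpace ℝ (Fin p)), ‖g i v - g i w‖ ≤ L i * ‖v - w‖)
    (hL : ∀ i, 0 < L i) (x x' : Matrix (Fin n) (Fin p) ℝ) (i : Fin n) :
    (L i)⁻¹ * (∑ j, (gradS g x i j - gradS g x' i j) ^ 2)
      ≤ ∑ j, (x i j - x' i j) * (gradS g x i j - gradS g x' i j) := by
  set u : EuclideanSpace ℝ (Fin p) := (WithLp.equiv 2 (Fin p → ℝ)).symm (x i) with hu
  set u' : EuclideanSpace ℝ (Fin p) := (WithLp.equiv 2 (Fin p → ℝ)).symm (x' i) with hu'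
  have hbh := baillon_haddad (hs i) (hg i) (hL i) (hlip i) u u'
  have hcomp : ∀ j, (g i u - g i u' : EuclideanSpace ℝ (Fin p)) j
      = gradS g x i j - gradS g x' i j := by
    intro j
    simp [gradS, hu, hu', Matrix.of_apply]
  have hcompu : ∀ j, (u - u' : EuclideanSpace ℝ (Fin p)) j = x i j - x' i j := by
    intro j
    simp [hu, hu']
  have hnorm : ‖g i u - g i u'‖ ^ 2 = ∑ j, (gradS g x i j - gradS g x' i j) ^ 2 := by
    rw [← real_inner_self_eq_norm_sq, PiLp.inner_apply]
    apply Finset.sum_congr rfl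
    intro j _
    rw [RCLike.inner_apply, hcomp j]
    simp [pow_two]
  have hinner : (inner ℝ (g i u - g i u') (u - u') : ℝ)
      = ∑ j, (x i j - x' i j) * (gradS g x i j - gradS g x' i j) := by
    rw [PiLp.inner_apply]
    apply Finset.sum_congr rfl
    intro j _
    rw [RCLike.inner_apply, hcomp j, hcompu j]
    simp [mul_comm]
  rw [hnorm, hinner] at hbh
  exact hbh

end Rows

section Core

variable {n p : ℕ}

lemma core {W B : Matrix (Fin n) (Fin n) ℝ} {α L : Fin n → ℝ} {c : ℝ}
    (hWsym : Wᵀ = W) (hα : ∀ i, 0 < α i) (hL : ∀ i, 0 < L i) (hc : 0 < c)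
    (hBmp : IsMoorePenrose (1 - W) B)
    {s : Fin n → EuclideanSpace ℝ (Fin p) → ℝ}
    {g : Fin n → EuclideanSpace ℝ (Fin p) → EuclideanSpace ℝ (Fin p)}
    (hs : ∀ i, ConvexOn ℝ Set.univ (s i)) (hg : ∀ i v, HasGradientAt (s i) (g i v) v)
    (hlip : ∀ i (v w : EuclideanSpace ℝ (Fin p)), ‖g i v - g i w‖ ≤ L i * ‖v - w‖)
    {r : Fin n → (Fin p → ℝ) → ℝ} (hr : ∀ i, ConvexOn ℝ Set.univ (r i))
    {d z x d2 z2 d' z' x' d2' z2' : Matrix (Fin n) (Fin p) ℝ}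
    (hx : ProxMin r α z x) (hx' : ProxMin r α z' x')
    (hd : d2 = d + c • ((1 - W) *
      ((2:ℝ) • x - z - Matrix.diagonal α * gradS g x - Matrix.diagonal α * d)))
    (hz : z2 = x - Matrix.diagonal α * gradS g x - Matrix.diagonal α * d2)
    (hd' : d2' = d' + c • ((1 - W) *
      ((2:ℝ) • x' - z' - Matrix.diagonal α * gradS g x' - Matrix.diagonal α * d')))
    (hz' : z2' = x' - Matrix.diagonal α * gradS g x' - Matrix.diagonal α * d2')
    (hrange : InRange (1 - W) (d2 - d2')) :
    nsq (Matrix.diagonal fun i => (α i)⁻¹) (z2 - z2')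
      + nsq (c⁻¹ • B - Matrix.diagonal α) (d2 - d2')
      ≤ nsq (Matrix.diagonal fun i => (α i)⁻¹) (z - z')
        + nsq (c⁻¹ • B - Matrix.diagonal α) (d - d')
        - nsq (c⁻¹ • B - Matrix.diagonal α) ((d - d2) - (d' - d2'))
        - ∑ i, ((α i)⁻¹ - L i / 2) * ∑ j, ((z - z2 - (z' - z2')) i j) ^ 2 := by
  set S := (1 : Matrix (Fin n) (Fin n) ℝ) - W with hSdef
  set Λ := Matrix.diagonal α with hΛdef
  set Λi := Matrix.diagonal (fun i => (α i)⁻¹) with hΛidef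
  set M := c⁻¹ • B - Λ with hMdef
  have hSsym : Sᵀ = S := by
    rw [hSdef, Matrix.transpose_sub, Matrix.transpose_one, hWsym]
  have hΛsym : Λᵀ = Λ := by rw [hΛdef]; exact Matrix.diagonal_transpose _
  have hΛisym : Λiᵀ = Λi := by rw [hΛidef]; exact Matrix.diagonal_transpose _
  have hBsym : Bᵀ = B := mp_symm hSsym hBmp
  have hMsym : Mᵀ = M := by
    rw [hMdef, Matrix.transpose_sub, Matrix.transpose_smul, hBsym, hΛsym]
  have hΛiΛ : ∀ a : Matrix (Fin n) (Fin p) ℝ, Λi * (Λ * a) = a := by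
    intro a
    rw [← Matrix.mul_assoc, hΛidef, hΛdef, Matrix.diagonal_mul_diagonal]
    have he : (fun i => (α i)⁻¹ * α i) = fun _ => (1:ℝ) :=
      funext fun i => inv_mul_cancel₀ (ne_of_gt (hα i))
    rw [he, Matrix.diagonal_one, Matrix.one_mul]
  have hΛΛi : ∀ a : Matrix (Fin n) (Fin p) ℝ, Λ * (Λi * a) = a := by
    intro a
    rw [← Matrix.mul_assoc, hΛidef, hΛdef, Matrix.diagonal_mul_diagonal]
    have he : (fun i => α i * (α i)⁻¹) = fun _ => (1:ℝ) :=
      funext fun i => mul_inv_cancel₀ (ne_of_gt (hα i))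
    rw [he, Matrix.diagonal_one, Matrix.one_mul]
  set X := x - x' with hX
  set Z := z - z' with hZ
  set Z2 := z2 - z2' with hZ2
  set D := d - d' with hD
  set D2 := d2 - d2' with hD2
  set q := Λi * (z - x) with hq
  set q' := Λi * (z' - x') with hq'
  set Q := q - q' with hQ
  set G := gradS g x - gradS g x' with hG
  set V := Z - Z2 with hV
  -- F1 per trajectory
  have f1 : ∀ (xx zz dd2 zz2 : Matrix (Fin n) (Fin p) ℝ),
      zz2 = xx - Λ * gradS g xx - Λ * dd2 →
      Λi * (zz2 - zz) = -(Λi * (zz - xx) + gradS g xx + dd2) := by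
    intro xx zz dd2 zz2 h
    rw [h, show xx - Λ * gradS g xx - Λ * dd2 - zz
        = -((zz - xx) + Λ * gradS g xx + Λ * dd2) from by abel,
      Matrix.mul_neg, Matrix.mul_add, Matrix.mul_add, hΛiΛ, hΛiΛ]
  have f1d : Λi * (Z2 - Z) = -(Q + G + D2) := by
    have h1 := f1 x z d2 z2 hz
    have h2 := f1 x' z' d2' z2' hz'
    have e : Z2 - Z = (z2 - z) - (z2' - z') := by rw [hZ2, hZ]; abel
    rw [e, Matrix.mul_sub, h1, h2, hQ, hq, hq', hG, hD2]
    abel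
  have f2 : X - Z = -(Λ * Q) := by
    have e1 : Λ * q = z - x := by rw [hq, hΛΛi]
    have e2 : Λ * q' = z' - x' := by rw [hq', hΛΛi]
    rw [hQ, Matrix.mul_sub, e1, e2, hX, hZ]
    abel
  have hZ2eq : Z2 = X - Λ * G - Λ * D2 := by
    rw [hZ2, hz, hz', hX, hG, hD2, Matrix.mul_sub, Matrix.mul_sub]
    abel
  -- F4 per trajectory
  have f4 : ∀ (dd zz xx dd2x zz2x : Matrix (Fin n) (Fin p) ℝ),
      dd2x = dd + c • (S * ((2:ℝ) • xx - zz - Λ * gradS g xx - Λ * dd)) →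
      zz2x = xx - Λ * gradS g xx - Λ * dd2x →
      ∀ (e ye : Matrix (Fin n) (Fin p) ℝ), e = S * ye →
      iprod e (M * (dd2x - dd)) = iprod e (xx - zz + zz2x) := by
    intro dd zz xx dd2x zz2x hdu hzu e ye he
    set t := (2:ℝ) • xx - zz - Λ * gradS g xx - Λ * dd with ht
    have hΔ : dd2x - dd = c • (S * t) := by rw [hdu]; abel
    have htid : t = (xx - zz + zz2x) + Λ * (dd2x - dd) := by
      rw [ht, hzu, Matrix.mul_sub]
      module
    have hM1 : M * (dd2x - dd) = c⁻¹ • (B * (dd2x - dd)) - Λ * (dd2x - dd) := by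
      rw [hMdef, Matrix.sub_mul, Matrix.smul_mul]
    have hB1 : c⁻¹ • (B * (dd2x - dd)) = B * (S * t) := by
      rw [hΔ, Matrix.mul_smul, smul_smul, inv_mul_cancel₀ (ne_of_gt hc), one_smul]
    have hBe : iprod (S * ye) (B * (S * t)) = iprod (S * ye) t := by
      rw [iprod_mul_left, hSsym, ← Matrix.mul_assoc, ← Matrix.mul_assoc, hBmp.1]
      have h5 : iprod (S * ye) t = iprod ye (Sᵀ * t) := iprod_mul_left _ _ _
      rw [h5, hSsym]
    calc iprod e (M * (dd2x - dd))
        = iprod e (c⁻¹ • (B * (dd2x - dd))) - iprod e (Λ * (dd2x - dd)) := by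
          rw [hM1, iprod_sub_right]
      _ = iprod e (B * (S * t)) - iprod e (Λ * (dd2x - dd)) := by rw [hB1]
      _ = iprod e t - iprod e (Λ * (dd2x - dd)) := by rw [he, hBe]
      _ = iprod e ((xx - zz + zz2x) + Λ * (dd2x - dd)) - iprod e (Λ * (dd2x - dd)) := by
          rw [← htid]
      _ = iprod e (xx - zz + zz2x) := by rw [iprod_add_right]; ring
  have hMdiff : M * (D2 - D) = M * (d2 - d) - M * (d2' - d') := by
    rw [hD2, hD, show d2 - d2' - (d - d') = (d2 - d) - (d2' - d') from by abel,
      Matrix.mul_sub]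
  obtain ⟨yd, hyd⟩ := hrange
  have f4d : iprod D2 (M * (D2 - D)) = iprod D2 (X - Z + Z2) := by
    have h1 := f4 d z x d2 z2 hd hz D2 yd hyd
    have h2 := f4 d' z' x' d2' z2' hd' hz' D2 yd hyd
    have e : X - Z + Z2 = (x - z + z2) - (x' - z' + z2') := by
      rw [hX, hZ, hZ2]; abel
    rw [hMdiff, iprod_sub_right, h1, h2, e, iprod_sub_right]
  -- polarization identities
  have e1 := pol hΛisym Z Z2
  rw [← hV] at e1
  have e2 := pol hMsym D D2
  have e3 : iprod Z2 (Λi * Z2) - iprod Z2 (Λi * Z)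
      = -iprod Z2 Q - iprod Z2 G - iprod Z2 D2 := by
    rw [show iprod Z2 (Λi * Z2) - iprod Z2 (Λi * Z) = iprod Z2 (Λi * (Z2 - Z)) from by
      rw [Matrix.mul_sub Λi Z2 Z, iprod_sub_right], f1d, iprod_neg_right, iprod_add_right,
      iprod_add_right]
    ring
  have e4 : iprod D2 (M * D2) - iprod D2 (M * D)
      = iprod D2 X - iprod D2 Z + iprod D2 Z2 := by
    rw [show iprod D2 (M * D2) - iprod D2 (M * D) = iprod D2 (M * (D2 - D)) from by
      rw [Matrix.mul_sub M D2 D, iprod_sub_right], f4d, iprod_add_right, iprod_sub_right]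
  have e5 : iprod Z2 D2 = iprod D2 Z2 := iprod_comm _ _
  have e6 : iprod D2 X - iprod D2 Z = -iprod D2 (Λ * Q) := by
    rw [← iprod_sub_right, f2, iprod_neg_right]
  have e7 : iprod Z2 Q = iprod X Q - iprod G (Λ * Q) - iprod D2 (Λ * Q) := by
    rw [hZ2eq, iprod_sub_left, iprod_sub_left, iprod_mul_left Λ G Q, hΛsym,
      iprod_mul_left Λ D2 Q, hΛsym]
  have e8 : iprod Z2 G = iprod X G - iprod G (Λ * G) - iprod G (Λ * D2) := by
    rw [hZ2eq, iprod_sub_left, iprod_sub_left, iprod_mul_left Λ G G, hΛsym,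
      iprod_mul_left Λ D2 G, hΛsym, iprod_symm_swap hΛsym D2 G]
  have e9 : iprod G (Λ * Q) + iprod G (Λ * G) + iprod G (Λ * D2) = iprod G V := by
    have h2 : Λ * (Λi * (Z2 - Z)) = Z2 - Z := hΛΛi _
    rw [f1d, Matrix.mul_neg, Matrix.mul_add, Matrix.mul_add] at h2
    have h3 : Λ * Q + Λ * G + Λ * D2 = V := by
      rw [hV]
      have h4 : Λ * Q + Λ * G + Λ * D2 = -(Z2 - Z) := by rw [← h2]; abel
      rw [h4]; abel
    rw [← iprod_add_right, ← iprod_add_right, h3]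
  have hmain : iprod Z2 (Λi * Z2) + iprod D2 (M * D2)
      = iprod Z (Λi * Z) + iprod D (M * D) - iprod V (Λi * V)
        - iprod (D - D2) (M * (D - D2))
        + 2 * (-iprod X Q - iprod X G + iprod G V) := by
    linarith [e1, e2, e3, e4, e5, e6, e7, e8, e9]
  -- monotonicity of the subdifferential
  have hQmono : 0 ≤ iprod X Q := by
    have h1 := prox_subgrad hr hα hx x'
    have h2 := prox_subgrad hr hα hx' x
    have ea : x' - x = -X := by rw [hX]; abel
    have eb : x - x' = X := hX.symm
    rw [ea, iprod_neg_right] at h1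
    rw [eb] at h2
    have e3' : iprod X Q = iprod q X - iprod q' X := by
      rw [iprod_comm, hQ, iprod_sub_left]
    linarith
  -- row-wise bound
  have hrow : ∀ i : Fin n, 2 * (∑ j, G i j * V i j) - 2 * (∑ j, X i j * G i j)
      ≤ (L i / 2) * (∑ j, (V i j) ^ 2) := by
    intro i
    have hco := coco_row hs hg hlip hL x x' i
    have hGij : ∀ j, gradS g x i j - gradS g x' i j = G i j := by
      intro j; rw [hG]; rfl
    have hXij : ∀ j, x i j - x' i j = X i j := by
      intro j; rw [hX]; rfl
    simp only [hGij, hXij] at hco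
    have hyo := young_row (show (0:ℝ) < 2 / L i from div_pos two_pos (hL i))
      (fun j => G i j) (fun j => V i j)
    have hinv : (2 / L i)⁻¹ = L i / 2 := by
      rw [inv_div]
    rw [hinv] at hyo
    have hdiv : 2 / L i * (∑ j, (G i j) ^ 2) = 2 * ((L i)⁻¹ * (∑ j, (G i j) ^ 2)) := by
      rw [div_eq_mul_inv]; ring
    linarith [hco, hyo]
  have hsum : 2 * iprod G V - 2 * iprod X G ≤ ∑ i, (L i / 2) * (∑ j, (V i j) ^ 2) := by
    rw [iprod_rows, iprod_rows, Finset.mul_sum, Finset.mul_sum, ← Finset.sum_sub_distrib]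
    exact Finset.sum_le_sum (fun i _ => hrow i)
  -- rewrite the goal
  have hVeq : z - z2 - (z' - z2') = V := by rw [hV, hZ, hZ2]; abel
  have hDeq : (d - d2) - (d' - d2') = D - D2 := by rw [hD, hD2]; abel
  rw [hVeq, hDeq, nsq_eq, nsq_eq, nsq_eq, nsq_eq, nsq_eq]
  have hVnorm : iprod V (Λi * V) = ∑ i, (α i)⁻¹ * (∑ j, (V i j) ^ 2) := by
    rw [hΛidef, iprod_diag_rows]
    simp only [pow_two]
  have hgam : ∑ i, ((α i)⁻¹ - L i / 2) * (∑ j, (V i j) ^ 2)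
      = (∑ i, (α i)⁻¹ * (∑ j, (V i j) ^ 2)) - ∑ i, (L i / 2) * (∑ j, (V i j) ^ 2) := by
    rw [← Finset.sum_sub_distrib]
    exact Finset.sum_congr rfl (fun i _ => by rw [sub_mul])
  linarith [hmain, hQmono, hsum, hVnorm, hgam]

end Core

section LittleO

lemma InRange.sub' {n p : ℕ} {A : Matrix (Fin n) (Fin n) ℝ} {e f : Matrix (Fin n) (Fin p) ℝ}
    (he : InRange A e) (hf : InRange A f) : InRange A (e - f) := by
  obtain ⟨y, hy⟩ := he
  obtain ⟨w, hw⟩ := hf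
  exact ⟨y - w, by rw [Matrix.mul_sub, ← hy, ← hw]⟩

lemma tendsto_mul_of_antitone_summable {b : ℕ → ℝ} (hnn : ∀ k, 0 ≤ b k)
    (hmono : ∀ k, b (k + 1) ≤ b k) (hsum : Summable b) :
    Tendsto (fun k : ℕ => (k : ℝ) * b k) atTop (𝓝 0) := by
  have hanti : Antitone b := antitone_nat_of_succ_le hmono
  rw [Metric.tendsto_atTop]
  intro ε hε
  set T := ∑' i, b i with hT
  set Sp : ℕ → ℝ := fun K => ∑ i ∈ Finset.range K, b i with hSp
  have htend : Tendsto Sp atTop (𝓝 T) := hsum.hasSum.tendsto_sum_nat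
  have hub : ∀ K, Sp K ≤ T := fun K => hsum.sum_le_tsum _ (fun i _ => hnn i)
  obtain ⟨N, hN⟩ : ∃ N, T - Sp N < ε / 4 := by
    have h0 : Tendsto (fun K => T - Sp K) atTop (𝓝 0) := by
      have h1 : Tendsto (fun _ : ℕ => T) atTop (𝓝 T) := tendsto_const_nhds
      have := h1.sub htend
      simpa using this
    exact ((h0.eventually (gt_mem_nhds (by linarith : (0:ℝ) < ε / 4))).exists)
  refine ⟨2 * N + 2, fun k hk => ?_⟩
  have hNk : N ≤ k := by omega
  have hIco : ∑ i ∈ Finset.Ico N k, b i = Sp k - Sp N := by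
    rw [hSp]
    exact Finset.sum_Ico_eq_sub _ hNk
  have htail : ∑ i ∈ Finset.Ico N k, b i < ε / 4 := by
    have := hub k
    rw [hIco]
    linarith
  have hlb : ((k - N : ℕ) : ℝ) * b k ≤ ∑ i ∈ Finset.Ico N k, b i := by
    have hmem : ∀ i ∈ Finset.Ico N k, b k ≤ b i := fun i hi =>
      hanti (le_of_lt (Finset.mem_Ico.mp hi).2)
    have := Finset.card_nsmul_le_sum (Finset.Ico N k) b (b k) hmem
    rw [Nat.card_Ico] at this
    simpa [nsmul_eq_mul] using this
  have hkN : (k : ℝ) ≤ 2 * ((k - N : ℕ) : ℝ) := by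
    have h1 : N + N + 2 ≤ k := by omega
    have h2 : (((k - N : ℕ)) : ℝ) = (k : ℝ) - N := by
      rw [Nat.cast_sub hNk]
    rw [h2]
    have h3 : (N : ℝ) + N + 2 ≤ k := by exact_mod_cast h1
    linarith
  have hbk : 0 ≤ b k := hnn k
  rw [Real.dist_eq, sub_zero, abs_of_nonneg (mul_nonneg (Nat.cast_nonneg k) hbk)]
  have hs1 : (k : ℝ) * b k ≤ 2 * (((k - N : ℕ) : ℝ) * b k) := by nlinarith
  have hs2 : 2 * (((k - N : ℕ) : ℝ) * b k) ≤ 2 * ∑ i ∈ Finset.Ico N k, b i := by linarith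
  linarith

end LittleO

end NidsAux

/-- Theorem 3.8 (o(1/k) rate). -/
theorem nids_little_o_rate
    {n p : ℕ} (hn : 0 < n)
    (W : Matrix (Fin n) (Fin n) ℝ) (hW : IsMixing W)
    (α L : Fin n → ℝ) (hα : ∀ i, 0 < α i) (hL : ∀ i, 0 < L i)
    (c : ℝ) (hc : 0 < c)
    (hcW : ((1 : Matrix (Fin n) (Fin n) ℝ) -
      c • ((Matrix.diagonal fun i => Real.sqrt (α i)) * (1 - W) *
        Matrix.diagonal fun i => Real.sqrt (α i))).PosDef)
    (B : Matrix (Fin n) (Fin n) ℝ) (hB : IsMoorePenrose (1 - W) B)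
    (s : Fin n → EuclideanSpace ℝ (Fin p) → ℝ)
    (g : Fin n → EuclideanSpace ℝ (Fin p) → EuclideanSpace ℝ (Fin p))
    (hs : ∀ i, ConvexOn ℝ Set.univ (s i))
    (hg : ∀ i v, HasGradientAt (s i) (g i v) v)
    (hlip : ∀ i (v w : EuclideanSpace ℝ (Fin p)), ‖g i v - g i w‖ ≤ L i * ‖v - w‖)
    (r : Fin n → (Fin p → ℝ) → ℝ) (hr : ∀ i, ConvexOn ℝ Set.univ (r i))
    (hss : ∀ i, α i < 2 / L i)
    (x d z : ℕ → Matrix (Fin n) (Fin p) ℝ)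
    (hx : ∀ k, 1 ≤ k → ProxMin r α (z k) (x k))
    (hdu : ∀ k, 1 ≤ k → d (k + 1) = d k + c • ((1 - W) *
      ((2 : ℝ) • x k - z k - Matrix.diagonal α * gradS g (x k) - Matrix.diagonal α * d k)))
    (hzu : ∀ k, 1 ≤ k → z (k + 1) =
      x k - Matrix.diagonal α * gradS g (x k) - Matrix.diagonal α * d (k + 1))
    (hd1 : InRange (1 - W) (d 1))
    (dstar zstar xstar : Matrix (Fin n) (Fin p) ℝ)
    (hxstar : ProxMin r α zstar xstar)
    (hfix1 : dstar = dstar + c • ((1 - W) * ((2 : ℝ) • xstar - zstar -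
      Matrix.diagonal α * gradS g xstar - Matrix.diagonal α * dstar)))
    (hfix2 : zstar = xstar - Matrix.diagonal α * gradS g xstar - Matrix.diagonal α * dstar)
    (hdstar : InRange (1 - W) dstar) :
    Tendsto (fun k : ℕ => (k : ℝ) *
      (nsq (Matrix.diagonal fun i => (α i)⁻¹) (z k - z (k + 1)) +
        nsq (c⁻¹ • B - Matrix.diagonal α) (d k - d (k + 1)))) atTop (𝓝 0) := by
  classical
  obtain ⟨hWsym, hnull, hWpd, hWpsd⟩ := hW
  have hSpsd : ((1 : Matrix (Fin n) (Fin n) ℝ) - W).PosSemidef := by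
    have e : (2:ℝ) • (1 : Matrix (Fin n) (Fin n) ℝ) - (W + 1) = 1 - W := by
      ext i j
      by_cases hij : i = j <;>
        simp [Matrix.smul_apply, Matrix.sub_apply, Matrix.add_apply, Matrix.one_apply, hij] <;>
        ring
    rwa [e] at hWpsd
  set a : ℕ → ℝ := fun k =>
    nsq (Matrix.diagonal fun i => (α i)⁻¹) (z k - z (k + 1)) +
      nsq (c⁻¹ • B - Matrix.diagonal α) (d k - d (k + 1)) with ha
  set E : ℕ → ℝ := fun k =>
    nsq (Matrix.diagonal fun i => (α i)⁻¹) (z k - zstar) +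
      nsq (c⁻¹ • B - Matrix.diagonal α) (d k - dstar) with hE
  have hrangeStar : ∀ k, 1 ≤ k → InRange (1 - W) (d k - dstar) := by
    intro k
    induction k with
    | zero => intro h; omega
    | succ m ih =>
      intro _
      by_cases hm : 1 ≤ m
      · obtain ⟨ym, hym⟩ := ih hm
        refine ⟨ym + c • ((2:ℝ) • x m - z m - Matrix.diagonal α * gradS g (x m)
          - Matrix.diagonal α * d m), ?_⟩
        rw [hdu m hm, Matrix.mul_add, Matrix.mul_smul, ← hym]
        abel
      · have hm0 : m = 0 := by omega
        subst hm0
        obtain ⟨y1, hy1⟩ := hd1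
        obtain ⟨ys, hys⟩ := hdstar
        exact ⟨y1 - ys, by rw [Matrix.mul_sub, ← hy1, ← hys]⟩
  have hrangeStep : ∀ k, 1 ≤ k → InRange (1 - W) (d k - d (k + 1)) := by
    intro k hk
    refine ⟨(-c) • ((2:ℝ) • x k - z k - Matrix.diagonal α * gradS g (x k)
      - Matrix.diagonal α * d k), ?_⟩
    rw [hdu k hk, Matrix.mul_smul, neg_smul]
    abel
  have hMnn : ∀ e : Matrix (Fin n) (Fin p) ℝ, InRange (1 - W) e →
      0 ≤ nsq (c⁻¹ • B - Matrix.diagonal α) e := fun e he =>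
    NidsAux.M_psd_on_range hWsym hSpsd hα hc hcW hB he
  have hDnn : ∀ v : Matrix (Fin n) (Fin p) ℝ,
      0 ≤ nsq (Matrix.diagonal fun i => (α i)⁻¹) v := fun v =>
    NidsAux.nsq_diag_nonneg (fun i => inv_nonneg.mpr (le_of_lt (hα i))) v
  have hγpos : ∀ i, 0 < (α i)⁻¹ - L i / 2 := by
    intro i
    have h3 : (2 / L i)⁻¹ < (α i)⁻¹ := inv_strictAnti₀ (hα i) (hss i)
    rw [inv_div] at h3
    linarith
  have hγsum : ∀ v : Matrix (Fin n) (Fin p) ℝ,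
      0 ≤ ∑ i, ((α i)⁻¹ - L i / 2) * ∑ j, (v i j) ^ 2 := by
    intro v
    apply Finset.sum_nonneg
    intro i _
    exact mul_nonneg (le_of_lt (hγpos i)) (Finset.sum_nonneg fun j _ => sq_nonneg _)
  have hFejer : ∀ k, 1 ≤ k →
      E (k + 1) ≤ E k - nsq (c⁻¹ • B - Matrix.diagonal α) (d k - d (k + 1))
        - ∑ i, ((α i)⁻¹ - L i / 2) * ∑ j, ((z k - z (k + 1)) i j) ^ 2 := by
    intro k hk
    have hco := NidsAux.core hWsym hα hL hc hB hs hg hlip hr (hx k hk) hxstar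
      (hdu k hk) (hzu k hk) hfix1 hfix2 (hrangeStar (k + 1) (by omega))
    simp only [sub_self, sub_zero] at hco
    simp only [hE]
    linarith [hco]
  have hann : ∀ k, 1 ≤ k → 0 ≤ a k := by
    intro k hk
    simp only [ha]
    have h1 := hDnn (z k - z (k + 1))
    have h2 := hMnn _ (hrangeStep k hk)
    linarith
  have hEnn : ∀ k, 1 ≤ k → 0 ≤ E k := by
    intro k hk
    simp only [hE]
    have h1 := hDnn (z k - zstar)
    have h2 := hMnn _ (hrangeStar k hk)
    linarith
  have hamono : ∀ k, 1 ≤ k → a (k + 1) ≤ a k := by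
    intro k hk
    have hco := NidsAux.core hWsym hα hL hc hB hs hg hlip hr (hx k hk)
      (hx (k + 1) (by omega)) (hdu k hk) (hzu k hk) (hdu (k + 1) (by omega))
      (hzu (k + 1) (by omega)) (hrangeStep (k + 1) (by omega))
    have h1 : 0 ≤ nsq (c⁻¹ • B - Matrix.diagonal α)
        ((d k - d (k + 1)) - (d (k + 1) - d (k + 1 + 1))) :=
      hMnn _ (NidsAux.InRange.sub' (hrangeStep k hk) (hrangeStep (k + 1) (by omega)))
    have h2 := hγsum (z k - z (k + 1) - (z (k + 1) - z (k + 1 + 1)))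
    simp only [ha]
    linarith [hco]
  have hne : (Finset.univ : Finset (Fin n)).Nonempty := ⟨⟨0, hn⟩, Finset.mem_univ _⟩
  set C : ℝ := 1 + Finset.univ.sup' hne (fun i => (α i)⁻¹ / ((α i)⁻¹ - L i / 2)) with hC
  have hsupnn : 0 ≤ Finset.univ.sup' hne (fun i => (α i)⁻¹ / ((α i)⁻¹ - L i / 2)) := by
    obtain ⟨i0, _⟩ := hne
    calc (0:ℝ) ≤ (α i0)⁻¹ / ((α i0)⁻¹ - L i0 / 2) :=
          div_nonneg (inv_nonneg.mpr (le_of_lt (hα i0))) (le_of_lt (hγpos i0))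
      _ ≤ _ := Finset.le_sup' (fun i => (α i)⁻¹ / ((α i)⁻¹ - L i / 2)) (Finset.mem_univ i0)
  have hC1 : 1 ≤ C := by rw [hC]; linarith
  have hCnn : (0:ℝ) ≤ C := by linarith
  have hCb : ∀ i, (α i)⁻¹ ≤ C * ((α i)⁻¹ - L i / 2) := by
    intro i
    have h1 : (α i)⁻¹ / ((α i)⁻¹ - L i / 2) ≤ C := by
      rw [hC]
      have := Finset.le_sup' (fun i => (α i)⁻¹ / ((α i)⁻¹ - L i / 2)) (Finset.mem_univ i)
      linarith
    have h2 := mul_le_mul_of_nonneg_right h1 (le_of_lt (hγpos i))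
    rwa [div_mul_cancel₀ _ (ne_of_gt (hγpos i))] at h2
  have hkey : ∀ k, 1 ≤ k → a k ≤ C * (E k - E (k + 1)) := by
    intro k hk
    have hF := hFejer k hk
    have hzn : nsq (Matrix.diagonal fun i => (α i)⁻¹) (z k - z (k + 1))
        ≤ C * ∑ i, ((α i)⁻¹ - L i / 2) * ∑ j, ((z k - z (k + 1)) i j) ^ 2 := by
      rw [NidsAux.nsq_eq, NidsAux.iprod_diag_rows, Finset.mul_sum]
      apply Finset.sum_le_sum
      intro i _
      have hnn : 0 ≤ ∑ j, ((z k - z (k + 1)) i j) ^ 2 :=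
        Finset.sum_nonneg fun j _ => sq_nonneg _
      have e : ∑ j, (z k - z (k + 1)) i j * (z k - z (k + 1)) i j
          = ∑ j, ((z k - z (k + 1)) i j) ^ 2 := by simp only [pow_two]
      rw [e]
      calc (α i)⁻¹ * ∑ j, ((z k - z (k + 1)) i j) ^ 2
          ≤ (C * ((α i)⁻¹ - L i / 2)) * ∑ j, ((z k - z (k + 1)) i j) ^ 2 :=
            mul_le_mul_of_nonneg_right (hCb i) hnn
        _ = C * (((α i)⁻¹ - L i / 2) * ∑ j, ((z k - z (k + 1)) i j) ^ 2) := by ring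
    have hMk := hMnn _ (hrangeStep k hk)
    have hdn : nsq (c⁻¹ • B - Matrix.diagonal α) (d k - d (k + 1))
        ≤ C * nsq (c⁻¹ • B - Matrix.diagonal α) (d k - d (k + 1)) := by
      nlinarith
    have h3 : nsq (c⁻¹ • B - Matrix.diagonal α) (d k - d (k + 1))
        + ∑ i, ((α i)⁻¹ - L i / 2) * ∑ j, ((z k - z (k + 1)) i j) ^ 2
        ≤ E k - E (k + 1) := by linarith
    have h4 := mul_le_mul_of_nonneg_left h3 hCnn
    rw [mul_add] at h4
    simp only [ha]
    linarith
  have hparts : ∀ K, ∑ k ∈ Finset.range K, a (k + 1) ≤ C * E 1 := by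
    intro K
    have h1 : ∑ k ∈ Finset.range K, a (k + 1)
        ≤ ∑ k ∈ Finset.range K, C * (E (k + 1) - E (k + 1 + 1)) :=
      Finset.sum_le_sum fun k _ => hkey (k + 1) (by omega)
    have h2 : ∑ k ∈ Finset.range K, C * (E (k + 1) - E (k + 1 + 1))
        = C * (E 1 - E (K + 1)) := by
      rw [← Finset.mul_sum, Finset.sum_range_sub' (fun k => E (k + 1))]
    have h3 : C * (E 1 - E (K + 1)) ≤ C * E 1 := by
      have hE1 := hEnn (K + 1) (by omega)
      nlinarith
    linarith
  have hsummable : Summable (fun k => a (k + 1)) :=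
    summable_of_sum_range_le (fun k => hann (k + 1) (by omega)) hparts
  have ht1 := NidsAux.tendsto_mul_of_antitone_summable
    (fun k => hann (k + 1) (by omega)) (fun k => hamono (k + 1) (by omega)) hsummable
  have ht2 : Tendsto (fun k : ℕ => a (k + 1)) atTop (𝓝 0) := hsummable.tendsto_atTop_zero
  have ht3 : Tendsto (fun k : ℕ => ((k : ℝ) + 1) * a (k + 1)) atTop (𝓝 0) := by
    have hadd : Tendsto (fun k : ℕ => (k : ℝ) * a (k + 1) + a (k + 1)) atTop (𝓝 0) := by
      simpa using ht1.add ht2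
    exact hadd.congr (fun k => by ring)
  have hsub : Tendsto (fun k : ℕ => k - 1) atTop atTop := tendsto_sub_atTop_nat 1
  have ht4 := ht3.comp hsub
  have heq : (fun k : ℕ => (((k - 1 : ℕ) : ℝ) + 1) * a ((k - 1) + 1))
      =ᶠ[atTop] (fun k : ℕ => (k : ℝ) * a k) := by
    filter_upwards [eventually_ge_atTop 1] with k hk
    have h1 : k - 1 + 1 = k := by omega
    have h2 : (((k - 1 : ℕ)) : ℝ) + 1 = (k : ℝ) := by
      rw [Nat.cast_sub hk]
      push_cast
      ring
    rw [h1, h2]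
  exact Tendsto.congr' heq ht4
end

section
/- (Theorem 3.9, linear convergence in the smooth strongly convex case.) Suppose each s_i is in addition μ_i-strongly convex (μ_i > 0) and max_i α_i L_i ≤ 2. Consider the smooth NIDS iteration (the case r = 0): d^{k+1} = d^k + c(I − W)(x^k − Λ∇s(x^k) − Λ d^k) and x^{k+1} = x^k − Λ∇s(x^k) − Λ d^{k+1}. Let (d*, x*) satisfy (I − W)x* = 0, ∇s(x*) + d* = 0 and d* ∈ range(I − W), and assume d^k ∈ range(I − W). Define ρ = max( 1 − (2 − max_i α_i L_i) · min_i μ_i α_i , 1 − c / λ_max(Λ^{−1/2}(I − W)† Λ^{−1/2}) ), where λ_max denotes the largest eigenvalue. Then ‖x^{k+1} − x*‖²_{Λ⁻¹} + ‖d^{k+1} − d*‖²_{M+Λ} ≤ ρ · ( ‖x^k − x*‖²_{Λ⁻¹} + ‖d^k − d*‖²_{M+Λ} ). -/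
open Matrix Filter Topology

namespace NIDSAux

open RealInnerProductSpace

section ConvexAnalysis
variable {E : Type*} [NormedAddCommGroup E] [InnerProductSpace ℝ E] [CompleteSpace E]
  {f : E → ℝ} {g : E → E}

theorem lineDeriv' (hg : ∀ x, HasGradientAt f (g x) x) (u d : E) (t : ℝ) :
    HasDerivAt (fun t : ℝ => f (u + t • d)) ⟪g (u + t • d), d⟫ t := by
  have h1 : HasDerivAt (fun t : ℝ => u + t • d) d t := by
    simpa using ((hasDerivAt_id t).smul_const d).const_add u
  have h2 := (hasGradientAt_iff_hasFDerivAt.1 (hg (u + t • d))).comp_hasDerivAt t h1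
  exact h2

theorem grad_lower (hf : ConvexOn ℝ Set.univ f) (hg : ∀ x, HasGradientAt f (g x) x) (u v : E) :
    f u + ⟪g u, v - u⟫ ≤ f v := by
  have hconv : ConvexOn ℝ Set.univ (fun t : ℝ => f (u + t • (v - u))) := by
    have h := hf.comp_affineMap (AffineMap.lineMap u v)
    have he : (fun t : ℝ => f (u + t • (v - u))) = f ∘ (AffineMap.lineMap u v) := by
      funext t; simp [AffineMap.lineMap_apply, add_comm]
    rw [he]
    simpa using h
  have hs := hconv.le_slope_of_hasDerivAt (Set.mem_univ 0) (Set.mem_univ 1) one_pos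
    (lineDeriv' hg u (v - u) 0)
  rw [slope_def_field] at hs
  simp at hs
  linarith

theorem descent_lemma (hf : ConvexOn ℝ Set.univ f) (hg : ∀ x, HasGradientAt f (g x) x)
    {L : ℝ} (hL : 0 ≤ L) (hlip : ∀ v w : E, ‖g v - g w‖ ≤ L * ‖v - w‖) (u v : E) :
    f v ≤ f u + ⟪g u, v - u⟫ + L / 2 * ‖v - u‖ ^ 2 := by
  set d := v - u with hd
  set χ : ℝ → ℝ := fun t => f (u + t • d) - t * ⟪g u, d⟫ - L * ‖d‖ ^ 2 * t ^ 2 / 2 with hχ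
  have hχd : ∀ t : ℝ, HasDerivAt χ (⟪g (u + t • d), d⟫ - ⟪g u, d⟫ - L * ‖d‖ ^ 2 * t) t := by
    intro t
    have h1 := (lineDeriv' hg u d t).sub ((hasDerivAt_id t).mul_const ⟪g u, d⟫)
    have h2 := h1.sub (((hasDerivAt_pow 2 t).const_mul (L * ‖d‖ ^ 2)).div_const 2)
    exact h2.congr_deriv (by ring)
  have hmono : AntitoneOn χ (Set.Icc (0:ℝ) 1) := by
    apply antitoneOn_of_deriv_nonpos (convex_Icc 0 1)
    · exact Continuous.continuousOn (by
        have : Differentiable ℝ χ := fun t => (hχd t).differentiableAt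
        exact this.continuous)
    · intro t ht
      exact (hχd t).differentiableAt.differentiableWithinAt
    · intro t ht
      rw [interior_Icc] at ht
      rw [(hχd t).deriv]
      have h1 : ⟪g (u + t • d) - g u, d⟫ ≤ L * t * ‖d‖ ^ 2 := by
        calc ⟪g (u + t • d) - g u, d⟫ ≤ ‖g (u + t • d) - g u‖ * ‖d‖ := real_inner_le_norm _ _
        _ ≤ (L * ‖(u + t • d) - u‖) * ‖d‖ := by
            have := hlip (u + t • d) u
            exact mul_le_mul_of_nonneg_right this (norm_nonneg _)
        _ = L * t * ‖d‖ ^ 2 := by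
            rw [add_sub_cancel_left, norm_smul]
            simp [abs_of_pos ht.1]; ring
      rw [inner_sub_left] at h1
      linarith
  have h01 := hmono (Set.mem_Icc.2 ⟨le_refl 0, zero_le_one⟩) (Set.mem_Icc.2 ⟨zero_le_one, le_refl 1⟩) zero_le_one
  have hval : χ 1 = f v - ⟪g u, d⟫ - L * ‖d‖ ^ 2 / 2 := by
    simp [hχ, hd]
  have hval0 : χ 0 = f u := by simp [hχ]
  rw [hval, hval0] at h01
  have : L / 2 * ‖d‖ ^ 2 = L * ‖d‖ ^ 2 / 2 := by ring
  rw [hd] at *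
  linarith

theorem coco_aux (hf : ConvexOn ℝ Set.univ f) (hg : ∀ x, HasGradientAt f (g x) x)
    {L : ℝ} (hL : 0 < L) (hlip : ∀ v w : E, ‖g v - g w‖ ≤ L * ‖v - w‖) (u v : E) :
    f v + ⟪g v, u - v⟫ + 1 / (2 * L) * ‖g u - g v‖ ^ 2 ≤ f u := by
  set w := u - (1 / L) • (g u - g v) with hw
  have h1 := grad_lower hf hg v w
  have h2 := descent_lemma hf hg hL.le hlip u w
  have e1 : w - u = -((1/L) • (g u - g v)) := by rw [hw]; abel
  have e2 : ⟪g u, w - u⟫ = -(1/L) * ⟪g u, g u - g v⟫ := by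
    rw [e1, inner_neg_right, inner_smul_right]; ring
  have e3 : ‖w - u‖ ^ 2 = (1/L)^2 * ‖g u - g v‖ ^ 2 := by
    rw [e1, norm_neg, norm_smul, Real.norm_eq_abs, abs_of_pos (by positivity : (0:ℝ) < 1/L)]
    ring
  have e4 : ⟪g v, w - v⟫ = ⟪g v, u - v⟫ - (1/L) * ⟪g v, g u - g v⟫ := by
    have : w - v = (u - v) - (1/L) • (g u - g v) := by rw [hw]; abel
    rw [this, inner_sub_right, inner_smul_right]
  have e5 : ⟪g u, g u - g v⟫ - ⟪g v, g u - g v⟫ = ‖g u - g v‖ ^ 2 := by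
    rw [← inner_sub_left, real_inner_self_eq_norm_sq]
  rw [e4] at h1
  rw [e2, e3] at h2
  have hL' : L ≠ 0 := hL.ne'
  have e6 : (1/L) * ⟪g u, g u - g v⟫ - (1/L) * ⟪g v, g u - g v⟫ = (1/L) * ‖g u - g v‖^2 := by
    rw [← mul_sub, e5]
  have e7 : 1 / (2*L) * ‖g u - g v‖^2 = (1/L) * ‖g u - g v‖^2 - L/2 * ((1/L)^2 * ‖g u - g v‖^2) := by
    field_simp; ring
  linarith

theorem coco (hf : ConvexOn ℝ Set.univ f) (hg : ∀ x, HasGradientAt f (g x) x)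
    {L : ℝ} (hL : 0 < L) (hlip : ∀ v w : E, ‖g v - g w‖ ≤ L * ‖v - w‖) (u v : E) :
    (1 / L) * ‖g u - g v‖ ^ 2 ≤ ⟪g u - g v, u - v⟫ := by
  have h1 := coco_aux hf hg hL hlip u v
  have h2 := coco_aux hf hg hL hlip v u
  have e1 : ‖g v - g u‖ = ‖g u - g v‖ := norm_sub_rev _ _
  have e2 : ⟪g u, v - u⟫ = - ⟪g u, u - v⟫ := by
    rw [show v - u = -(u - v) by abel, inner_neg_right]
  rw [e1] at h2
  rw [e2] at h2
  rw [inner_sub_left]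
  have : 1/L * ‖g u - g v‖^2 = 1/(2*L) * ‖g u - g v‖^2 + 1/(2*L) * ‖g u - g v‖^2 := by
    field_simp; ring
  linarith

theorem grad_normsq (μ : ℝ) (x : E) :
    HasGradientAt (fun v : E => μ / 2 * ‖v‖ ^ 2) (μ • x) x := by
  rw [hasGradientAt_iff_hasFDerivAt]
  have h : HasFDerivAt (fun v : E => ⟪v, v⟫) ((fderivInnerCLM ℝ (x, x)).comp ((ContinuousLinearMap.id ℝ E).prod (ContinuousLinearMap.id ℝ E))) x :=
    (hasFDerivAt_id x).inner ℝ (hasFDerivAt_id x)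
  have h2 := h.const_mul (μ / 2)
  have he : (fun v : E => μ / 2 * ‖v‖ ^ 2) = fun v : E => μ / 2 * ⟪v, v⟫ := by
    funext v; rw [real_inner_self_eq_norm_sq]
  rw [he]
  refine h2.congr_fderiv ?_
  apply ContinuousLinearMap.ext
  intro y
  simp [fderivInnerCLM_apply, real_inner_comm x y]
  ring

theorem strong_mono (hf : ∀ x, HasGradientAt f (g x) x) {μ : ℝ}
    (hsc : ConvexOn ℝ Set.univ fun v => f v - μ / 2 * ‖v‖ ^ 2) (u v : E) :
    μ * ‖u - v‖ ^ 2 ≤ ⟪g u - g v, u - v⟫ := by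
  have hg2 : ∀ x, HasGradientAt (fun v => f v - μ / 2 * ‖v‖ ^ 2) (g x - μ • x) x := by
    intro x
    rw [hasGradientAt_iff_hasFDerivAt] at *
    have h1 := hasGradientAt_iff_hasFDerivAt.1 (hf x)
    have h2 := hasGradientAt_iff_hasFDerivAt.1 (grad_normsq μ x)
    have := h1.sub h2
    exact this.congr_fderiv (map_sub _ _ _).symm
  have h1 := grad_lower hsc hg2 u v
  have h2 := grad_lower hsc hg2 v u
  have e1 : ⟪g u - μ • u, v - u⟫ = -⟪g u, u - v⟫ + μ * ⟪u, u - v⟫ := by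
    rw [show v - u = -(u - v) by abel, inner_neg_right, inner_sub_left, real_inner_smul_left]
    ring
  have e2 : ⟪g v - μ • v, u - v⟫ = ⟪g v, u - v⟫ - μ * ⟪v, u - v⟫ := by
    rw [inner_sub_left, real_inner_smul_left]
  have e3 : ⟪u, u - v⟫ - ⟪v, u - v⟫ = ‖u - v‖ ^ 2 := by
    rw [← inner_sub_left, real_inner_self_eq_norm_sq]
  have e4 : ⟪g u, u - v⟫ - ⟪g v, u - v⟫ = ⟪g u - g v, u - v⟫ := (inner_sub_left _ _ _).symm
  have e5 : μ * ⟪u, u - v⟫ - μ * ⟪v, u - v⟫ = μ * ‖u - v‖ ^ 2 := by rw [← mul_sub, e3]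
  linarith

end ConvexAnalysis

section MatrixToolkit
variable {n p : ℕ}


theorem iprod_add_right (x y z : Matrix (Fin n) (Fin p) ℝ) :
    iprod x (y + z) = iprod x y + iprod x z := by
  simp [iprod, Matrix.mul_add]

theorem iprod_sub_right (x y z : Matrix (Fin n) (Fin p) ℝ) :
    iprod x (y - z) = iprod x y - iprod x z := by
  simp [iprod, Matrix.mul_sub]

theorem iprod_smul_right (r : ℝ) (x y : Matrix (Fin n) (Fin p) ℝ) :
    iprod x (r • y) = r * iprod x y := by
  simp [iprod, Matrix.mul_smul]

theorem iprod_comm (x y : Matrix (Fin n) (Fin p) ℝ) : iprod x y = iprod y x := by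
  rw [iprod, ← Matrix.trace_transpose, Matrix.transpose_mul, Matrix.transpose_transpose, iprod]

theorem iprod_mul_left (A : Matrix (Fin n) (Fin n) ℝ) (x y : Matrix (Fin n) (Fin p) ℝ) :
    iprod (A * x) y = iprod x (Aᵀ * y) := by
  rw [iprod, Matrix.transpose_mul, Matrix.mul_assoc, iprod]

theorem iprod_add_left (x y z : Matrix (Fin n) (Fin p) ℝ) :
    iprod (x + y) z = iprod x z + iprod y z := by
  rw [iprod_comm, iprod_add_right, iprod_comm z x, iprod_comm z y]

theorem iprod_sub_left (x y z : Matrix (Fin n) (Fin p) ℝ) :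
    iprod (x - y) z = iprod x z - iprod y z := by
  rw [iprod_comm, iprod_sub_right, iprod_comm z x, iprod_comm z y]

theorem iprod_smul_left (r : ℝ) (x y : Matrix (Fin n) (Fin p) ℝ) :
    iprod (r • x) y = r * iprod x y := by
  rw [iprod_comm, iprod_smul_right, iprod_comm]

theorem nsq_eq (Q : Matrix (Fin n) (Fin n) ℝ) (x : Matrix (Fin n) (Fin p) ℝ) :
    nsq Q x = iprod x (Q * x) := by
  rw [nsq, iprodQ, iprod, Matrix.mul_assoc]

theorem iprod_eq_sum (x y : Matrix (Fin n) (Fin p) ℝ) :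
    iprod x y = ∑ j, ∑ i, x i j * y i j := by
  simp [iprod, Matrix.trace, Matrix.diag, Matrix.mul_apply, Matrix.transpose_apply]

theorem nsq_eq_sum_cols (Q : Matrix (Fin n) (Fin n) ℝ) (x : Matrix (Fin n) (Fin p) ℝ) :
    nsq Q x = ∑ j, (fun i => x i j) ⬝ᵥ (Q *ᵥ (fun i => x i j)) := by
  rw [nsq_eq, iprod_eq_sum]
  refine Finset.sum_congr rfl fun j _ => ?_
  simp [dotProduct, Matrix.mulVec, Matrix.mul_apply, dotProduct]

theorem nsq_nonneg {Q : Matrix (Fin n) (Fin n) ℝ} (hQ : Q.PosSemidef)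
    (x : Matrix (Fin n) (Fin p) ℝ) : 0 ≤ nsq Q x := by
  rw [nsq_eq_sum_cols]
  refine Finset.sum_nonneg fun j _ => ?_
  simpa using hQ.dotProduct_mulVec_nonneg (fun i => x i j)

theorem nsq_diagonal_eq (β : Fin n → ℝ) (x : Matrix (Fin n) (Fin p) ℝ) :
    nsq (Matrix.diagonal β) x = ∑ i, β i * ∑ j, (x i j) ^ 2 := by
  rw [nsq_eq, iprod_eq_sum, Finset.sum_comm]
  refine Finset.sum_congr rfl fun i _ => ?_
  rw [Finset.mul_sum]
  refine Finset.sum_congr rfl fun j _ => ?_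
  rw [Matrix.diagonal_mul]
  ring



theorem nsq_expand_add {M : Matrix (Fin n) (Fin n) ℝ} (hM : Mᵀ = M)
    (a b : Matrix (Fin n) (Fin p) ℝ) :
    nsq M (a + b) = nsq M a + 2 * iprod a (M * b) + nsq M b := by
  have hba : iprod b (M * a) = iprod a (M * b) := by
    rw [iprod_comm, iprod_mul_left, hM]
  simp only [nsq_eq, Matrix.mul_add, iprod_add_left, iprod_add_right, hba]
  ring

theorem nsq_expand_sub {M : Matrix (Fin n) (Fin n) ℝ} (hM : Mᵀ = M)
    (a b : Matrix (Fin n) (Fin p) ℝ) :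
    nsq M (a - b) = nsq M a - 2 * iprod a (M * b) + nsq M b := by
  have hba : iprod b (M * a) = iprod a (M * b) := by
    rw [iprod_comm, iprod_mul_left, hM]
  simp only [nsq_eq, Matrix.mul_sub, iprod_sub_left, iprod_sub_right, hba]
  ring

theorem nsq_smul (M : Matrix (Fin n) (Fin n) ℝ) (c : ℝ) (x : Matrix (Fin n) (Fin p) ℝ) :
    nsq M (c • x) = c ^ 2 * nsq M x := by
  rw [nsq_eq, nsq_eq, Matrix.mul_smul, iprod_smul_left, iprod_smul_right]
  ring

theorem key_identity (V B Lam Linv : Matrix (Fin n) (Fin n) ℝ)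
    (hVt : Vᵀ = V) (hBt : Bᵀ = B) (hLt : Lamᵀ = Lam) (hLit : Linvᵀ = Linv)
    (hLL : Linv * Lam = 1) (hLL2 : Lam * Linv = 1) (hVBV : V * B * V = V)
    (c : ℝ) (hc : c ≠ 0)
    (ed h yd : Matrix (Fin n) (Fin p) ℝ) (hed : ed = V * yd) :
    nsq Linv ((h - Lam * ed) - c • (Lam * (V * (h - Lam * ed)))) +
      c⁻¹ * nsq B (ed + c • (V * (h - Lam * ed)))
    = nsq Linv h + c⁻¹ * nsq B ed - nsq Lam ed
      - c * iprod (h - Lam * ed) ((V - c • (V * Lam * V)) * (h - Lam * ed)) := by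
  set q : Matrix (Fin n) (Fin p) ℝ := h - Lam * ed with hq
  -- auxiliary equalities
  have nsqLinvLam : ∀ z : Matrix (Fin n) (Fin p) ℝ, nsq Linv (Lam * z) = nsq Lam z := by
    intro z
    rw [nsq_eq, iprod_mul_left, hLt, ← Matrix.mul_assoc, ← Matrix.mul_assoc, hLL2,
      Matrix.one_mul, ← nsq_eq]
  have e1 : iprod q (Linv * (c • (Lam * (V * q)))) = c * iprod q (V * q) := by
    rw [Matrix.mul_smul, iprod_smul_right, ← Matrix.mul_assoc, hLL, Matrix.one_mul]
  have e2 : nsq Linv (c • (Lam * (V * q))) = c ^ 2 * iprod (V * q) (Lam * (V * q)) := by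
    rw [nsq_smul, nsqLinvLam, nsq_eq]
  have e3 : iprod ed (B * (c • (V * q))) = c * iprod ed q := by
    rw [Matrix.mul_smul, iprod_smul_right, hed, iprod_mul_left, hVt,
      ← Matrix.mul_assoc, ← Matrix.mul_assoc, hVBV]
    rw [iprod_comm, iprod_mul_left, hVt, iprod_comm]
  have e4 : nsq B (c • (V * q)) = c ^ 2 * iprod q (V * q) := by
    rw [nsq_smul, nsq_eq, iprod_mul_left, hVt, ← Matrix.mul_assoc, ← Matrix.mul_assoc, hVBV]
  have e5 : iprod h (Linv * (Lam * ed)) = iprod h ed := by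
    rw [← Matrix.mul_assoc, hLL, Matrix.one_mul]
  have e6 : nsq Linv (Lam * ed) = nsq Lam ed := nsqLinvLam ed
  have e7 : iprod ed (Lam * ed) = nsq Lam ed := (nsq_eq _ _).symm
  have e8 : iprod ed h = iprod h ed := iprod_comm _ _
  have e9 : iprod q ((V - c • (V * Lam * V)) * q)
      = iprod q (V * q) - c * iprod (V * q) (Lam * (V * q)) := by
    rw [Matrix.sub_mul, iprod_sub_right, Matrix.smul_mul, iprod_smul_right]
    congr 2
    rw [iprod_mul_left, hVt, Matrix.mul_assoc, Matrix.mul_assoc]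
  -- expansions
  have E1 : nsq Linv (q - c • (Lam * (V * q)))
      = nsq Linv q - 2 * (c * iprod q (V * q)) + c ^ 2 * iprod (V * q) (Lam * (V * q)) := by
    rw [nsq_expand_sub hLit, e1, e2]
  have E2 : nsq B (ed + c • (V * q))
      = nsq B ed + 2 * (c * iprod ed q) + c ^ 2 * iprod q (V * q) := by
    rw [nsq_expand_add hBt, e3, e4]
  have E3 : nsq Linv q = nsq Linv h - 2 * iprod h ed + nsq Lam ed := by
    rw [hq, nsq_expand_sub hLit, e5, e6]
  have E4 : iprod ed q = iprod h ed - nsq Lam ed := by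
    rw [hq, iprod_sub_right, e7, e8]
  rw [E1, E2, E3, E4, e9]
  field_simp
  ring


theorem eigenvalues_isEig {A : Matrix (Fin n) (Fin n) ℝ} (hA : A.IsHermitian) (i : Fin n) :
    IsEig A (hA.eigenvalues i) := by
  refine ⟨hA.eigenvectorBasis i, ?_, hA.mulVec_eigenvectorBasis i⟩
  have h := hA.eigenvectorBasis.toBasis.ne_zero i
  simpa using h

theorem spectral_decomp {A : Matrix (Fin n) (Fin n) ℝ} (hA : A.IsHermitian) :
    A = (hA.eigenvectorUnitary : Matrix (Fin n) (Fin n) ℝ) * diagonal hA.eigenvalues *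
      star (hA.eigenvectorUnitary : Matrix (Fin n) (Fin n) ℝ) := by
  have := hA.spectral_theorem
  simpa [RCLike.ofReal_real_eq_id] using this

theorem quad_le_of_eig_le {A : Matrix (Fin n) (Fin n) ℝ} (hA : A.IsHermitian) {m : ℝ}
    (hm : ∀ i, hA.eigenvalues i ≤ m) (v : Fin n → ℝ) :
    v ⬝ᵥ (A *ᵥ v) ≤ m * (v ⬝ᵥ v) := by
  set U : Matrix (Fin n) (Fin n) ℝ := (hA.eigenvectorUnitary : Matrix (Fin n) (Fin n) ℝ)
  have hU : U * star U = 1 := (Matrix.mem_unitaryGroup_iff).mp hA.eigenvectorUnitary.2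
  have hpsd : (m • (1 : Matrix (Fin n) (Fin n) ℝ) - A).PosSemidef := by
    have hd : (Matrix.diagonal fun i => m - hA.eigenvalues i).PosSemidef := by
      rw [Matrix.posSemidef_diagonal_iff]
      exact fun i => sub_nonneg.2 (hm i)
    have h2 := hd.mul_mul_conjTranspose_same U
    have he : U * (Matrix.diagonal fun i => m - hA.eigenvalues i) * Uᴴ
        = m • (1 : Matrix (Fin n) (Fin n) ℝ) - A := by
      have : (Matrix.diagonal fun i => m - hA.eigenvalues i)
          = m • (1 : Matrix (Fin n) (Fin n) ℝ) - diagonal hA.eigenvalues := by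
        rw [← Matrix.diagonal_one, ← Matrix.diagonal_smul, Matrix.diagonal_sub]
        congr 1
        funext i
        simp
      rw [this, Matrix.mul_sub, Matrix.sub_mul, ← Matrix.star_eq_conjTranspose]
      rw [Matrix.mul_smul, Matrix.smul_mul, Matrix.mul_one, hU]
      rw [← spectral_decomp hA]
    rw [he] at h2
    exact h2
  have := hpsd.dotProduct_mulVec_nonneg v
  simp only [Matrix.sub_mulVec, Matrix.smul_mulVec, Matrix.one_mulVec, dotProduct_sub,
    dotProduct_smul, star_trivial, smul_eq_mul] at this
  linarith



theorem sub_sq_posSemidef {n : ℕ} {S : Matrix (Fin n) (Fin n) ℝ} (hS : S.PosSemidef) {c : ℝ}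
    (hc : ((1 : Matrix (Fin n) (Fin n) ℝ) - c • S).PosDef) :
    (S - c • (S * S)).PosSemidef := by
  have hA : S.IsHermitian := hS.1
  set ev : Fin n → ℝ := hA.eigenvalues with hev
  set U : Matrix (Fin n) (Fin n) ℝ := (hA.eigenvectorUnitary : Matrix (Fin n) (Fin n) ℝ) with hUdef
  have hU : U * star U = 1 := (Matrix.mem_unitaryGroup_iff).mp hA.eigenvectorUnitary.2
  have hU' : star U * U = 1 := (Matrix.mem_unitaryGroup_iff').mp hA.eigenvectorUnitary.2
  have hle : ∀ i, c * ev i ≤ 1 := by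
    intro i
    obtain ⟨v, hv, hvec⟩ := eigenvalues_isEig hA i
    have h2 := hc.dotProduct_mulVec_pos hv
    rw [Matrix.sub_mulVec, Matrix.one_mulVec, Matrix.smul_mulVec, hvec] at h2
    simp only [dotProduct_sub, star_trivial, dotProduct_smul, smul_eq_mul, smul_smul] at h2
    have hvv : 0 < v ⬝ᵥ v := by
      obtain ⟨i0, hi0⟩ := Function.ne_iff.1 hv
      exact Finset.sum_pos' (fun j _ => mul_self_nonneg _)
        ⟨i0, Finset.mem_univ i0, mul_self_pos.2 hi0⟩
    nlinarith [h2, hvv]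
  have hnn : ∀ i, 0 ≤ ev i := hS.eigenvalues_nonneg
  have hdecomp : S = U * Matrix.diagonal ev * star U := spectral_decomp hA
  have hSS : S * S = U * Matrix.diagonal (fun i => ev i * ev i) * star U := by
    conv_lhs => rw [hdecomp]
    calc (U * Matrix.diagonal ev * star U) * (U * Matrix.diagonal ev * star U)
        = U * Matrix.diagonal ev * ((star U * U) * (Matrix.diagonal ev * star U)) := by
          noncomm_ring
      _ = U * (Matrix.diagonal ev * Matrix.diagonal ev) * star U := by
          rw [hU', one_mul]; noncomm_ring
      _ = U * Matrix.diagonal (fun i => ev i * ev i) * star U := by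
          rw [Matrix.diagonal_mul_diagonal]
  have hdiag : Matrix.diagonal ev - c • Matrix.diagonal (fun i => ev i * ev i)
      = Matrix.diagonal (fun i => ev i * (1 - c * ev i)) := by
    ext i j
    rcases eq_or_ne i j with h | h
    · subst h; simp [Matrix.diagonal_apply_eq]; ring
    · simp [Matrix.diagonal_apply_ne _ h]
  have key : S - c • (S * S)
      = U * Matrix.diagonal (fun i => ev i * (1 - c * ev i)) * star U := by
    conv_lhs => rw [hSS, hdecomp]
    have e1 : c • (U * Matrix.diagonal (fun i => ev i * ev i) * star U)
        = U * (c • Matrix.diagonal (fun i => ev i * ev i)) * star U := by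
      rw [Matrix.mul_smul, Matrix.smul_mul]
    rw [e1, ← Matrix.sub_mul, ← Matrix.mul_sub, hdiag]
  rw [key]
  have hd : (Matrix.diagonal fun i => ev i * (1 - c * ev i)).PosSemidef := by
    rw [Matrix.posSemidef_diagonal_iff]
    intro i
    have h1 := hle i
    have h2 := hnn i
    nlinarith
  have h3 := hd.mul_mul_conjTranspose_same U
  rw [Matrix.star_eq_conjTranspose]
  exact h3


variable {n : ℕ} {A B C : Matrix (Fin n) (Fin n) ℝ}

theorem mp_unique (hB : IsMoorePenrose A B) (hC : IsMoorePenrose A C) : B = C := by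
  obtain ⟨b1, b2, b3, b4⟩ := hB
  obtain ⟨c1, c2, c3, c4⟩ := hC
  have hAB : A * B = A * C := by
    have e1 : A * B = (A * C) * (A * B) := by
      conv_lhs => rw [← c1]
      noncomm_ring
    have e2 : (A * B) * (A * C) = A * C := by
      have e : (A * B) * (A * C) = (A * B * A) * C := by noncomm_ring
      rw [e, b1]
    rw [e1, ← c3, ← b3, ← Matrix.transpose_mul, e2, c3]
  have hBA : B * A = C * A := by
    have e1 : B * A = (B * A) * (C * A) := by
      conv_lhs => rw [← c1]
      noncomm_ring
    have e2 : (C * A) * (B * A) = C * A := by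
      have e : (C * A) * (B * A) = C * (A * B * A) := by noncomm_ring
      rw [e, b1]
    rw [e1, ← c4, ← b4, ← Matrix.transpose_mul, e2, c4]
  calc B = B * A * B := b2.symm
    _ = B * (A * C) := by rw [Matrix.mul_assoc, hAB]
    _ = (B * A) * C := by noncomm_ring
    _ = (C * A) * C := by rw [hBA]
    _ = C := c2

theorem mp_transpose (hA : Aᵀ = A) (h : IsMoorePenrose A B) : IsMoorePenrose A Bᵀ := by
  obtain ⟨b1, b2, b3, b4⟩ := h
  refine ⟨?_, ?_, ?_, ?_⟩
  · have := congrArg Matrix.transpose b1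
    simpa [Matrix.transpose_mul, hA, Matrix.mul_assoc] using this
  · have := congrArg Matrix.transpose b2
    simpa [Matrix.transpose_mul, hA, Matrix.mul_assoc] using this
  · have h1 : (A * Bᵀ)ᵀ = B * A := by simp [Matrix.transpose_mul, hA]
    have h2 : A * Bᵀ = B * A := by
      calc A * Bᵀ = Aᵀ * Bᵀ := by rw [hA]
        _ = (B * A)ᵀ := by rw [Matrix.transpose_mul]
        _ = B * A := b4
    rw [h1, h2]
  · have h1 : (Bᵀ * A)ᵀ = A * B := by simp [Matrix.transpose_mul, hA]
    have h2 : Bᵀ * A = A * B := by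
      calc Bᵀ * A = Bᵀ * Aᵀ := by rw [hA]
        _ = (A * B)ᵀ := by rw [Matrix.transpose_mul]
        _ = A * B := b3
    rw [h1, h2]

theorem mp_symm (hA : Aᵀ = A) (h : IsMoorePenrose A B) : Bᵀ = B :=
  (mp_unique (mp_transpose hA h) h)


theorem col_bound {α : Fin n → ℝ} (hα : ∀ i, 0 < α i) {B : Matrix (Fin n) (Fin n) ℝ}
    {lmax : ℝ}
    (hBtH : ((Matrix.diagonal fun i => (Real.sqrt (α i))⁻¹) * B *
      (Matrix.diagonal fun i => (Real.sqrt (α i))⁻¹)).IsHermitian)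
    (hm : ∀ i, hBtH.eigenvalues i ≤ lmax) (v : Fin n → ℝ) :
    v ⬝ᵥ (B *ᵥ v) ≤ lmax * (v ⬝ᵥ ((Matrix.diagonal α) *ᵥ v)) := by
  set Dinv : Matrix (Fin n) (Fin n) ℝ := Matrix.diagonal fun i => (Real.sqrt (α i))⁻¹ with hDinv
  set D : Matrix (Fin n) (Fin n) ℝ := Matrix.diagonal fun i => Real.sqrt (α i) with hD
  have hsq : ∀ i, Real.sqrt (α i) ≠ 0 := fun i => (Real.sqrt_pos.2 (hα i)).ne'
  have hDD : Dinv * D = 1 := by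
    rw [hDinv, hD, Matrix.diagonal_mul_diagonal, ← Matrix.diagonal_one]
    have e : (fun i => (Real.sqrt (α i))⁻¹ * Real.sqrt (α i)) = fun _ => (1:ℝ) := by
      funext i; exact inv_mul_cancel₀ (hsq i)
    rw [e]
  set z : Fin n → ℝ := D *ᵥ v with hz
  have h1 := quad_le_of_eig_le hBtH hm z
  have e1 : (Dinv * B * Dinv) *ᵥ z = Dinv *ᵥ (B *ᵥ v) := by
    have e : (Dinv * B * Dinv) * D = Dinv * B := by
      rw [Matrix.mul_assoc (Dinv * B) Dinv D, hDD, Matrix.mul_one]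
    rw [hz, Matrix.mulVec_mulVec, e, ← Matrix.mulVec_mulVec]
  have e2 : z ⬝ᵥ ((Dinv * B * Dinv) *ᵥ z) = v ⬝ᵥ (B *ᵥ v) := by
    rw [e1, hz]
    refine Finset.sum_congr rfl fun i _ => ?_
    rw [Matrix.mulVec_diagonal, Matrix.mulVec_diagonal]
    have hne := hsq i
    field_simp
  have e3 : z ⬝ᵥ z = v ⬝ᵥ ((Matrix.diagonal α) *ᵥ v) := by
    rw [hz]
    refine Finset.sum_congr rfl fun i _ => ?_
    rw [Matrix.mulVec_diagonal, Matrix.mulVec_diagonal]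
    have := Real.mul_self_sqrt (hα i).le
    ring_nf
    nlinarith [this]
  rw [← e2, ← e3]
  exact h1


end MatrixToolkit

theorem row_contract {E : Type*} [NormedAddCommGroup E] [InnerProductSpace ℝ E]
    {d e : E} {L μ a σ τ : ℝ}
    (gc : (1 / L) * ‖d‖ ^ 2 ≤ ⟪d, e⟫) (sm : μ * ‖e‖ ^ 2 ≤ ⟪d, e⟫)
    (hL : 0 < L) (ha : 0 < a) (haL : a * L ≤ σ) (hσ2 : σ ≤ 2)
    (hτ : τ ≤ μ * a) (hτ0 : 0 ≤ τ) (hμ : 0 < μ) :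
    ‖e - a • d‖ ^ 2 ≤ (1 - (2 - σ) * τ) * ‖e‖ ^ 2 := by
  have hexp : ‖e - a • d‖ ^ 2 = ‖e‖ ^ 2 - 2 * (a * ⟪d, e⟫) + a ^ 2 * ‖d‖ ^ 2 := by
    rw [norm_sub_sq_real, real_inner_smul_right, real_inner_comm, norm_smul,
      mul_pow, Real.norm_eq_abs, sq_abs]
    try ring
  have hE : (0:ℝ) ≤ ‖e‖ ^ 2 := sq_nonneg _
  have hie : 0 ≤ ⟪d, e⟫ := le_trans (by positivity) sm
  have hN : ‖d‖ ^ 2 ≤ L * ⟪d, e⟫ := by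
    have e0 : L * ((1 / L) * ‖d‖ ^ 2) = ‖d‖ ^ 2 := by field_simp
    calc ‖d‖ ^ 2 = L * ((1 / L) * ‖d‖ ^ 2) := e0.symm
      _ ≤ L * ⟪d, e⟫ := mul_le_mul_of_nonneg_left gc hL.le
  have hσ' : (0:ℝ) ≤ 2 - σ := by linarith
  have k1 : a ^ 2 * ‖d‖ ^ 2 ≤ a ^ 2 * (L * ⟪d, e⟫) :=
    mul_le_mul_of_nonneg_left hN (sq_nonneg a)
  have k2 : (2 - σ) * (τ * ‖e‖ ^ 2) ≤ (2 - σ) * ((μ * a) * ‖e‖ ^ 2) :=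
    mul_le_mul_of_nonneg_left (mul_le_mul_of_nonneg_right hτ hE) hσ'
  have k3 : ((2 - σ) * a) * (μ * ‖e‖ ^ 2) ≤ ((2 - σ) * a) * ⟪d, e⟫ :=
    mul_le_mul_of_nonneg_left sm (mul_nonneg hσ' ha.le)
  have k4 : a * ((2 - σ) * ⟪d, e⟫) ≤ a * ((2 - a * L) * ⟪d, e⟫) :=
    mul_le_mul_of_nonneg_left
      (mul_le_mul_of_nonneg_right (by linarith) hie) ha.le
  nlinarith [hexp, k1, k2, k3, k4]


theorem esum_sq {p : ℕ} (z : EuclideanSpace ℝ (Fin p)) : ‖z‖ ^ 2 = ∑ j, (z j) ^ 2 := by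
  rw [EuclideanSpace.norm_eq, Real.sq_sqrt (by positivity)]
  simp [Real.norm_eq_abs, sq_abs]

end NIDSAux


set_option maxHeartbeats 1000000 in
/-- Theorem 3.9: linear convergence of NIDS in the smooth strongly convex case. -/
theorem nids_linear_convergence
    {n p : ℕ} (hn : 0 < n)
    (W : Matrix (Fin n) (Fin n) ℝ) (hW : IsMixing W)
    (α L μ : Fin n → ℝ) (hα : ∀ i, 0 < α i) (hL : ∀ i, 0 < L i) (hμ : ∀ i, 0 < μ i)
    (c : ℝ) (hc : 0 < c)
    (hcW : ((1 : Matrix (Fin n) (Fin n) ℝ) -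
      c • ((Matrix.diagonal fun i => Real.sqrt (α i)) * (1 - W) *
        Matrix.diagonal fun i => Real.sqrt (α i))).PosDef)
    (B : Matrix (Fin n) (Fin n) ℝ) (hB : IsMoorePenrose (1 - W) B)
    (s : Fin n → EuclideanSpace ℝ (Fin p) → ℝ)
    (g : Fin n → EuclideanSpace ℝ (Fin p) → EuclideanSpace ℝ (Fin p))
    (hs : ∀ i, ConvexOn ℝ Set.univ (s i))
    (hg : ∀ i v, HasGradientAt (s i) (g i v) v)
    (hlip : ∀ i (v w : EuclideanSpace ℝ (Fin p)), ‖g i v - g i w‖ ≤ L i * ‖v - w‖)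
    (hsc : ∀ i, ConvexOn ℝ Set.univ
      fun v : EuclideanSpace ℝ (Fin p) => s i v - μ i / 2 * ‖v‖ ^ 2)
    (hss : (⨆ i, α i * L i) ≤ 2)
    (dk dk1 xk xk1 dstar xstar : Matrix (Fin n) (Fin p) ℝ)
    (hdu : dk1 = dk + c • ((1 - W) *
      (xk - Matrix.diagonal α * gradS g xk - Matrix.diagonal α * dk)))
    (hxu : xk1 = xk - Matrix.diagonal α * gradS g xk - Matrix.diagonal α * dk1)
    (hxs : (1 - W) * xstar = 0)
    (hds : gradS g xstar + dstar = 0)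
    (hdstar : InRange (1 - W) dstar) (hdk : InRange (1 - W) dk)
    (lmax : ℝ)
    (hl1 : IsEig ((Matrix.diagonal fun i => (Real.sqrt (α i))⁻¹) * B *
      Matrix.diagonal fun i => (Real.sqrt (α i))⁻¹) lmax)
    (hl2 : ∀ t, IsEig ((Matrix.diagonal fun i => (Real.sqrt (α i))⁻¹) * B *
      Matrix.diagonal fun i => (Real.sqrt (α i))⁻¹) t → t ≤ lmax) :
    nsq (Matrix.diagonal fun i => (α i)⁻¹) (xk1 - xstar) +
        nsq (c⁻¹ • B - Matrix.diagonal α + Matrix.diagonal α) (dk1 - dstar) ≤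
      max (1 - (2 - ⨆ i, α i * L i) * ⨅ i, μ i * α i) (1 - c / lmax) *
        (nsq (Matrix.diagonal fun i => (α i)⁻¹) (xk - xstar) +
          nsq (c⁻¹ • B - Matrix.diagonal α + Matrix.diagonal α) (dk - dstar)) := by
  classical
  have hn' : Nonempty (Fin n) := ⟨⟨0, hn⟩⟩
  set V : Matrix (Fin n) (Fin n) ℝ := 1 - W with hVdef
  set Lam : Matrix (Fin n) (Fin n) ℝ := Matrix.diagonal α with hLamdef
  set Linv : Matrix (Fin n) (Fin n) ℝ := Matrix.diagonal (fun i => (α i)⁻¹) with hLinvdef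
  set D : Matrix (Fin n) (Fin n) ℝ := Matrix.diagonal (fun i => Real.sqrt (α i)) with hDdef
  set Dinv : Matrix (Fin n) (Fin n) ℝ :=
    Matrix.diagonal (fun i => (Real.sqrt (α i))⁻¹) with hDinvdef
  have hαne : ∀ i, α i ≠ 0 := fun i => (hα i).ne'
  have hsqne : ∀ i, Real.sqrt (α i) ≠ 0 := fun i => (Real.sqrt_pos.2 (hα i)).ne'
  have hVt : Vᵀ = V := by rw [hVdef, Matrix.transpose_sub, Matrix.transpose_one, hW.1]
  have hLt : Lamᵀ = Lam := Matrix.diagonal_transpose _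
  have hLit : Linvᵀ = Linv := Matrix.diagonal_transpose _
  have hLL : Linv * Lam = 1 := by
    rw [hLinvdef, hLamdef, Matrix.diagonal_mul_diagonal, ← Matrix.diagonal_one]
    have e : (fun i => (α i)⁻¹ * α i) = fun _ => (1:ℝ) := by
      funext i; exact inv_mul_cancel₀ (hαne i)
    rw [e]
  have hLL2 : Lam * Linv = 1 := by
    rw [hLamdef, hLinvdef, Matrix.diagonal_mul_diagonal, ← Matrix.diagonal_one]
    have e : (fun i => α i * (α i)⁻¹) = fun _ => (1:ℝ) := by
      funext i; exact mul_inv_cancel₀ (hαne i)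
    rw [e]
  have hDD : Dinv * D = 1 := by
    rw [hDinvdef, hDdef, Matrix.diagonal_mul_diagonal, ← Matrix.diagonal_one]
    have e : (fun i => (Real.sqrt (α i))⁻¹ * Real.sqrt (α i)) = fun _ => (1:ℝ) := by
      funext i; exact inv_mul_cancel₀ (hsqne i)
    rw [e]
  have hDD2 : D * Dinv = 1 := by
    rw [hDdef, hDinvdef, Matrix.diagonal_mul_diagonal, ← Matrix.diagonal_one]
    have e : (fun i => Real.sqrt (α i) * (Real.sqrt (α i))⁻¹) = fun _ => (1:ℝ) := by
      funext i; exact mul_inv_cancel₀ (hsqne i)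
    rw [e]
  have hDsq : D * D = Lam := by
    rw [hDdef, hLamdef, Matrix.diagonal_mul_diagonal]
    have e : (fun i => Real.sqrt (α i) * Real.sqrt (α i)) = α := by
      funext i; exact Real.mul_self_sqrt (hα i).le
    rw [e]
  have hDt : Dᴴ = D := by
    rw [Matrix.conjTranspose_eq_transpose_of_trivial, hDdef, Matrix.diagonal_transpose]
  have hDit : Dinvᴴ = Dinv := by
    rw [Matrix.conjTranspose_eq_transpose_of_trivial, hDinvdef, Matrix.diagonal_transpose]
  have hVpsd : V.PosSemidef := by
    have h2 := hW.2.2.2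
    have he : (2 : ℝ) • (1 : Matrix (Fin n) (Fin n) ℝ) - (W + 1) = V := by
      rw [hVdef, two_smul]; abel
    rwa [he] at h2
  have hBt : Bᵀ = B := NIDSAux.mp_symm hVt hB
  have hBH : Bᴴ = B := by rw [Matrix.conjTranspose_eq_transpose_of_trivial, hBt]
  have hVBV : V * B * V = V := hB.1
  have hBpsd : B.PosSemidef := by
    have h3 := hVpsd.mul_mul_conjTranspose_same B
    rwa [hBH, hB.2.1] at h3
  have hLinvpsd : Linv.PosSemidef := by
    rw [hLinvdef, Matrix.posSemidef_diagonal_iff]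
    exact fun i => inv_nonneg.2 (hα i).le
  have hLampsd : Lam.PosSemidef := by
    rw [hLamdef, Matrix.posSemidef_diagonal_iff]
    exact fun i => (hα i).le
  have hbddA : BddAbove (Set.range fun i => α i * L i) := (Set.finite_range _).bddAbove
  have hbddB : BddBelow (Set.range fun i => μ i * α i) := (Set.finite_range _).bddBelow
  have hσle : ∀ i, α i * L i ≤ ⨆ i, α i * L i := fun i => le_ciSup hbddA i
  have hτle : ∀ i, (⨅ i, μ i * α i) ≤ μ i * α i := fun i => ciInf_le hbddB i
  have hτ0 : 0 ≤ ⨅ i, μ i * α i := le_ciInf fun i => (mul_pos (hμ i) (hα i)).le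
  obtain ⟨y1, hy1⟩ := hdk
  obtain ⟨y2, hy2⟩ := hdstar
  have hedy : dk - dstar = V * (y1 - y2) := by rw [hy1, hy2, Matrix.mul_sub]
  have hgstar : gradS g xstar = -dstar := eq_neg_of_add_eq_zero_left hds
  have hxq : xk - Lam * gradS g xk - Lam * dk
      = ((xk - xstar - Lam * (gradS g xk - gradS g xstar)) - Lam * (dk - dstar)) + xstar := by
    rw [hgstar]
    simp only [Matrix.mul_sub, Matrix.mul_add, Matrix.mul_neg, sub_neg_eq_add]
    abel
  have hVq : V * (xk - Lam * gradS g xk - Lam * dk)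
      = V * ((xk - xstar - Lam * (gradS g xk - gradS g xstar)) - Lam * (dk - dstar)) := by
    rw [hxq, Matrix.mul_add, hxs, add_zero]
  have hED : dk1 - dstar = (dk - dstar) + c •
      (V * ((xk - xstar - Lam * (gradS g xk - gradS g xstar)) - Lam * (dk - dstar))) := by
    rw [hdu, hVq]; abel
  have hdk1 : dk1 = dstar + ((dk - dstar) + c •
      (V * ((xk - xstar - Lam * (gradS g xk - gradS g xstar)) - Lam * (dk - dstar)))) := by
    rw [← hED]; abel
  have hEX : xk1 - xstar
      = ((xk - xstar - Lam * (gradS g xk - gradS g xstar)) - Lam * (dk - dstar)) - c •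
        (Lam * (V * ((xk - xstar - Lam * (gradS g xk - gradS g xstar))
          - Lam * (dk - dstar)))) := by
    rw [hxu, hdk1, hgstar]
    simp only [Matrix.mul_add, Matrix.mul_sub, Matrix.mul_neg, sub_neg_eq_add, Matrix.mul_smul]
    abel
  have hwt : c⁻¹ • B - Lam + Lam = c⁻¹ • B := by abel
  have hnsqw : ∀ x : Matrix (Fin n) (Fin p) ℝ, nsq (c⁻¹ • B) x = c⁻¹ * nsq B x := by
    intro x
    rw [NIDSAux.nsq_eq, NIDSAux.nsq_eq, Matrix.smul_mul, NIDSAux.iprod_smul_right]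
  rw [hwt, hEX, hED, hnsqw, hnsqw]
  rw [NIDSAux.key_identity V B Lam Linv hVt hBt hLt hLit hLL hLL2 hVBV c hc.ne' (dk - dstar)
    (xk - xstar - Lam * (gradS g xk - gradS g xstar)) (y1 - y2) hedy]
  have I1 : nsq Linv (xk - xstar - Lam * (gradS g xk - gradS g xstar))
      ≤ (1 - (2 - ⨆ i, α i * L i) * ⨅ i, μ i * α i) * nsq Linv (xk - xstar) := by
    rw [hLinvdef, NIDSAux.nsq_diagonal_eq, NIDSAux.nsq_diagonal_eq, Finset.mul_sum]
    apply Finset.sum_le_sum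
    intro i _
    set u : EuclideanSpace ℝ (Fin p) := (WithLp.equiv 2 (Fin p → ℝ)).symm (xk i) with hu
    set w : EuclideanSpace ℝ (Fin p) := (WithLp.equiv 2 (Fin p → ℝ)).symm (xstar i) with hw
    have hgc := NIDSAux.coco (hs i) (hg i) (hL i) (hlip i) u w
    have hsm := NIDSAux.strong_mono (hg i) (hsc i) u w
    have hrc := NIDSAux.row_contract hgc hsm (hL i) (hα i) (hσle i) hss (hτle i) hτ0 (hμ i)
    have hb1 : ∑ j, ((xk - xstar - Lam * (gradS g xk - gradS g xstar)) i j) ^ 2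
        = ‖(u - w) - α i • (g i u - g i w)‖ ^ 2 := by
      rw [NIDSAux.esum_sq]
      refine Finset.sum_congr rfl fun j _ => ?_
      congr 1
      show xk i j - xstar i j - (Lam * (gradS g xk - gradS g xstar)) i j
        = (u j - w j) - α i * ((g i u) j - (g i w) j)
      rw [hLamdef, Matrix.diagonal_mul]
      rfl
    have hb2 : ∑ j, ((xk - xstar) i j) ^ 2 = ‖u - w‖ ^ 2 := by
      rw [NIDSAux.esum_sq]
      rfl
    rw [hb1, hb2]
    calc (α i)⁻¹ * ‖(u - w) - α i • (g i u - g i w)‖ ^ 2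
        ≤ (α i)⁻¹ * ((1 - (2 - ⨆ i, α i * L i) * ⨅ i, μ i * α i) * ‖u - w‖ ^ 2) :=
          mul_le_mul_of_nonneg_left hrc (inv_nonneg.2 (hα i).le)
      _ = (1 - (2 - ⨆ i, α i * L i) * ⨅ i, μ i * α i) * ((α i)⁻¹ * ‖u - w‖ ^ 2) := by ring
  have hNB : 0 ≤ nsq B (dk - dstar) := NIDSAux.nsq_nonneg hBpsd _
  have hNL : 0 ≤ nsq Lam (dk - dstar) := NIDSAux.nsq_nonneg hLampsd _
  have hNX : 0 ≤ nsq Linv (xk - xstar) := NIDSAux.nsq_nonneg hLinvpsd _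
  have I2 : c / lmax * (c⁻¹ * nsq B (dk - dstar)) ≤ nsq Lam (dk - dstar) := by
    rcases le_or_gt lmax 0 with hl | hl
    · have h0 : c / lmax ≤ 0 := div_nonpos_of_nonneg_of_nonpos hc.le hl
      have h1 : 0 ≤ c⁻¹ * nsq B (dk - dstar) := mul_nonneg (inv_nonneg.2 hc.le) hNB
      nlinarith [mul_nonneg (neg_nonneg.2 h0) h1]
    · have hBtH : (Dinv * B * Dinv).IsHermitian := by
        show (Dinv * B * Dinv)ᴴ = Dinv * B * Dinv
        rw [Matrix.conjTranspose_eq_transpose_of_trivial, Matrix.transpose_mul,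
          Matrix.transpose_mul, hBt, hDinvdef, Matrix.diagonal_transpose, ← Matrix.mul_assoc]
      have hmB : ∀ i, hBtH.eigenvalues i ≤ lmax := fun i =>
        hl2 _ (NIDSAux.eigenvalues_isEig hBtH i)
      have hqB : nsq B (dk - dstar) ≤ lmax * nsq Lam (dk - dstar) := by
        rw [NIDSAux.nsq_eq_sum_cols, NIDSAux.nsq_eq_sum_cols, Finset.mul_sum]
        refine Finset.sum_le_sum fun j _ => ?_
        have hcb := NIDSAux.col_bound hα hBtH hmB (fun i => (dk - dstar) i j)
        rw [hLamdef]
        exact hcb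
      rw [div_mul_eq_mul_div, div_le_iff₀ hl]
      have e0 : c * (c⁻¹ * nsq B (dk - dstar)) = nsq B (dk - dstar) := by
        field_simp
      rw [e0]
      linarith [hqB]
  have I3 : 0 ≤ iprod ((xk - xstar - Lam * (gradS g xk - gradS g xstar)) - Lam * (dk - dstar))
      ((V - c • (V * Lam * V)) *
        ((xk - xstar - Lam * (gradS g xk - gradS g xstar)) - Lam * (dk - dstar))) := by
    have hS : (D * V * D).PosSemidef := by
      have h4 := hVpsd.mul_mul_conjTranspose_same D
      rwa [hDt] at h4
    have hc1 : ((1 : Matrix (Fin n) (Fin n) ℝ) - c • (D * V * D)).PosDef := hcW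
    have hsub := NIDSAux.sub_sq_posSemidef hS hc1
    have hcong := hsub.mul_mul_conjTranspose_same Dinv
    rw [hDit] at hcong
    have hEq : Dinv * ((D * V * D) - c • ((D * V * D) * (D * V * D))) * Dinv
        = V - c • (V * Lam * V) := by
      rw [Matrix.mul_sub, Matrix.sub_mul, Matrix.mul_smul, Matrix.smul_mul]
      congr 1
      · calc Dinv * (D * V * D) * Dinv = (Dinv * D) * V * (D * Dinv) := by noncomm_ring
          _ = V := by rw [hDD, hDD2, Matrix.one_mul, Matrix.mul_one]
      · congr 1
        calc Dinv * ((D * V * D) * (D * V * D)) * Dinv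
            = (Dinv * D) * V * (D * D) * V * (D * Dinv) := by noncomm_ring
          _ = V * Lam * V := by rw [hDD, hDD2, hDsq, Matrix.one_mul, Matrix.mul_one]
    rw [hEq] at hcong
    rw [← NIDSAux.nsq_eq]
    exact NIDSAux.nsq_nonneg hcong _
  have m1 : (1 - (2 - ⨆ i, α i * L i) * ⨅ i, μ i * α i) * nsq Linv (xk - xstar)
      ≤ max (1 - (2 - ⨆ i, α i * L i) * ⨅ i, μ i * α i) (1 - c / lmax) *
        nsq Linv (xk - xstar) :=
    mul_le_mul_of_nonneg_right (le_max_left _ _) hNX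
  have m2 : (1 - c / lmax) * (c⁻¹ * nsq B (dk - dstar))
      ≤ max (1 - (2 - ⨆ i, α i * L i) * ⨅ i, μ i * α i) (1 - c / lmax) *
        (c⁻¹ * nsq B (dk - dstar)) :=
    mul_le_mul_of_nonneg_right (le_max_right _ _) (mul_nonneg (inv_nonneg.2 hc.le) hNB)
  have hcI3 : 0 ≤ c * iprod
      ((xk - xstar - Lam * (gradS g xk - gradS g xstar)) - Lam * (dk - dstar))
      ((V - c • (V * Lam * V)) *
        ((xk - xstar - Lam * (gradS g xk - gradS g xstar)) - Lam * (dk - dstar))) :=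
    mul_nonneg hc.le I3
  linarith [I1, I2, m1, m2, hcI3]
end

section
/- (Lemma 3.1, fixed point characterization.) Let (d*, z*) ∈ ℝ^{n×p} × ℝ^{n×p} and let x* be a minimizer over ℝ^{n×p} of x ↦ r(x) + ½‖x − z*‖²_{Λ⁻¹}. Then (d*, z*) is a fixed point of the NIDS iteration if and only if there exists q* ∈ ∂r(x*) such that d* + ∇s(x*) + q* = 0, (I − W)x* = 0, and z* = x* + Λ q*. -/
open Matrix Filter Topology

section aux
variable {n p : ℕ}

lemma iprodQ_diag (w : Fin n → ℝ) (x y : Matrix (Fin n) (Fin p) ℝ) :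
    iprodQ (Matrix.diagonal w) x y = ∑ j, ∑ i, w i * x i j * y i j := by
  unfold iprodQ
  rw [Matrix.trace]
  simp only [Matrix.diag_apply, Matrix.mul_apply, Matrix.transpose_apply, Matrix.diagonal_apply,
    mul_ite, mul_zero, ite_mul, zero_mul, Finset.sum_ite_eq, Finset.sum_ite_eq',
    Finset.mem_univ, if_true]
  refine Finset.sum_congr rfl fun j _ => Finset.sum_congr rfl fun i _ => by ring

lemma iprod_diag_mul (w : Fin n → ℝ) (a b : Matrix (Fin n) (Fin p) ℝ) :
    iprod (Matrix.diagonal w * a) b = ∑ j, ∑ i, w i * a i j * b i j := by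
  unfold iprod
  rw [Matrix.trace]
  simp only [Matrix.diag_apply, Matrix.mul_apply, Matrix.transpose_apply, Matrix.diagonal_apply,
    mul_ite, mul_zero, ite_mul, zero_mul, Finset.sum_ite_eq, Finset.sum_ite_eq',
    Finset.mem_univ, if_true]

lemma nsq_shift (w : Fin n → ℝ) (a b : Matrix (Fin n) (Fin p) ℝ) (t : ℝ) :
    nsq (Matrix.diagonal w) (a + t • b) =
      nsq (Matrix.diagonal w) a + 2 * t * (∑ j, ∑ i, w i * a i j * b i j)
        + t ^ 2 * nsq (Matrix.diagonal w) b := by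
  unfold nsq
  rw [iprodQ_diag, iprodQ_diag, iprodQ_diag]
  simp only [Finset.mul_sum, ← Finset.sum_add_distrib]
  refine Finset.sum_congr rfl fun j _ => Finset.sum_congr rfl fun i _ => ?_
  simp only [Matrix.add_apply, Matrix.smul_apply, smul_eq_mul]
  ring

lemma nsq_nonneg (w : Fin n → ℝ) (hw : ∀ i, 0 < w i) (v : Matrix (Fin n) (Fin p) ℝ) :
    0 ≤ nsq (Matrix.diagonal w) v := by
  rw [nsq, iprodQ_diag]
  refine Finset.sum_nonneg fun j _ => Finset.sum_nonneg fun i _ => ?_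
  nlinarith [hw i, sq_nonneg (v i j)]

lemma nsq_nonpos_eq_zero (w : Fin n → ℝ) (hw : ∀ i, 0 < w i)
    (v : Matrix (Fin n) (Fin p) ℝ) (h : nsq (Matrix.diagonal w) v ≤ 0) : v = 0 := by
  rw [nsq, iprodQ_diag] at h
  have hterm : ∀ j ∈ Finset.univ, (0:ℝ) ≤ ∑ i, w i * v i j * v i j :=
    fun j _ => Finset.sum_nonneg fun i _ => by nlinarith [hw i, sq_nonneg (v i j)]
  have hsum0 : ∑ j, ∑ i, w i * v i j * v i j = 0 :=
    le_antisymm h (Finset.sum_nonneg hterm)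
  have hj := (Finset.sum_eq_zero_iff_of_nonneg hterm).mp hsum0
  ext i j
  have hi := (Finset.sum_eq_zero_iff_of_nonneg
    (fun i _ => by nlinarith [hw i, sq_nonneg (v i j)] : ∀ i ∈ Finset.univ, (0:ℝ) ≤ w i * v i j * v i j)).mp
    (hj j (Finset.mem_univ j)) i (Finset.mem_univ i)
  simp only [Matrix.zero_apply]
  rw [mul_assoc] at hi
  rcases mul_eq_zero.mp hi with h | h
  · exact absurd h (hw i).ne'
  · exact mul_self_eq_zero.mp h
end aux

lemma rsum_convex {n p : ℕ} (r : Fin n → (Fin p → ℝ) → ℝ) (hr : ∀ i, ConvexOn ℝ Set.univ (r i))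
    (x y : Matrix (Fin n) (Fin p) ℝ) (a b : ℝ) (ha : 0 ≤ a) (hb : 0 ≤ b) (hab : a + b = 1) :
    rsum r (a • x + b • y) ≤ a * rsum r x + b * rsum r y := by
  unfold rsum
  rw [Finset.mul_sum, Finset.mul_sum, ← Finset.sum_add_distrib]
  refine Finset.sum_le_sum fun i _ => ?_
  have h := (hr i).2 (Set.mem_univ (x i)) (Set.mem_univ (y i)) ha hb hab
  have hrow : (a • x + b • y) i = a • x i + b • y i := rfl
  rw [hrow]
  simpa using h

lemma prox_to_subgrad {n p : ℕ} (r : Fin n → (Fin p → ℝ) → ℝ)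
    (hr : ∀ i, ConvexOn ℝ Set.univ (r i)) (α : Fin n → ℝ) (hα : ∀ i, 0 < α i)
    (z x : Matrix (Fin n) (Fin p) ℝ) (h : ProxMin r α z x) :
    IsSubgrad r x ((Matrix.diagonal fun i => (α i)⁻¹) * (z - x)) := by
  intro y
  set w : Fin n → ℝ := fun i => (α i)⁻¹ with hw
  have hwpos : ∀ i, 0 < w i := fun i => inv_pos.mpr (hα i)
  by_contra hcon
  push_neg at hcon
  set S : ℝ := ∑ j, ∑ i, w i * (x - z) i j * (y - x) i j with hSdef
  have hS : iprod (Matrix.diagonal w * (z - x)) (y - x) = -S := by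
    rw [iprod_diag_mul, hSdef, ← Finset.sum_neg_distrib]
    refine Finset.sum_congr rfl fun j _ => ?_
    rw [← Finset.sum_neg_distrib]
    refine Finset.sum_congr rfl fun i _ => ?_
    simp only [Matrix.sub_apply]
    ring
  set C : ℝ := nsq (Matrix.diagonal w) (y - x) with hCdef
  have hC0 : 0 ≤ C := nsq_nonneg w hwpos _
  have hε0 : 0 < rsum r x - S - rsum r y := by
    rw [hS] at hcon; linarith
  set t : ℝ := min 1 ((rsum r x - S - rsum r y) / (C + (rsum r x - S - rsum r y))) with htdef
  have ht0 : 0 < t := lt_min one_pos (div_pos hε0 (by linarith))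
  have ht1 : t ≤ 1 := min_le_left _ _
  have htle : t * (C + (rsum r x - S - rsum r y)) ≤ rsum r x - S - rsum r y :=
    (le_div_iff₀ (by linarith)).mp (min_le_right _ _)
  have e1 : x + t • (y - x) - z = (x - z) + t • (y - x) := by module
  have key := h (x + t • (y - x))
  rw [e1, nsq_shift, ← hSdef, ← hCdef] at key
  have e2 : x + t • (y - x) = (1 - t) • x + t • y := by module
  have hconv : rsum r (x + t • (y - x)) ≤ (1 - t) * rsum r x + t * rsum r y := by
    rw [e2]; exact rsum_convex r hr x y (1 - t) t (by linarith) ht0.le (by ring)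
  have h' : t * (rsum r x - S - rsum r y) ≤ t * (t * C / 2) := by nlinarith [key, hconv]
  have h1 : rsum r x - S - rsum r y ≤ t * C / 2 := (mul_le_mul_iff_right₀ ht0).mp h'
  nlinarith [mul_pos ht0 hε0]

lemma subgrad_to_prox {n p : ℕ} (r : Fin n → (Fin p → ℝ) → ℝ) (α : Fin n → ℝ)
    (hα : ∀ i, 0 < α i) (z x : Matrix (Fin n) (Fin p) ℝ)
    (h : IsSubgrad r x ((Matrix.diagonal fun i => (α i)⁻¹) * (z - x))) :
    ProxMin r α z x := by
  intro u
  set w : Fin n → ℝ := fun i => (α i)⁻¹ with hw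
  have hwpos : ∀ i, 0 < w i := fun i => inv_pos.mpr (hα i)
  have hs := h u
  set S : ℝ := ∑ j, ∑ i, w i * (x - z) i j * (u - x) i j with hSdef
  have hS : iprod (Matrix.diagonal w * (z - x)) (u - x) = -S := by
    rw [iprod_diag_mul, hSdef, ← Finset.sum_neg_distrib]
    refine Finset.sum_congr rfl fun j _ => ?_
    rw [← Finset.sum_neg_distrib]
    refine Finset.sum_congr rfl fun i _ => ?_
    simp only [Matrix.sub_apply]
    ring
  have e1 : u - z = (x - z) + (1 : ℝ) • (u - x) := by module
  have hexp : nsq (Matrix.diagonal w) (u - z) =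
      nsq (Matrix.diagonal w) (x - z) + 2 * S + nsq (Matrix.diagonal w) (u - x) := by
    rw [e1, nsq_shift, ← hSdef]; ring
  have hnn : 0 ≤ nsq (Matrix.diagonal w) (u - x) := nsq_nonneg w hwpos _
  rw [hS] at hs
  rw [show (Matrix.diagonal fun i => (α i)⁻¹) = Matrix.diagonal w from rfl]
  linarith

lemma prox_unique {n p : ℕ} (r : Fin n → (Fin p → ℝ) → ℝ)
    (hr : ∀ i, ConvexOn ℝ Set.univ (r i)) (α : Fin n → ℝ) (hα : ∀ i, 0 < α i)
    (z x1 x2 : Matrix (Fin n) (Fin p) ℝ) (h1 : ProxMin r α z x1) (h2 : ProxMin r α z x2) :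
    x1 = x2 := by
  set w : Fin n → ℝ := fun i => (α i)⁻¹ with hw
  have hwpos : ∀ i, 0 < w i := fun i => inv_pos.mpr (hα i)
  have s1 := prox_to_subgrad r hr α hα z x1 h1 x2
  have s2 := prox_to_subgrad r hr α hα z x2 h2 x1
  have hcomb : iprod (Matrix.diagonal w * (z - x1)) (x2 - x1)
      + iprod (Matrix.diagonal w * (z - x2)) (x1 - x2) = nsq (Matrix.diagonal w) (x2 - x1) := by
    rw [iprod_diag_mul, iprod_diag_mul, nsq, iprodQ_diag, ← Finset.sum_add_distrib]
    refine Finset.sum_congr rfl fun j _ => ?_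
    rw [← Finset.sum_add_distrib]
    refine Finset.sum_congr rfl fun i _ => ?_
    simp only [Matrix.sub_apply]
    ring
  have hle : nsq (Matrix.diagonal w) (x2 - x1) ≤ 0 := by
    rw [← hcomb]; linarith [s1, s2]
  have := nsq_nonpos_eq_zero w hwpos _ hle
  exact (sub_eq_zero.mp this).symm

/-- Lemma 3.1: characterization of the fixed points of the NIDS iteration. -/
theorem nids_fixed_point_characterization
    {n p : ℕ}
    (W : Matrix (Fin n) (Fin n) ℝ) (hW : IsMixing W)
    (α : Fin n → ℝ) (hα : ∀ i, 0 < α i) (c : ℝ) (hc : 0 < c)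
    (hcW : ((1 : Matrix (Fin n) (Fin n) ℝ) -
      c • ((Matrix.diagonal fun i => Real.sqrt (α i)) * (1 - W) *
        Matrix.diagonal fun i => Real.sqrt (α i))).PosDef)
    (s : Fin n → EuclideanSpace ℝ (Fin p) → ℝ)
    (g : Fin n → EuclideanSpace ℝ (Fin p) → EuclideanSpace ℝ (Fin p))
    (hs : ∀ i, ConvexOn ℝ Set.univ (s i))
    (hg : ∀ i v, HasGradientAt (s i) (g i v) v)
    (r : Fin n → (Fin p → ℝ) → ℝ) (hr : ∀ i, ConvexOn ℝ Set.univ (r i))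
    (dstar zstar xstar : Matrix (Fin n) (Fin p) ℝ)
    (hxstar : ProxMin r α zstar xstar) :
    NIDSFixed W α c g r dstar zstar ↔
      ∃ q : Matrix (Fin n) (Fin p) ℝ, IsSubgrad r xstar q ∧
        dstar + gradS g xstar + q = 0 ∧ (1 - W) * xstar = 0 ∧
        zstar = xstar + Matrix.diagonal α * q := by
  have hQΛ : (Matrix.diagonal fun i => (α i)⁻¹) * Matrix.diagonal α = 1 := by
    rw [Matrix.diagonal_mul_diagonal]
    convert Matrix.diagonal_one using 2
    ext i
    exact inv_mul_cancel₀ (hα i).ne'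
  have hΛQ : Matrix.diagonal α * (Matrix.diagonal fun i => (α i)⁻¹) = 1 := by
    rw [Matrix.diagonal_mul_diagonal]
    convert Matrix.diagonal_one using 2
    ext i
    exact mul_inv_cancel₀ (hα i).ne'
  constructor
  · rintro ⟨x, hprox, hd, hz⟩
    have h0 : c • ((1 - W) * ((2 : ℝ) • x - zstar
        - Matrix.diagonal α * gradS g x - Matrix.diagonal α * dstar)) = 0 :=
      (left_eq_add.mp hd)
    have h0' : (1 - W) * ((2 : ℝ) • x - zstar
        - Matrix.diagonal α * gradS g x - Matrix.diagonal α * dstar) = 0 := by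
      rcases smul_eq_zero.mp h0 with h | h
      · exact absurd h hc.ne'
      · exact h
    have h1 : Matrix.diagonal α * gradS g x + Matrix.diagonal α * dstar = x - zstar := by
      rw [hz]; abel
    have hM : (2 : ℝ) • x - zstar - Matrix.diagonal α * gradS g x
        - Matrix.diagonal α * dstar = x := by
      rw [show (2 : ℝ) • x - zstar - Matrix.diagonal α * gradS g x - Matrix.diagonal α * dstar
          = (2 : ℝ) • x - zstar - (Matrix.diagonal α * gradS g x + Matrix.diagonal α * dstar)
        from by abel, h1]
      module
    rw [hM] at h0'
    have hxx : x = xstar := prox_unique r hr α hα zstar x xstar hprox hxstar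
    subst hxx
    refine ⟨(Matrix.diagonal fun i => (α i)⁻¹) * (zstar - x), 
      prox_to_subgrad r hr α hα zstar x hxstar, ?_, h0', ?_⟩
    · have hΛq : Matrix.diagonal α * ((Matrix.diagonal fun i => (α i)⁻¹) * (zstar - x))
          = zstar - x := by
        rw [← Matrix.mul_assoc, hΛQ, Matrix.one_mul]
      have h2 : Matrix.diagonal α * (dstar + gradS g x
          + (Matrix.diagonal fun i => (α i)⁻¹) * (zstar - x)) = 0 := by
        rw [Matrix.mul_add, Matrix.mul_add, hΛq,
          show Matrix.diagonal α * dstar + Matrix.diagonal α * gradS g x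
            = Matrix.diagonal α * gradS g x + Matrix.diagonal α * dstar from add_comm _ _, h1]
        abel
      have h3 := congrArg (fun m => (Matrix.diagonal fun i => (α i)⁻¹) * m) h2
      simpa [← Matrix.mul_assoc, hQΛ, Matrix.mul_zero] using h3
    · rw [← Matrix.mul_assoc, hΛQ, Matrix.one_mul]
      abel
  · rintro ⟨q, hsub, hdgq, hWx, hzq⟩
    have hq : q = -(dstar + gradS g xstar) :=
      eq_neg_of_add_eq_zero_left (by rw [← hdgq]; abel)
    refine ⟨xstar, hxstar, ?_, ?_⟩
    · have hM : (2 : ℝ) • xstar - zstar - Matrix.diagonal α * gradS g xstar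
          - Matrix.diagonal α * dstar = xstar := by
        rw [hzq, hq]
        simp only [Matrix.mul_neg, Matrix.mul_add]
        module
      rw [hM, hWx, smul_zero, add_zero]
    · rw [hzq, hq]
      simp only [Matrix.mul_neg, Matrix.mul_add]
      module
end

section
/- (Lemma 3.2, optimality condition.) A matrix x* ∈ ℝ^{n×p} is consensual with common row x̄ ∈ ℝ^p (i.e., every row of x* equals x̄) where x̄ minimizes Σ_{i=1}^n (s_i(x) + r_i(x)) over ℝ^p, if and only if there exist p* ∈ ℝ^{n×p} and q* ∈ ∂r(x*) such that (I − W)p* + ∇s(x*) + q* = 0 and (I − W)x* = 0. Moreover, in that case, setting d* = (I − W)p* and z* = x* + Λ q*, the pair (d*, z*) is a fixed point of the NIDS iteration. -/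
open Matrix Filter Topology

section HB
variable {E : Type*} [AddCommGroup E] [Module ℝ E] {Φ : E → ℝ}

lemma quot_mono (hΦ : ConvexOn ℝ Set.univ Φ) (x h : E) {s t : ℝ} (hs : 0 < s) (hst : s ≤ t) :
    (Φ (x + s • h) - Φ x) / s ≤ (Φ (x + t • h) - Φ x) / t := by
  have ht : 0 < t := hs.trans_le hst
  have ha : (0:ℝ) ≤ 1 - s/t := by
    rw [sub_nonneg]; exact div_le_one_of_le₀ hst ht.le
  have hb : (0:ℝ) ≤ s/t := by positivity
  have hab : (1 - s/t) + s/t = 1 := by ring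
  have hcomb : Φ ((1 - s/t) • x + (s/t) • (x + t • h))
      ≤ (1 - s/t) • Φ x + (s/t) • Φ (x + t • h) :=
    hΦ.2 (Set.mem_univ x) (Set.mem_univ (x + t • h)) ha hb hab
  have hpt : (1 - s/t) • x + (s/t) • (x + t • h) = x + s • h := by
    have hh : (s/t) * t = s := div_mul_cancel₀ s ht.ne'
    rw [smul_add, smul_smul, hh]
    module
  rw [hpt, smul_eq_mul, smul_eq_mul] at hcomb
  rw [div_le_div_iff₀ hs ht]
  have h2 := mul_le_mul_of_nonneg_left hcomb ht.le
  have e1 : t * ((1 - s / t) * Φ x + s / t * Φ (x + t • h))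
      = (t - s) * Φ x + s * Φ (x + t • h) := by
    field_simp
  rw [e1] at h2
  nlinarith [h2]

lemma quot_lb (hΦ : ConvexOn ℝ Set.univ Φ) (x h : E) {t : ℝ} (ht : 0 < t) :
    Φ x - Φ (x - h) ≤ (Φ (x + t • h) - Φ x) / t := by
  have h1 : (0:ℝ) < t + 1 := by linarith
  have ha : (0:ℝ) ≤ t/(t+1) := by positivity
  have hb : (0:ℝ) ≤ 1/(t+1) := by positivity
  have hab : t/(t+1) + 1/(t+1) = 1 := by field_simp
  have hcomb : Φ ((t/(t+1)) • (x - h) + (1/(t+1)) • (x + t • h))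
      ≤ (t/(t+1)) • Φ (x - h) + (1/(t+1)) • Φ (x + t • h) :=
    hΦ.2 (Set.mem_univ _) (Set.mem_univ _) ha hb hab
  have hpt : (t/(t+1)) • (x - h) + (1/(t+1)) • (x + t • h) = x := by
    have h3 : (1/(t+1)) * t = t/(t+1) := by ring
    rw [smul_sub, smul_add, smul_smul, h3]
    match_scalars <;> field_simp <;> ring
  rw [hpt, smul_eq_mul, smul_eq_mul] at hcomb
  rw [le_div_iff₀ ht]
  have := mul_le_mul_of_nonneg_left hcomb h1.le
  have ht1 : t + 1 ≠ 0 := h1.ne'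
  field_simp at this
  nlinarith [this]

lemma exists_linear_subgrad (hΦ : ConvexOn ℝ Set.univ Φ) (C : Submodule ℝ E) (x : E)
    (hmin : ∀ v ∈ C, Φ x ≤ Φ (x + v)) :
    ∃ ℓ : E →ₗ[ℝ] ℝ, (∀ v ∈ C, ℓ v = 0) ∧ ∀ y, Φ x + ℓ (y - x) ≤ Φ y := by
  set Q : E → Set ℝ := fun h => (fun t => (Φ (x + t • h) - Φ x) / t) '' Set.Ioi (0:ℝ) with hQ
  have hne : ∀ h, (Q h).Nonempty := fun h => ⟨_, ⟨1, Set.mem_Ioi.2 one_pos, rfl⟩⟩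
  have hbdd : ∀ h, BddBelow (Q h) := by
    intro h
    refine ⟨Φ x - Φ (x - h), ?_⟩
    rintro b ⟨t, ht, rfl⟩
    exact quot_lb hΦ x h ht
  set σ : E → ℝ := fun h => sInf (Q h) with hσ
  have hle : ∀ h, ∀ t : ℝ, 0 < t → σ h ≤ (Φ (x + t • h) - Φ x) / t := by
    intro h t ht
    exact csInf_le (hbdd h) ⟨t, ht, rfl⟩
  have Nhom : ∀ c : ℝ, 0 < c → ∀ h, σ (c • h) = c * σ h := by
    intro c hc h
    apply le_antisymm
    · apply le_of_forall_pos_le_add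
      intro ε hε
      have hεc : 0 < ε / c := div_pos hε hc
      obtain ⟨q, ⟨t, ht, rfl⟩, hq⟩ := exists_lt_of_csInf_lt (hne h)
        (show σ h < σ h + ε / c by linarith)
      have ht' : (0:ℝ) < t := ht
      dsimp only at hq
      have htc : 0 < t / c := div_pos ht' hc
      have key : σ (c • h) ≤ (Φ (x + (t/c) • (c • h)) - Φ x) / (t/c) := hle _ _ htc
      have heq : (t/c) • (c • h) = t • h := by
        rw [smul_smul, div_mul_cancel₀ t hc.ne']
      rw [heq] at key
      have hrw : (Φ (x + t • h) - Φ x) / (t/c) = c * ((Φ (x + t • h) - Φ x) / t) := by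
        field_simp
      rw [hrw] at key
      calc σ (c • h) ≤ c * ((Φ (x + t • h) - Φ x) / t) := key
        _ ≤ c * (σ h + ε / c) := mul_le_mul_of_nonneg_left hq.le hc.le
        _ = c * σ h + ε := by field_simp
    · apply le_csInf (hne _)
      rintro b ⟨t, ht, rfl⟩
      have ht' : (0:ℝ) < t := ht
      have htc : 0 < t * c := mul_pos ht' hc
      show c * σ h ≤ (Φ (x + t • (c • h)) - Φ x) / t
      have heq : t • (c • h) = (t * c) • h := smul_smul t c h
      rw [heq]
      have hrw : (Φ (x + (t*c) • h) - Φ x) / t = c * ((Φ (x + (t*c) • h) - Φ x) / (t*c)) := by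
        field_simp
      rw [hrw]
      exact mul_le_mul_of_nonneg_left (hle h _ htc) hc.le
  have Nadd : ∀ h₁ h₂, σ (h₁ + h₂) ≤ σ h₁ + σ h₂ := by
    intro h₁ h₂
    apply le_of_forall_pos_le_add
    intro ε hε
    obtain ⟨q₁, ⟨t₁, ht₁, rfl⟩, hq₁⟩ := exists_lt_of_csInf_lt (hne h₁)
      (show σ h₁ < σ h₁ + ε / 2 by linarith)
    obtain ⟨q₂, ⟨t₂, ht₂, rfl⟩, hq₂⟩ := exists_lt_of_csInf_lt (hne h₂)
      (show σ h₂ < σ h₂ + ε / 2 by linarith)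
    dsimp only at hq₁ hq₂
    have ht₁' : (0:ℝ) < t₁ := ht₁
    have ht₂' : (0:ℝ) < t₂ := ht₂
    set t := min t₁ t₂ / 2 with htdef
    have ht : 0 < t := by
      have := lt_min ht₁' ht₂'; rw [htdef]; linarith
    have h2t : (0:ℝ) < 2 * t := by linarith
    have h2t₁ : 2 * t ≤ t₁ := by
      have := min_le_left t₁ t₂; rw [htdef]; linarith
    have h2t₂ : 2 * t ≤ t₂ := by
      have := min_le_right t₁ t₂; rw [htdef]; linarith
    have hmid : Φ ((1/2 : ℝ) • (x + (2*t) • h₁) + (1/2 : ℝ) • (x + (2*t) • h₂))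
        ≤ (1/2 : ℝ) • Φ (x + (2*t) • h₁) + (1/2 : ℝ) • Φ (x + (2*t) • h₂) :=
      hΦ.2 (Set.mem_univ _) (Set.mem_univ _) (by norm_num) (by norm_num) (by norm_num)
    have hpt : (1/2 : ℝ) • (x + (2*t) • h₁) + (1/2 : ℝ) • (x + (2*t) • h₂)
        = x + t • (h₁ + h₂) := by
      rw [smul_add, smul_add, smul_smul, smul_smul]
      have e1 : (1/2 : ℝ) * (2*t) = t := by ring
      rw [e1, smul_add]
      module
    rw [hpt, smul_eq_mul, smul_eq_mul] at hmid
    have key : (Φ (x + t • (h₁ + h₂)) - Φ x) / t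
        ≤ (Φ (x + (2*t) • h₁) - Φ x) / (2*t) + (Φ (x + (2*t) • h₂) - Φ x) / (2*t) := by
      rw [← add_div, div_le_div_iff₀ ht h2t]
      nlinarith [hmid]
    have m₁ := quot_mono hΦ x h₁ h2t h2t₁
    have m₂ := quot_mono hΦ x h₂ h2t h2t₂
    calc σ (h₁ + h₂) ≤ (Φ (x + t • (h₁ + h₂)) - Φ x) / t := hle _ _ ht
      _ ≤ (Φ (x + t₁ • h₁) - Φ x) / t₁ + (Φ (x + t₂ • h₂) - Φ x) / t₂ :=
          key.trans (add_le_add m₁ m₂)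
      _ ≤ σ h₁ + σ h₂ + ε := by linarith
  set f : E →ₗ.[ℝ] ℝ := ⟨C, 0⟩ with hf
  have hf0 : ∀ v : f.domain, f v = 0 := fun v => rfl
  have hfle : ∀ v : f.domain, f v ≤ σ v := by
    intro v
    rw [hf0]
    apply le_csInf (hne _)
    rintro b ⟨t, ht, rfl⟩
    have ht' : (0:ℝ) < t := ht
    have hmem : t • (v : E) ∈ C := C.smul_mem t v.2
    have := hmin _ hmem
    exact div_nonneg (by linarith) ht'.le
  obtain ⟨g, hg0, hgle⟩ := exists_extension_of_le_sublinear f σ Nhom Nadd hfle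
  refine ⟨g, ?_, ?_⟩
  · intro v hv
    have := hg0 ⟨v, hv⟩
    rw [hf0] at this
    exact this
  · intro y
    have h1 : g (y - x) ≤ σ (y - x) := hgle _
    have h2 : σ (y - x) ≤ (Φ (x + (1:ℝ) • (y - x)) - Φ x) / 1 := hle _ 1 one_pos
    simp only [one_smul, div_one, add_sub_cancel] at h2
    linarith

end HB


section Grad
variable {F : Type*} [NormedAddCommGroup F] [InnerProductSpace ℝ F] [CompleteSpace F]

lemma hasDerivAt_line {f : F → ℝ} {d x : F} (hf : HasGradientAt f d x) (h : F) :
    HasDerivAt (fun t : ℝ => f (x + t • h)) (inner ℝ d h : ℝ) 0 := by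
  have hline : HasDerivAt (fun t : ℝ => x + t • h) h 0 := by
    simpa using ((hasDerivAt_id (0:ℝ)).smul_const h).const_add x
  have hfd : HasFDerivAt f (InnerProductSpace.toDual ℝ F d : F →L[ℝ] ℝ) x := hf
  have hfd' : HasFDerivAt f (InnerProductSpace.toDual ℝ F d : F →L[ℝ] ℝ)
      ((fun t : ℝ => x + t • h) 0) := by simpa using hfd
  have := hfd'.comp_hasDerivAt 0 hline
  exact this

lemma tendsto_slope_line {f : F → ℝ} {d x : F} (hf : HasGradientAt f d x) (h : F) :
    Tendsto (fun t : ℝ => (f (x + t • h) - f x) / t) (𝓝[>] (0:ℝ)) (𝓝 (inner ℝ d h : ℝ)) := by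
  have h1 := hasDerivAt_iff_tendsto_slope.mp (hasDerivAt_line hf h)
  have h2 : Tendsto (slope (fun t : ℝ => f (x + t • h)) 0) (𝓝[>] (0:ℝ)) (𝓝 (inner ℝ d h : ℝ)) :=
    h1.mono_left (nhdsWithin_mono 0 (fun t ht => by
      simp only [Set.mem_compl_iff, Set.mem_singleton_iff]
      exact ne_of_gt ht))
  refine h2.congr (fun t => ?_)
  rw [slope_def_field]
  simp

lemma grad_subgrad {f : F → ℝ} (hf : ConvexOn ℝ Set.univ f) {d x : F}
    (hd : HasGradientAt f d x) (y : F) : f x + (inner ℝ d (y - x) : ℝ) ≤ f y := by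
  set h := y - x with hh
  have hev : ∀ᶠ t in 𝓝[>] (0:ℝ), (f (x + t • h) - f x) / t ≤ f y - f x := by
    filter_upwards [Ioc_mem_nhdsGT_of_mem (Set.left_mem_Ico.2 one_pos)] with t ht
    have := quot_mono hf x h ht.1 ht.2
    simpa [hh] using this
  have := le_of_tendsto (tendsto_slope_line hd h) hev
  linarith

lemma neg_grad_subgrad_of_min {S R : F → ℝ} (hR : ConvexOn ℝ Set.univ R)
    {D x : F} (hS : HasGradientAt S D x)
    (hmin : ∀ u, S x + R x ≤ S u + R u) (y : F) :
    R x - (inner ℝ D (y - x) : ℝ) ≤ R y := by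
  set h := y - x with hh
  have hev : ∀ᶠ t in 𝓝[>] (0:ℝ), -((S (x + t • h) - S x) / t) ≤ R y - R x := by
    filter_upwards [Ioc_mem_nhdsGT_of_mem (Set.left_mem_Ico.2 one_pos)] with t ht
    have hconv : R (x + t • h) ≤ (1 - t) * R x + t * R y := by
      have := hR.2 (Set.mem_univ x) (Set.mem_univ y) (by linarith [ht.2] : (0:ℝ) ≤ 1 - t)
        ht.1.le (by ring)
      have hpt : (1 - t) • x + t • y = x + t • h := by rw [hh]; module
      rw [hpt] at this
      simpa using this
    have hm := hmin (x + t • h)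
    have hkey : -(R y - R x) ≤ (S (x + t • h) - S x) / t := by
      rw [le_div_iff₀ ht.1]
      nlinarith [ht.1, hconv, hm]
    linarith
  have htend : Tendsto (fun t : ℝ => -((S (x + t • h) - S x) / t)) (𝓝[>] (0:ℝ))
      (𝓝 (-(inner ℝ D h : ℝ))) := (tendsto_slope_line hS h).neg
  have := le_of_tendsto htend hev
  linarith

end Grad

section Range

lemma exists_mulvec_solution {n : ℕ} {W : Matrix (Fin n) (Fin n) ℝ} (hsym : Wᵀ = W)
    (hker : ∀ v : Fin n → ℝ, (1 - W) *ᵥ v = 0 ↔ ∃ t : ℝ, v = fun _ => t)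
    (b : Fin n → ℝ) (hb : ∑ i, b i = 0) : ∃ v, (1 - W) *ᵥ v = b := by
  obtain rfl | hn := Nat.eq_zero_or_pos n
  · exact ⟨0, by funext i; exact i.elim0⟩
  set L := Matrix.mulVecLin (1 - W) with hL
  have hkerL : LinearMap.ker L = Submodule.span ℝ {(fun _ => 1 : Fin n → ℝ)} := by
    ext v
    rw [LinearMap.mem_ker, Submodule.mem_span_singleton]
    constructor
    · intro hv
      obtain ⟨t, ht⟩ := (hker v).1 hv
      exact ⟨t, by funext i; simp [ht]⟩
    · rintro ⟨t, rfl⟩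
      apply (hker _).2 ⟨t, by funext i; simp⟩
  have hone : (fun _ => 1 : Fin n → ℝ) ≠ 0 := by
    intro hc
    have := congrFun hc ⟨0, hn⟩
    norm_num at this
  have hkrank : Module.finrank ℝ (LinearMap.ker L) = 1 := by
    rw [hkerL]; exact finrank_span_singleton hone
  have hrn : Module.finrank ℝ (LinearMap.range L) + 1 = n := by
    have := LinearMap.finrank_range_add_finrank_ker L
    rw [hkrank] at this
    simpa using this
  -- the hyperplane of zero-sum vectors
  set φ : (Fin n → ℝ) →ₗ[ℝ] ℝ := ∑ i, LinearMap.proj i with hφ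
  have hφapp : ∀ v : Fin n → ℝ, φ v = ∑ i, v i := by
    intro v; simp [hφ, LinearMap.sum_apply]
  have hcolsum : ∀ k, ∑ i, (1 - W) i k = 0 := by
    intro k
    have h1 : (1 - W) *ᵥ (fun _ => (1:ℝ)) = 0 := (hker _).2 ⟨1, rfl⟩
    have h2 := congrFun h1 k
    have hT : ∀ i, (1 - W) i k = (1 - W) k i := by
      intro i
      have : (1 - W)ᵀ = 1 - W := by
        rw [Matrix.transpose_sub, Matrix.transpose_one, hsym]
      calc (1 - W) i k = (1 - W)ᵀ k i := (Matrix.transpose_apply _ _ _).symm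
        _ = (1 - W) k i := by rw [this]
    simp only [Matrix.mulVec, dotProduct, mul_one, Pi.zero_apply] at h2
    rw [Finset.sum_congr rfl (fun i _ => hT i)]
    exact h2
  have hrange_le : LinearMap.range L ≤ LinearMap.ker φ := by
    rintro c ⟨v, rfl⟩
    rw [LinearMap.mem_ker, hφapp]
    have : ∀ i, (L v) i = ∑ k, (1 - W) i k * v k := by
      intro i; rfl
    calc ∑ i, (L v) i = ∑ i, ∑ k, (1 - W) i k * v k := by
          exact Finset.sum_congr rfl (fun i _ => this i)
      _ = ∑ k, (∑ i, (1 - W) i k) * v k := by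
          rw [Finset.sum_comm]
          exact Finset.sum_congr rfl (fun k _ => by rw [Finset.sum_mul])
      _ = 0 := Finset.sum_eq_zero (fun k _ => by rw [hcolsum k, zero_mul])
  have hφtop : LinearMap.ker φ ≠ ⊤ := by
    intro hc
    have : φ (fun _ => 1) = 0 := by
      rw [← LinearMap.mem_ker, hc]; trivial
    rw [hφapp] at this
    simp at this
    omega
  have hklt : Module.finrank ℝ (LinearMap.ker φ) < n := by
    have := Submodule.finrank_lt hφtop
    simpa using this
  have heq : LinearMap.range L = LinearMap.ker φ := by
    apply Submodule.eq_of_le_of_finrank_le hrange_le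
    omega
  have hbmem : b ∈ LinearMap.range L := by
    rw [heq, LinearMap.mem_ker, hφapp]
    exact hb
  obtain ⟨v, hv⟩ := hbmem
  exact ⟨v, hv⟩

end Range

section MatrixHelpers

variable {n p : ℕ}

lemma iprod_eq_sum (a b : Matrix (Fin n) (Fin p) ℝ) :
    iprod a b = ∑ i, ∑ j, a i j * b i j := by
  simp only [iprod, Matrix.trace, Matrix.diag, Matrix.mul_apply, Matrix.transpose_apply]
  exact Finset.sum_comm

lemma iprod_add_left (a b c : Matrix (Fin n) (Fin p) ℝ) :
    iprod (a + b) c = iprod a c + iprod b c := by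
  simp [iprod_eq_sum, Matrix.add_apply, add_mul, Finset.sum_add_distrib]

lemma iprod_sub_left (a b c : Matrix (Fin n) (Fin p) ℝ) :
    iprod (a - b) c = iprod a c - iprod b c := by
  simp [iprod_eq_sum, Matrix.sub_apply, sub_mul, Finset.sum_sub_distrib]

lemma iprod_neg_left (a c : Matrix (Fin n) (Fin p) ℝ) :
    iprod (-a) c = -iprod a c := by
  simp [iprod_eq_sum, Matrix.neg_apply, Finset.sum_neg_distrib]

lemma iprod_add_right (a b c : Matrix (Fin n) (Fin p) ℝ) :
    iprod a (b + c) = iprod a b + iprod a c := by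
  simp [iprod_eq_sum, Matrix.add_apply, mul_add, Finset.sum_add_distrib]

lemma iprod_sub_right (a b c : Matrix (Fin n) (Fin p) ℝ) :
    iprod a (b - c) = iprod a b - iprod a c := by
  simp [iprod_eq_sum, Matrix.sub_apply, mul_sub, Finset.sum_sub_distrib]

lemma iprod_smul_right (t : ℝ) (a b : Matrix (Fin n) (Fin p) ℝ) :
    iprod a (t • b) = t * iprod a b := by
  simp [iprod_eq_sum, Matrix.smul_apply, Finset.mul_sum, smul_eq_mul]
  congr 1; funext i; congr 1; funext j; ring

lemma iprod_mul_left (A : Matrix (Fin n) (Fin n) ℝ) (b c : Matrix (Fin n) (Fin p) ℝ) :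
    iprod (A * b) c = iprod b (Aᵀ * c) := by
  simp only [iprod, Matrix.transpose_mul]
  rw [Matrix.mul_assoc]

lemma iprod_zero_right (a : Matrix (Fin n) (Fin p) ℝ) : iprod a 0 = 0 := by
  simp [iprod_eq_sum]

lemma nsq_diag (β : Fin n → ℝ) (m : Matrix (Fin n) (Fin p) ℝ) :
    nsq (Matrix.diagonal β) m = ∑ i, ∑ j, β i * (m i j)^2 := by
  have hent : ∀ j : Fin p, (mᵀ * Matrix.diagonal β * m) j j = ∑ i, β i * (m i j)^2 := by
    intro j
    rw [Matrix.mul_apply]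
    refine Finset.sum_congr rfl fun i _ => ?_
    rw [Matrix.mul_diagonal, Matrix.transpose_apply]
    ring
  simp only [nsq, iprodQ, Matrix.trace, Matrix.diag]
  rw [Finset.sum_congr rfl fun j _ => hent j]
  exact Finset.sum_comm

lemma gradS_apply (g : Fin n → EuclideanSpace ℝ (Fin p) → EuclideanSpace ℝ (Fin p))
    (x : Matrix (Fin n) (Fin p) ℝ) (i : Fin n) (j : Fin p) :
    gradS g x i j = g i ((WithLp.equiv 2 (Fin p → ℝ)).symm (x i)) j := rfl

end MatrixHelpers

/-- Lemma 3.2 -/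
theorem nids_optimality_condition
    {n p : ℕ}
    (W : Matrix (Fin n) (Fin n) ℝ) (hW : IsMixing W)
    (α : Fin n → ℝ) (hα : ∀ i, 0 < α i) (c : ℝ) (hc : 0 < c)
    (hcW : ((1 : Matrix (Fin n) (Fin n) ℝ) -
      c • ((Matrix.diagonal fun i => Real.sqrt (α i)) * (1 - W) *
        Matrix.diagonal fun i => Real.sqrt (α i))).PosDef)
    (s : Fin n → EuclideanSpace ℝ (Fin p) → ℝ)
    (g : Fin n → EuclideanSpace ℝ (Fin p) → EuclideanSpace ℝ (Fin p))
    (hs : ∀ i, ConvexOn ℝ Set.univ (s i))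
    (hg : ∀ i v, HasGradientAt (s i) (g i v) v)
    (r : Fin n → (Fin p → ℝ) → ℝ) (hr : ∀ i, ConvexOn ℝ Set.univ (r i))
    (xstar : Matrix (Fin n) (Fin p) ℝ) :
    ((∃ xbar : Fin p → ℝ, (∀ i, xstar i = xbar) ∧
        ∀ u : Fin p → ℝ,
          (∑ i, (s i ((WithLp.equiv 2 (Fin p → ℝ)).symm xbar) + r i xbar)) ≤
            ∑ i, (s i ((WithLp.equiv 2 (Fin p → ℝ)).symm u) + r i u)) ↔
      ∃ pstar q : Matrix (Fin n) (Fin p) ℝ, IsSubgrad r xstar q ∧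
        (1 - W) * pstar + gradS g xstar + q = 0 ∧ (1 - W) * xstar = 0) ∧
    ∀ pstar q : Matrix (Fin n) (Fin p) ℝ, IsSubgrad r xstar q →
      (1 - W) * pstar + gradS g xstar + q = 0 → (1 - W) * xstar = 0 →
      NIDSFixed W α c g r ((1 - W) * pstar) (xstar + Matrix.diagonal α * q) := by
  obtain ⟨hsym, hker, _, _⟩ := hW
  have hrowsum : ∀ i, ∑ k, (1 - W) i k = 0 := by
    intro i
    have h1 : (1 - W) *ᵥ (fun _ => (1:ℝ)) = 0 := (hker _).2 ⟨1, rfl⟩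
    have h2 := congrFun h1 i
    simpa [Matrix.mulVec, dotProduct] using h2
  set G : Matrix (Fin n) (Fin p) ℝ := gradS g xstar with hG
  set Λ : Matrix (Fin n) (Fin n) ℝ := Matrix.diagonal α with hΛ
  constructor
  · constructor
    · -- forward direction
      rintro ⟨xbar, hrow, hminb⟩
      set e := (WithLp.equiv 2 (Fin p → ℝ)).symm with he
      set ew := WithLp.equiv 2 (Fin p → ℝ) with hew
      set xb : EuclideanSpace ℝ (Fin p) := e xbar with hxb
      have hRconv : ConvexOn ℝ Set.univ
          (fun uE : EuclideanSpace ℝ (Fin p) => ∑ i, r i (ew uE)) := by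
        refine ⟨convex_univ, ?_⟩
        intro uE _ vE _ a b ha hb hab
        have hcomb : ∀ i : Fin n,
            r i (ew (a • uE + b • vE)) ≤ a • r i (ew uE) + b • r i (ew vE) := by
          intro i
          have hpt : ew (a • uE + b • vE) = a • ew uE + b • ew vE := rfl
          rw [hpt]
          exact (hr i).2 (Set.mem_univ _) (Set.mem_univ _) ha hb hab
        calc (∑ i, r i (ew (a • uE + b • vE)))
            ≤ ∑ i, (a • r i (ew uE) + b • r i (ew vE)) :=
              Finset.sum_le_sum fun i _ => hcomb i
          _ = a • ∑ i, r i (ew uE) + b • ∑ i, r i (ew vE) := by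
              rw [Finset.sum_add_distrib, Finset.smul_sum, Finset.smul_sum]
      have hD : HasGradientAt (fun uE : EuclideanSpace ℝ (Fin p) => ∑ i, s i uE)
          (∑ i, g i xb) xb := by
        have h1 : HasFDerivAt (fun uE : EuclideanSpace ℝ (Fin p) => ∑ i, s i uE)
            (∑ i, (InnerProductSpace.toDual ℝ (EuclideanSpace ℝ (Fin p)) (g i xb) :
              EuclideanSpace ℝ (Fin p) →L[ℝ] ℝ)) xb :=
          HasFDerivAt.fun_sum (fun i _ => hg i xb)
        have h2 : (∑ i, (InnerProductSpace.toDual ℝ (EuclideanSpace ℝ (Fin p)) (g i xb) :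
              EuclideanSpace ℝ (Fin p) →L[ℝ] ℝ))
            = InnerProductSpace.toDual ℝ (EuclideanSpace ℝ (Fin p)) (∑ i, g i xb) :=
          (map_sum _ _ _).symm
        rw [h2] at h1
        exact h1
      have hminE : ∀ uE : EuclideanSpace ℝ (Fin p),
          (fun uE : EuclideanSpace ℝ (Fin p) => ∑ i, s i uE) xb
            + (fun uE : EuclideanSpace ℝ (Fin p) => ∑ i, r i (ew uE)) xb
          ≤ (fun uE : EuclideanSpace ℝ (Fin p) => ∑ i, s i uE) uE
            + (fun uE : EuclideanSpace ℝ (Fin p) => ∑ i, r i (ew uE)) uE := by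
        intro uE
        have h1 := hminb (ew uE)
        rw [Finset.sum_add_distrib, Finset.sum_add_distrib] at h1
        have h2 : e (ew uE) = uE := (WithLp.equiv 2 (Fin p → ℝ)).symm_apply_apply uE
        have h3 : ew xb = xbar := (WithLp.equiv 2 (Fin p → ℝ)).apply_symm_apply xbar
        simp only []
        rw [h3]
        rw [h2] at h1
        exact h1
      have hsub : ∀ y : EuclideanSpace ℝ (Fin p),
          (∑ i, r i (ew xb)) - (inner ℝ (∑ i, g i xb) (y - xb) : ℝ) ≤ ∑ i, r i (ew y) :=
        fun y => neg_grad_subgrad_of_min hRconv hD hminE y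
      set Φ : Matrix (Fin n) (Fin p) ℝ → ℝ := fun y => rsum r y + iprod G y with hΦ
      have hΦconv : ConvexOn ℝ Set.univ Φ := by
        refine ⟨convex_univ, ?_⟩
        intro y _ z _ a b ha hb hab
        simp only [hΦ, smul_eq_mul]
        have h1 : rsum r (a • y + b • z) ≤ a * rsum r y + b * rsum r z := by
          unfold rsum
          rw [Finset.mul_sum, Finset.mul_sum, ← Finset.sum_add_distrib]
          refine Finset.sum_le_sum fun i _ => ?_
          have hpt : (a • y + b • z) i = a • y i + b • z i := rfl
          rw [hpt]
          exact (hr i).2 (Set.mem_univ _) (Set.mem_univ _) ha hb hab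
        have h2 : iprod G (a • y + b • z) = a * iprod G y + b * iprod G z := by
          rw [iprod_add_right, iprod_smul_right, iprod_smul_right]
        linarith
      set C : Submodule ℝ (Matrix (Fin n) (Fin p) ℝ) :=
        { carrier := {y | ∃ w : Fin p → ℝ, y = Matrix.of fun _ => w}
          add_mem' := by rintro y z ⟨w1, rfl⟩ ⟨w2, rfl⟩; exact ⟨w1 + w2, rfl⟩
          zero_mem' := ⟨0, rfl⟩
          smul_mem' := by rintro a y ⟨w, rfl⟩; exact ⟨a • w, rfl⟩ } with hC
      have hrxstar : rsum r xstar = ∑ i, r i xbar :=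
        Finset.sum_congr rfl fun i _ => by rw [hrow i]
      have hminC : ∀ v ∈ C, Φ xstar ≤ Φ (xstar + v) := by
        rintro v ⟨w, rfl⟩
        have hr1 : rsum r (xstar + Matrix.of fun _ => w) = ∑ i, r i (xbar + w) := by
          unfold rsum
          refine Finset.sum_congr rfl fun i _ => ?_
          congr 1
          show xstar i + w = xbar + w
          rw [hrow i]
        have hip : iprod G (Matrix.of fun _ => w) = (inner ℝ (∑ i, g i xb) (e w) : ℝ) := by
          rw [sum_inner, iprod_eq_sum]
          refine Finset.sum_congr rfl fun i _ => ?_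
          rw [PiLp.inner_apply]
          refine Finset.sum_congr rfl fun j _ => ?_
          rw [RCLike.inner_apply', conj_trivial]
          have hGij : G i j = g i xb j := by
            rw [hG, gradS_apply, hrow i, ← he, ← hxb]
          rw [hGij]
          rfl
        have hsub' := hsub (xb + e w)
        have h4 : ew (xb + e w) = xbar + w := by
          have : ew (xb + e w) = ew xb + ew (e w) := rfl
          rw [this, (WithLp.equiv 2 (Fin p → ℝ)).apply_symm_apply,
            (WithLp.equiv 2 (Fin p → ℝ)).apply_symm_apply]
        have h5 : (xb + e w) - xb = e w := add_sub_cancel_left xb (e w)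
        have h6 : ew xb = xbar := (WithLp.equiv 2 (Fin p → ℝ)).apply_symm_apply xbar
        rw [h4, h5, h6] at hsub'
        have h7 : iprod G (xstar + Matrix.of fun _ => w)
            = iprod G xstar + iprod G (Matrix.of fun _ => w) := iprod_add_right _ _ _
        simp only [hΦ]
        rw [hr1, h7, hrxstar, hip]
        linarith [hsub']
      obtain ⟨ℓ, hℓ0, hℓsub⟩ := exists_linear_subgrad hΦconv C xstar hminC
      set qt : Matrix (Fin n) (Fin p) ℝ :=
        Matrix.of fun i j => ℓ (Matrix.single i j 1) with hqt
      have hrep : ∀ m : Matrix (Fin n) (Fin p) ℝ, iprod qt m = ℓ m := by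
        intro m
        conv_rhs => rw [Matrix.matrix_eq_sum_single m]
        rw [map_sum, iprod_eq_sum]
        refine Finset.sum_congr rfl fun i _ => ?_
        rw [map_sum]
        refine Finset.sum_congr rfl fun j _ => ?_
        have h1 : Matrix.single i j (m i j) = m i j • Matrix.single i j 1 := by
          rw [Matrix.smul_single, smul_eq_mul, mul_one]
        rw [h1, _root_.map_smul, smul_eq_mul]
        have h2 : qt i j = ℓ (Matrix.single i j 1) := rfl
        rw [h2]
        ring
      have hcol0 : ∀ j : Fin p, ∑ i, qt i j = 0 := by
        intro j
        have hmem : (Matrix.of fun _ j' => if j' = j then (1:ℝ) else 0) ∈ C :=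
          ⟨fun j' => if j' = j then 1 else 0, rfl⟩
        have h1 := hℓ0 _ hmem
        rw [← hrep, iprod_eq_sum] at h1
        have h2 : ∀ i : Fin n, (∑ j', qt i j' *
            (Matrix.of fun _ j' => if j' = j then (1:ℝ) else 0) i j') = qt i j := by
          intro i
          simp [Matrix.of_apply, mul_ite, mul_one, mul_zero]
        rw [Finset.sum_congr rfl fun i _ => h2 i] at h1
        exact h1
      have hvex : ∀ j : Fin p, ∃ v : Fin n → ℝ, (1 - W) *ᵥ v = fun i => -(qt i j) :=
        fun j => exists_mulvec_solution hsym hker _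
          (by simpa using hcol0 j)
      choose v hv using hvex
      set P : Matrix (Fin n) (Fin p) ℝ := Matrix.of fun i j => v j i with hP
      refine ⟨P, qt - G, ?_, ?_, ?_⟩
      · intro y
        have h1 := hℓsub y
        rw [← hrep] at h1
        simp only [hΦ] at h1
        have h2 : iprod (qt - G) (y - xstar)
            = iprod qt (y - xstar) - (iprod G y - iprod G xstar) := by
          rw [iprod_sub_left]
          congr 1
          exact iprod_sub_right _ _ _
        linarith [h1, h2.le, h2.ge]
      · ext i j
        rw [Matrix.add_apply, Matrix.add_apply, Matrix.sub_apply, Matrix.zero_apply,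
          Matrix.mul_apply]
        simp only [hP, Matrix.of_apply]
        have h1 : ∑ k, (1 - W) i k * v j k = -(qt i j) := by
          have h2 := congrFun (hv j) i
          simpa [Matrix.mulVec, dotProduct] using h2
        rw [h1]
        ring
      · ext i j
        rw [Matrix.mul_apply, Matrix.zero_apply]
        have hcst : ∀ k, xstar k j = xbar j := fun k => congrFun (hrow k) j
        calc ∑ k, (1 - W) i k * xstar k j = ∑ k, (1 - W) i k * xbar j :=
              Finset.sum_congr rfl fun k _ => by rw [hcst k]
          _ = (∑ k, (1 - W) i k) * xbar j := (Finset.sum_mul _ _ _).symm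
          _ = 0 := by rw [hrowsum i, zero_mul]
    · -- backward direction
      rintro ⟨pstar, q, hq, heq, hx0⟩
      -- extract xbar
      have hcol : ∀ j : Fin p, ∃ t : ℝ, (fun i => xstar i j) = fun _ => t := by
        intro j
        apply (hker _).1
        funext i
        have h2 := congrFun (congrFun hx0 i) j
        simpa [Matrix.mul_apply, Matrix.mulVec, dotProduct] using h2
      choose t ht using hcol
      have hxs : ∀ i, xstar i = t := by
        intro i; funext j; exact congrFun (ht j) i
      refine ⟨t, hxs, ?_⟩
      intro u
      set Y : Matrix (Fin n) (Fin p) ℝ := Matrix.of fun _ => u with hY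
      set e := (WithLp.equiv 2 (Fin p → ℝ)).symm with he
      -- subgradient bound for r
      have hq' := hq Y
      have hrY : rsum r Y = ∑ i, r i u := rfl
      have hrx : rsum r xstar = ∑ i, r i t := by
        unfold rsum
        exact Finset.sum_congr rfl fun i _ => by rw [hxs i]
      -- gradient bound for s
      have hgi : ∀ i : Fin n,
          s i (e t) + (inner ℝ (g i (e t)) (e u - e t) : ℝ) ≤ s i (e u) :=
        fun i => grad_subgrad (hs i) (hg i (e t)) (e u)
      have hinner : ∀ i : Fin n, (inner ℝ (g i (e t)) (e u - e t) : ℝ)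
          = ∑ j, G i j * (u j - t j) := by
        intro i
        rw [PiLp.inner_apply]
        refine Finset.sum_congr rfl fun j _ => ?_
        have h1 : G i j = g i (e t) j := by
          rw [hG, gradS_apply, hxs i, he]
        rw [RCLike.inner_apply', conj_trivial, h1]
        have h2 : (e u - e t) j = u j - t j := rfl
        rw [h2]
      -- sum of inner terms equals iprod G (Y - xstar)
      have hGsum : ∑ i, ∑ j, G i j * (u j - t j) = iprod G (Y - xstar) := by
        rw [iprod_eq_sum]
        refine Finset.sum_congr rfl fun i _ => Finset.sum_congr rfl fun j _ => ?_
        congr 1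
        rw [Matrix.sub_apply, show xstar i j = t j from congrFun (hxs i) j]
        rfl
      -- the cross term vanishes
      have hzero : iprod G (Y - xstar) + iprod q (Y - xstar) = 0 := by
        have hGq : G + q = -((1 - W) * pstar) := by
          have h0 : (1 - W) * pstar + (G + q) = 0 := by
            rw [← add_assoc]; exact heq
          exact eq_neg_of_add_eq_zero_right h0
        have h1 : iprod (G + q) (Y - xstar) = iprod G (Y - xstar) + iprod q (Y - xstar) :=
          iprod_add_left _ _ _
        rw [← h1, hGq, iprod_neg_left, iprod_mul_left]
        have hWY : (1 - W) * (Y - xstar) = 0 := by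
          rw [Matrix.mul_sub, hx0, sub_zero]
          ext i j
          simp only [Matrix.mul_apply, hY, Matrix.of_apply, Matrix.zero_apply]
          rw [← Finset.sum_mul, hrowsum i, zero_mul]
        have hsym2 : (1 - W)ᵀ = 1 - W := by
          rw [Matrix.transpose_sub, Matrix.transpose_one, hsym]
        rw [hsym2, hWY, iprod_zero_right, neg_zero]
      -- combine
      have hsum1 : ∑ i, s i (e t) + iprod G (Y - xstar) ≤ ∑ i, s i (e u) := by
        have := Finset.sum_le_sum (fun i (_ : i ∈ Finset.univ) => hgi i)
        rw [Finset.sum_add_distrib] at this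
        have h2 : ∑ i, (inner ℝ (g i (e t)) (e u - e t) : ℝ) = iprod G (Y - xstar) := by
          rw [← hGsum]
          exact Finset.sum_congr rfl fun i _ => hinner i
        linarith [this, h2.le, h2.ge]
      rw [hrY, hrx] at hq'
      rw [Finset.sum_add_distrib, Finset.sum_add_distrib]
      linarith [hq', hsum1, hzero]
  · -- part 2: fixed point
    intro pstar q hq heq hx0
    refine ⟨xstar, ?_, ?_, ?_⟩
    · -- ProxMin
      intro u
      set z : Matrix (Fin n) (Fin p) ℝ := xstar + Λ * q with hz
      have hxz : ∀ i j, (xstar - z) i j = -(α i * q i j) := by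
        intro i j
        simp [hz, hΛ, Matrix.sub_apply, Matrix.add_apply, Matrix.diagonal_mul]
      have huz : ∀ i j, (u - z) i j = (u i j - xstar i j) - α i * q i j := by
        intro i j
        simp [hz, hΛ, Matrix.sub_apply, Matrix.add_apply, Matrix.diagonal_mul]
        ring
      have e1 : nsq (Matrix.diagonal fun i => (α i)⁻¹) (xstar - z)
          = ∑ i, ∑ j, α i * (q i j)^2 := by
        rw [nsq_diag]
        refine Finset.sum_congr rfl fun i _ => Finset.sum_congr rfl fun j _ => ?_
        have hinv : (α i)⁻¹ * α i = 1 := inv_mul_cancel₀ (hα i).ne'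
        rw [hxz i j, neg_sq, mul_pow]
        rw [show (α i)⁻¹ * ((α i)^2 * (q i j)^2)
          = ((α i)⁻¹ * α i) * (α i * (q i j)^2) by ring, hinv, one_mul]
      have e2 : nsq (Matrix.diagonal fun i => (α i)⁻¹) (u - z)
          = ∑ i, ∑ j, (α i)⁻¹ * ((u i j - xstar i j) - α i * q i j)^2 := by
        rw [nsq_diag]
        refine Finset.sum_congr rfl fun i _ => Finset.sum_congr rfl fun j _ => ?_
        rw [huz i j]
      have e3 : iprod q (u - xstar) = ∑ i, ∑ j, q i j * (u i j - xstar i j) := by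
        rw [iprod_eq_sum]
        refine Finset.sum_congr rfl fun i _ => Finset.sum_congr rfl fun j _ => ?_
        rw [Matrix.sub_apply]
      have key : ∀ i, ∀ j : Fin p, (1/2) * (α i * (q i j)^2)
          ≤ q i j * (u i j - xstar i j)
            + (1/2) * ((α i)⁻¹ * ((u i j - xstar i j) - α i * q i j)^2) := by
        intro i j
        have hαi := hα i
        have hexp : (α i)⁻¹ * ((u i j - xstar i j) - α i * q i j)^2
            = (α i)⁻¹ * (u i j - xstar i j)^2
              - 2 * ((u i j - xstar i j) * q i j) + α i * (q i j)^2 := by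
          field_simp
          ring
        rw [hexp]
        have hnn : 0 ≤ (α i)⁻¹ * (u i j - xstar i j)^2 :=
          mul_nonneg (inv_nonneg.2 hαi.le) (sq_nonneg _)
        nlinarith [hnn]
      have hsumkey : (1/2) * (∑ i, ∑ j, α i * (q i j)^2)
          ≤ (∑ i, ∑ j, q i j * (u i j - xstar i j))
            + (1/2) * (∑ i, ∑ j, (α i)⁻¹ * ((u i j - xstar i j) - α i * q i j)^2) := by
        rw [Finset.mul_sum, Finset.mul_sum, ← Finset.sum_add_distrib]
        refine Finset.sum_le_sum fun i _ => ?_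
        rw [Finset.mul_sum, Finset.mul_sum, ← Finset.sum_add_distrib]
        exact Finset.sum_le_sum fun j _ => key i j
      have hq' := hq u
      rw [e3] at hq'
      rw [e1, e2]
      linarith [hq', hsumkey]
    · -- fixed point equation for d
      have h0 : q + (G + (1 - W) * pstar) = 0 := by
        rw [← heq]; abel
      have hinner : (2 : ℝ) • xstar - (xstar + Λ * q) - Λ * G - Λ * ((1 - W) * pstar)
          = xstar - Λ * (q + (G + (1 - W) * pstar)) := by
        rw [Matrix.mul_add, Matrix.mul_add]
        module
      rw [hinner, h0, Matrix.mul_zero, sub_zero, hx0, smul_zero, add_zero]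
    · -- fixed point equation for z
      have h1 : G + (1 - W) * pstar = -q := by
        have h0 : G + (1 - W) * pstar + q = 0 := by rw [← heq]; abel
        exact eq_neg_of_add_eq_zero_left h0
      have h2 : Λ * G + Λ * ((1 - W) * pstar) = -(Λ * q) := by
        rw [← Matrix.mul_add, h1, Matrix.mul_neg]
      have h3 : xstar - Λ * G - Λ * ((1 - W) * pstar)
          = xstar - (Λ * G + Λ * ((1 - W) * pstar)) := by abel
      rw [h3, h2]
      abel
end

section
/- (Proposition, M defines a norm on range(I − W).) Let M = c⁻¹(I − W)† − Λ. Then for every nonzero x ∈ range(I − W) (i.e., x = (I − W)y for some y ∈ ℝ^{n×p} and x ≠ 0), tr(xᵀ M x) > 0; consequently x ↦ √tr(xᵀ M x) is a norm on the subspace range(I − W) ⊆ ℝ^{n×p}. -/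
open Matrix Filter Topology

lemma aux_psd_smul {n : ℕ} {M : Matrix (Fin n) (Fin n) ℝ} (h : M.PosSemidef)
    {c : ℝ} (hc : 0 ≤ c) : (c • M).PosSemidef := by
  constructor
  · unfold Matrix.IsHermitian
    rw [Matrix.conjTranspose_smul, star_trivial, h.1]
  · exact (h.smul hc).2

lemma aux_iprodQ_col {n p : ℕ} (Q : Matrix (Fin n) (Fin n) ℝ)
    (z : Matrix (Fin n) (Fin p) ℝ) :
    iprodQ Q z z = ∑ j, (fun i => z i j) ⬝ᵥ Q *ᵥ (fun i => z i j) := by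
  unfold iprodQ Matrix.trace
  simp only [Matrix.diag, Matrix.mul_apply, Matrix.transpose_apply, dotProduct,
    Matrix.mulVec, Finset.sum_mul, Finset.mul_sum]
  refine Finset.sum_congr rfl fun j _ => ?_
  rw [Finset.sum_comm]
  exact Finset.sum_congr rfl fun k _ => Finset.sum_congr rfl fun i _ => by ring

lemma aux_iprodQ_pos {n p : ℕ} {Q : Matrix (Fin n) (Fin n) ℝ} (hQ : Q.PosDef)
    (z : Matrix (Fin n) (Fin p) ℝ) (hz : z ≠ 0) : 0 < iprodQ Q z z := by
  rw [aux_iprodQ_col]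
  have hz' : ∃ i j, z i j ≠ 0 := by
    by_contra h
    push_neg at h
    exact hz (by ext i j; exact h i j)
  obtain ⟨i0, j0, hij⟩ := hz'
  refine Finset.sum_pos' (fun j _ => ?_) ⟨j0, Finset.mem_univ _, ?_⟩
  · have := hQ.posSemidef.dotProduct_mulVec_nonneg (fun i => z i j)
    simpa using this
  · have hcol : (fun i => z i j0) ≠ 0 := by
      intro h
      exact hij (congrFun h i0)
    have := hQ.dotProduct_mulVec_pos hcol
    simpa using this

lemma aux_iprodQ_conj {n p : ℕ} (Q P : Matrix (Fin n) (Fin n) ℝ) (hP : Pᵀ = P)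
    (y : Matrix (Fin n) (Fin p) ℝ) :
    iprodQ (P * Q * P) y y = iprodQ Q (P * y) (P * y) := by
  unfold iprodQ
  rw [Matrix.transpose_mul, hP]
  simp only [Matrix.mul_assoc]

lemma aux_iprodQ_smul {n p : ℕ} (a : ℝ) (Q : Matrix (Fin n) (Fin n) ℝ)
    (y : Matrix (Fin n) (Fin p) ℝ) :
    iprodQ (a • Q) y y = a * iprodQ Q y y := by
  unfold iprodQ
  rw [Matrix.mul_smul, Matrix.smul_mul, Matrix.trace_smul, smul_eq_mul]

open scoped MatrixOrder

/-- The matrix `M = c⁻¹(I − W)† − Λ` defines a norm on `range(I − W)`. -/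
theorem M_defines_norm_on_range
    {n p : ℕ}
    (W : Matrix (Fin n) (Fin n) ℝ) (hW : IsMixing W)
    (α : Fin n → ℝ) (hα : ∀ i, 0 < α i) (c : ℝ) (hc : 0 < c)
    (hcW : ((1 : Matrix (Fin n) (Fin n) ℝ) -
      c • ((Matrix.diagonal fun i => Real.sqrt (α i)) * (1 - W) *
        Matrix.diagonal fun i => Real.sqrt (α i))).PosDef)
    (B : Matrix (Fin n) (Fin n) ℝ) (hB : IsMoorePenrose (1 - W) B) :
    ∀ x : Matrix (Fin n) (Fin p) ℝ, InRange (1 - W) x → x ≠ 0 →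
      0 < iprodQ (c⁻¹ • B - Matrix.diagonal α) x x := by
  intro x hx hxne
  obtain ⟨y, rfl⟩ := hx
  set A : Matrix (Fin n) (Fin n) ℝ := 1 - W with hA
  obtain ⟨hWsym, -, -, hPSD2⟩ := hW
  have hAsym : Aᵀ = A := by
    rw [hA, Matrix.transpose_sub, Matrix.transpose_one, hWsym]
  have hApsd : A.PosSemidef := by
    have h2 : (2:ℝ) • (1 : Matrix (Fin n) (Fin n) ℝ) - (W + 1) = A := by
      rw [two_smul, hA]; abel
    rwa [h2] at hPSD2
  set S : Matrix (Fin n) (Fin n) ℝ := Matrix.diagonal (fun i => Real.sqrt (α i)) with hS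
  set T : Matrix (Fin n) (Fin n) ℝ := Matrix.diagonal (fun i => (Real.sqrt (α i))⁻¹) with hT
  have hsqrt_pos : ∀ i, 0 < Real.sqrt (α i) := fun i => Real.sqrt_pos.2 (hα i)
  have hST : S * T = 1 := by
    rw [hS, hT, Matrix.diagonal_mul_diagonal, ← Matrix.diagonal_one]
    exact congrArg _ (funext fun i => mul_inv_cancel₀ (ne_of_gt (hsqrt_pos i)))
  have hTS : T * S = 1 := by
    rw [hS, hT, Matrix.diagonal_mul_diagonal, ← Matrix.diagonal_one]
    exact congrArg _ (funext fun i => inv_mul_cancel₀ (ne_of_gt (hsqrt_pos i)))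
  have hSS : S * S = Matrix.diagonal α := by
    rw [hS, Matrix.diagonal_mul_diagonal]
    exact congrArg _ (funext fun i => Real.mul_self_sqrt (hα i).le)
  have hTsym : Tᵀ = T := Matrix.diagonal_transpose _
  set G : Matrix (Fin n) (Fin n) ℝ := c • (S * A * S) with hG
  have hSAS : (S * A * S).PosSemidef := by
    have := hApsd.mul_mul_conjTranspose_same S
    rwa [show Sᴴ = S by rw [hS, Matrix.diagonal_conjTranspose]; simp] at this
  have hGpsd : G.PosSemidef := aux_psd_smul hSAS hc.le
  have hG1 : ((1 : Matrix (Fin n) (Fin n) ℝ) - G).PosDef := hcW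
  set H : Matrix (Fin n) (Fin n) ℝ := CFC.sqrt G with hH
  have hH2 : H * H = G := CFC.sqrt_mul_sqrt_self G hGpsd.nonneg
  have hHsym : Hᵀ = H := by
    have h := (CFC.sqrt_nonneg G).posSemidef.1.eq
    rwa [Matrix.conjTranspose_eq_transpose_of_trivial] at h
  -- key: T * G * T = c • A  and  T * (G * G) * T = (c * c) • (A * Matrix.diagonal α * A)
  have h1 : T * G * T = c • A := by
    rw [hG, Matrix.mul_smul, Matrix.smul_mul]
    congr 1
    calc T * (S * A * S) * T = (T * S) * A * (S * T) := by simp only [Matrix.mul_assoc]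
      _ = A := by rw [hTS, hST, Matrix.one_mul, Matrix.mul_one]
  have hGGexp : G * G = (c * c) • (S * A * S * (S * A * S)) := by
    rw [hG, Matrix.smul_mul, Matrix.mul_smul, smul_smul]
  have h2 : T * (G * G) * T = (c * c) • (A * Matrix.diagonal α * A) := by
    rw [hGGexp, Matrix.mul_smul, Matrix.smul_mul]
    congr 1
    calc T * (S * A * S * (S * A * S)) * T
        = (T * S) * (A * ((S * S) * (A * (S * T)))) := by simp only [Matrix.mul_assoc]
      _ = A * Matrix.diagonal α * A := by
          rw [hTS, hST, hSS, Matrix.one_mul, Matrix.mul_one]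
          simp only [Matrix.mul_assoc]
  have hGG : H * ((1 : Matrix (Fin n) (Fin n) ℝ) - G) * H = G - G * G := by
    have hHGH : H * G * H = G * G := by
      rw [← hH2]; simp only [Matrix.mul_assoc]
    rw [Matrix.mul_sub, Matrix.mul_one, Matrix.sub_mul, hH2, hHGH]
  -- the key matrix identity
  have keyL : Aᵀ * (c⁻¹ • B - Matrix.diagonal α) * A
      = c⁻¹ • A - A * Matrix.diagonal α * A := by
    rw [hAsym, Matrix.mul_sub A (c⁻¹ • B) (Matrix.diagonal α),
      Matrix.sub_mul (A * (c⁻¹ • B)) (A * Matrix.diagonal α) A,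
      Matrix.mul_smul, Matrix.smul_mul, hB.1]
  have keyR : c⁻¹ • A - A * Matrix.diagonal α * A
      = (c⁻¹ * c⁻¹) • (T * (G - G * G) * T) := by
    rw [Matrix.mul_sub T G (G * G), Matrix.sub_mul (T * G) (T * (G * G)) T,
      h1, h2, smul_sub (c⁻¹ * c⁻¹) (c • A) ((c * c) • (A * Matrix.diagonal α * A)),
      smul_smul (c⁻¹ * c⁻¹) c A,
      smul_smul (c⁻¹ * c⁻¹) (c * c) (A * Matrix.diagonal α * A)]
    congr 2
    · field_simp
    · rw [show c⁻¹ * c⁻¹ * (c * c) = 1 by field_simp, one_smul]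
  have key : Aᵀ * (c⁻¹ • B - Matrix.diagonal α) * A
      = (c⁻¹ * c⁻¹) • (T * (H * ((1 : Matrix (Fin n) (Fin n) ℝ) - G) * H) * T) := by
    rw [keyL, keyR, hGG]
  -- transfer the quadratic form
  have hquad : iprodQ (c⁻¹ • B - Matrix.diagonal α) (A * y) (A * y)
      = iprodQ (Aᵀ * (c⁻¹ • B - Matrix.diagonal α) * A) y y := by
    unfold iprodQ
    rw [Matrix.transpose_mul]
    simp only [Matrix.mul_assoc]
  rw [hquad, key, aux_iprodQ_smul, aux_iprodQ_conj _ _ hTsym,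
    aux_iprodQ_conj _ _ hHsym]
  -- z := H * (T * y) is nonzero
  have hz : H * (T * y) ≠ 0 := by
    intro h0
    apply hxne
    have hAy : A * y = c⁻¹ • (T * (G * (T * y))) := by
      have : T * G * T * y = (c • A) * y := by rw [h1]
      rw [Matrix.smul_mul] at this
      have h3 : A * y = c⁻¹ • (T * G * T * y) := by
        rw [this, smul_smul, inv_mul_cancel₀ hc.ne', one_smul]
      rw [h3]
      simp only [Matrix.mul_assoc]
    rw [hAy, ← hH2]
    have : H * (H * (T * y)) = 0 := by rw [h0, Matrix.mul_zero]
    rw [show H * H * (T * y) = H * (H * (T * y)) by simp only [Matrix.mul_assoc], this,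
      Matrix.mul_zero, smul_zero]
  exact mul_pos (mul_pos (inv_pos.2 hc) (inv_pos.2 hc))
    (aux_iprodQ_pos hG1 (H * (T * y)) hz)
end
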